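/- arXiv:1611.03943 — 15 statements merged into one kernel-verified Lean document; each statement's English description precedes it below -/
import Mathlib

section
/- Let G be a finitely generated abelian group and F an algebraically closed field of characteristic zero. Then the map Ψ sending a 2-cocycle ξ ∈ Z²(G, F^×) to the alternating bicharacter β(a,b) = ξ(a,b)ξ(b,a)^{-1} induces a group isomorphism from H²(G, F^×) onto the group of alternating bicharacters ∧²(G, F^×). -/
/-- A 2-cocycle on the abelian group `G` with values in `Fˣ` (trivial action). -/
def IsCocycle {G : Type*} [AddCommGroup G] {F : Type*} [Field F] (ξ : G → G → Fˣ) : Prop :=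
  ∀ a b c : G, ξ a b * ξ (a + b) c = ξ b c * ξ a (b + c)

/-- A bicharacter of `G` with values in `Fˣ`. -/
def IsBichar {G : Type*} [AddCommGroup G] {F : Type*} [Field F] (ξ : G → G → Fˣ) : Prop :=
  (∀ a b c : G, ξ (a + b) c = ξ a c * ξ b c) ∧ (∀ a b c : G, ξ a (b + c) = ξ a b * ξ a c)

/-- An alternating bicharacter of `G`. -/
def IsAltBichar {G : Type*} [AddCommGroup G] {F : Type*} [Field F] (β : G → G → Fˣ) : Prop :=
  IsBichar β ∧ ∀ g : G, β g g = 1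

/-- The map `Ψ`, sending `ξ` to the alternating bicharacter `(a,b) ↦ ξ(a,b)ξ(b,a)⁻¹`. -/
def Psi {G : Type*} [AddCommGroup G] {F : Type*} [Field F] (ξ : G → G → Fˣ) : G → G → Fˣ :=
  fun a b => ξ a b * (ξ b a)⁻¹

section Generic
variable {G : Type*} [AddCommGroup G] {F : Type*} [Field F]

lemma units_eq_of_val {u v : Fˣ} (h : (u : F) = (v : F)) : u = v := Units.ext h

lemma cocycle_zero_left {ξ : G → G → Fˣ} (h : IsCocycle ξ) (b : G) : ξ 0 b = ξ 0 0 := by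
  have h1 := h 0 0 b
  simp only [add_zero, zero_add] at h1
  exact (mul_right_cancel h1).symm

lemma cocycle_zero_right {ξ : G → G → Fˣ} (h : IsCocycle ξ) (a : G) : ξ a 0 = ξ 0 0 := by
  have h1 := h a 0 0
  simp only [add_zero, zero_add] at h1
  exact mul_left_cancel ((mul_comm (ξ a 0) (ξ a 0) ▸ h1).trans (mul_comm _ _))

lemma psi_skew {ξ : G → G → Fˣ} (a b : G) : Psi ξ a b = (Psi ξ b a)⁻¹ := by
  simp [Psi, mul_inv_rev, mul_comm]

lemma psi_add_left {ξ : G → G → Fˣ} (h : IsCocycle ξ) (a b c : G) :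
    Psi ξ (a + b) c = Psi ξ a c * Psi ξ b c := by
  have h1 := congrArg (Units.val) (h a b c)
  have h2 := congrArg (Units.val) (h a c b)
  have h3 := congrArg (Units.val) (h c a b)
  rw [add_comm c b] at h2
  rw [add_comm c a] at h3
  simp only [Units.val_mul] at h1 h2 h3
  apply units_eq_of_val
  simp only [Psi, Units.val_mul, Units.val_inv_eq_inv_val]
  have hM : (ξ c (a+b) : F) ≠ 0 := Units.ne_zero _
  have hL : (ξ c a : F) ≠ 0 := Units.ne_zero _
  have hK : (ξ c b : F) ≠ 0 := Units.ne_zero _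
  field_simp
  apply mul_left_cancel₀ (Units.ne_zero (ξ a b))
  linear_combination (ξ c a : F) * (ξ c b : F) * h1 - (ξ c a : F) * (ξ b c : F) * h2 +
    (ξ a c : F) * (ξ b c : F) * h3

lemma part1 {ξ : G → G → Fˣ} (h : IsCocycle ξ) : IsAltBichar (Psi ξ) := by
  refine ⟨⟨fun a b c => psi_add_left h a b c, fun a b c => ?_⟩, fun g => by simp [Psi]⟩
  rw [psi_skew a (b + c), psi_add_left h b c a, mul_inv_rev, ← psi_skew, ← psi_skew, mul_comm]

lemma bichar_isCocycle {ξ : G → G → Fˣ} (h : IsBichar ξ) : IsCocycle ξ := by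
  intro a b c
  rw [h.1 a b c, h.2 a b c]
  simp [mul_comm, mul_left_comm]

section Bichar
variable {β : G → G → Fˣ} (hβ : IsAltBichar β)
include hβ

lemma bichar_zero_left (b : G) : β 0 b = 1 := by
  have := hβ.1.1 0 0 b
  rw [add_zero] at this
  exact (right_eq_mul.mp this)

lemma bichar_zero_right (a : G) : β a 0 = 1 := by
  have := hβ.1.2 a 0 0
  rw [add_zero] at this
  exact (right_eq_mul.mp this)

lemma bichar_skew (a b : G) : β a b * β b a = 1 := by
  have h := hβ.2 (a + b)
  rw [hβ.1.1 a b (a+b), hβ.1.2 a a b, hβ.1.2 b a b, hβ.2 a, hβ.2 b, one_mul, mul_one] at h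
  exact h

lemma bichar_inv (a b : G) : (β a b)⁻¹ = β b a :=
  inv_eq_of_mul_eq_one_right (bichar_skew hβ a b)

lemma bichar_zsmul_left (m : ℤ) (a b : G) : β (m • a) b = β a b ^ m := by
  let f : G →+ Additive Fˣ :=
    AddMonoidHom.mk' (fun x => Additive.ofMul (β x b)) (fun x y => by
      simp [hβ.1.1 x y b, ofMul_mul])
  have : β (m • a) b = Additive.toMul (f (m • a)) := rfl
  rw [this, map_zsmul, toMul_zsmul]; rfl

lemma bichar_zsmul_right (m : ℤ) (a b : G) : β a (m • b) = β a b ^ m := by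
  let f : G →+ Additive Fˣ :=
    AddMonoidHom.mk' (fun y => Additive.ofMul (β a y)) (fun x y => by
      simp [hβ.1.2 a x y, ofMul_mul])
  have : β a (m • b) = Additive.toMul (f (m • b)) := rfl
  rw [this, map_zsmul, toMul_zsmul]; rfl

lemma bichar_sum_left {ι : Type*} (s : Finset ι) (g : ι → G) (b : G) :
    β (∑ i ∈ s, g i) b = ∏ i ∈ s, β (g i) b := by
  classical
  induction s using Finset.induction_on with
  | empty => simpa using bichar_zero_left hβ b
  | insert x s' hx ih =>
    rw [Finset.sum_insert hx, Finset.prod_insert hx, hβ.1.1, ih]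

lemma bichar_sum_right {ι : Type*} (s : Finset ι) (g : ι → G) (a : G) :
    β a (∑ i ∈ s, g i) = ∏ i ∈ s, β a (g i) := by
  classical
  induction s using Finset.induction_on with
  | empty => simpa using bichar_zero_right hβ a
  | insert x s' hx ih =>
    rw [Finset.sum_insert hx, Finset.prod_insert hx, hβ.1.2, ih]

end Bichar
end Generic
section Master2
variable {F : Type*} [Field F] {k : ℕ} {n : Fin k → ℕ}

lemma single_diag {β : (∀ i : Fin k, ZMod (n i)) → (∀ i : Fin k, ZMod (n i)) → Fˣ}
    (hβ : IsAltBichar β) (i : Fin k) (x y : ZMod (n i)) :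
    β (Pi.single i x) (Pi.single i y) = 1 := by
  have hx : Pi.single (M := fun i => ZMod (n i)) i x
      = (ZMod.cast x : ℤ) • Pi.single i (1 : ZMod (n i)) := by
    rw [← Pi.single_smul, Int.smul_one_eq_cast, ZMod.intCast_zmod_cast]
  have hy : Pi.single (M := fun i => ZMod (n i)) i y
      = (ZMod.cast y : ℤ) • Pi.single i (1 : ZMod (n i)) := by
    rw [← Pi.single_smul, Int.smul_one_eq_cast, ZMod.intCast_zmod_cast]
  rw [hx, hy, bichar_zsmul_left hβ, bichar_zsmul_right hβ, hβ.2, one_zpow, one_zpow]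

lemma master2 {β : (∀ i : Fin k, ZMod (n i)) → (∀ i : Fin k, ZMod (n i)) → Fˣ}
    (hβ : IsAltBichar β) :
    ∃ ξ : (∀ i : Fin k, ZMod (n i)) → (∀ i : Fin k, ZMod (n i)) → Fˣ,
      IsCocycle ξ ∧ Psi ξ = β := by
  classical
  set ξ : (∀ i : Fin k, ZMod (n i)) → (∀ i : Fin k, ZMod (n i)) → Fˣ := fun a b =>
    ∏ p ∈ Finset.univ.filter (fun p : Fin k × Fin k => p.1 < p.2),
      β (Pi.single p.1 (a p.1)) (Pi.single p.2 (b p.2)) with hξ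
  have hbc : IsBichar ξ := by
    constructor
    · intro a a' b
      rw [hξ, ← Finset.prod_mul_distrib]
      refine Finset.prod_congr rfl fun p _ => ?_
      rw [Pi.add_apply, Pi.single_add, hβ.1.1]
    · intro a b b'
      rw [hξ, ← Finset.prod_mul_distrib]
      refine Finset.prod_congr rfl fun p _ => ?_
      rw [Pi.add_apply, Pi.single_add, hβ.1.2]
  refine ⟨ξ, bichar_isCocycle hbc, ?_⟩
  funext a b
  set T : Fin k × Fin k → Fˣ := fun p => β (Pi.single p.1 (a p.1)) (Pi.single p.2 (b p.2)) with hT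
  have h2 : (ξ b a)⁻¹ = ∏ p ∈ Finset.univ.filter (fun p : Fin k × Fin k => p.2 < p.1), T p := by
    rw [hξ, ← Finset.prod_inv_distrib]
    refine Finset.prod_bij' (fun p _ => p.swap) (fun p _ => p.swap) ?_ ?_ ?_ ?_ ?_
    · intro p hp; simp only [Finset.mem_filter, Finset.mem_univ, true_and] at hp ⊢; exact hp
    · intro p hp; simp only [Finset.mem_filter, Finset.mem_univ, true_and] at hp ⊢; exact hp
    · intro p _; rfl
    · intro p _; rfl
    · intro p _; rw [bichar_inv hβ]; rfl
  have h3 : ∏ p ∈ Finset.univ.filter (fun p : Fin k × Fin k => p.1 = p.2), T p = 1 := by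
    refine Finset.prod_eq_one ?_
    rintro ⟨i, j⟩ hp
    simp only [Finset.mem_filter] at hp
    obtain rfl : i = j := hp.2
    exact single_diag hβ i _ _
  have h4 : β a b = ∏ p : Fin k × Fin k, T p := by
    calc β a b = β (∑ i, Pi.single i (a i)) (∑ j, Pi.single j (b j)) := by
          rw [Finset.univ_sum_single, Finset.univ_sum_single]
      _ = ∏ i, ∏ j, T (i, j) := by
          rw [bichar_sum_left hβ]
          exact Finset.prod_congr rfl fun i _ => bichar_sum_right hβ _ _ _
      _ = ∏ p : Fin k × Fin k, T p := by rw [← Fintype.prod_prod_type]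
  have e1 : (Finset.univ.filter fun p : Fin k × Fin k => ¬ p.1 = p.2).filter
      (fun p => p.1 < p.2) = Finset.univ.filter (fun p : Fin k × Fin k => p.1 < p.2) := by
    ext p
    simp only [Finset.filter_filter, Finset.mem_filter, Finset.mem_univ, true_and]
    exact ⟨fun h => h.2, fun h => ⟨ne_of_lt h, h⟩⟩
  have e2 : (Finset.univ.filter fun p : Fin k × Fin k => ¬ p.1 = p.2).filter
      (fun p => ¬ p.1 < p.2) = Finset.univ.filter (fun p : Fin k × Fin k => p.2 < p.1) := by
    ext p
    simp only [Finset.filter_filter, Finset.mem_filter, Finset.mem_univ, true_and]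
    exact ⟨fun h => (not_lt.mp h.2).lt_of_ne (Ne.symm h.1),
      fun h => ⟨(ne_of_lt h).symm, not_lt.mpr h.le⟩⟩
  show ξ a b * (ξ b a)⁻¹ = β a b
  rw [h2, h4, ← Finset.prod_filter_mul_prod_filter_not Finset.univ (fun p : Fin k × Fin k => p.1 = p.2) T,
    h3, one_mul, ← Finset.prod_filter_mul_prod_filter_not
      (Finset.univ.filter fun p : Fin k × Fin k => ¬ p.1 = p.2) (fun p => p.1 < p.2) T,
    e1, e2]
end Master2
section Ext
variable {G : Type*} [AddCommGroup G] {F : Type*} [Field F]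

def extAddCommGroup (c : G → G → Fˣ) (hc : IsCocycle c) (hl : ∀ b, c 0 b = 1)
    (hr : ∀ a, c a 0 = 1) (hs : ∀ a b, c a b = c b a) : AddCommGroup (Fˣ × G) :=
  letI : Add (Fˣ × G) := ⟨fun x y => (x.1 * y.1 * c x.2 y.2, x.2 + y.2)⟩
  letI : Zero (Fˣ × G) := ⟨(1, 0)⟩
  letI : Neg (Fˣ × G) := ⟨fun x => ((x.1 * c x.2 (-x.2))⁻¹, -x.2)⟩
  { add := (· + ·)
    zero := (0 : Fˣ × G)
    nsmul := nsmulRec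
    zsmul := zsmulRec
    neg := (- ·)
    add_assoc := by
      rintro ⟨x1, x2⟩ ⟨y1, y2⟩ ⟨z1, z2⟩
      show ((x1 * y1 * c x2 y2) * z1 * c (x2 + y2) z2, x2 + y2 + z2)
          = (x1 * (y1 * z1 * c y2 z2) * c x2 (y2 + z2), x2 + (y2 + z2))
      have h := congrArg Units.val (hc x2 y2 z2)
      simp only [Units.val_mul] at h
      simp only [Prod.mk.injEq]
      refine ⟨Units.ext ?_, add_assoc _ _ _⟩
      simp only [Units.val_mul]
      linear_combination ((x1 : F) * (y1 : F) * (z1 : F)) * h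
    zero_add := by
      rintro ⟨x1, x2⟩
      show (1 * x1 * c 0 x2, 0 + x2) = (x1, x2)
      rw [hl, mul_one, one_mul, zero_add]
    add_zero := by
      rintro ⟨x1, x2⟩
      show (x1 * 1 * c x2 0, x2 + 0) = (x1, x2)
      rw [hr, mul_one, mul_one, add_zero]
    neg_add_cancel := by
      rintro ⟨x1, x2⟩
      show ((x1 * c x2 (-x2))⁻¹ * x1 * c (-x2) x2, -x2 + x2) = (1, 0)
      rw [hs (-x2) x2, mul_assoc, inv_mul_cancel, neg_add_cancel]
    add_comm := by
      rintro ⟨x1, x2⟩ ⟨y1, y2⟩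
      show (x1 * y1 * c x2 y2, x2 + y2) = (y1 * x1 * c y2 x2, y2 + x2)
      rw [hs y2 x2, mul_comm x1 y1, add_comm x2 y2] }

end Ext

section Master3
variable {F : Type*} [Field F] [IsAlgClosed F] {k : ℕ} {n : Fin k → ℕ}

lemma master3 (c : (∀ i : Fin k, ZMod (n i)) → (∀ i : Fin k, ZMod (n i)) → Fˣ)
    (hc : IsCocycle c) (hs : ∀ a b, c a b = c b a) :
    ∃ μ : (∀ i : Fin k, ZMod (n i)) → Fˣ,
      ∀ a b, c a b = μ a * μ b * (μ (a + b))⁻¹ := by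
  classical
  set κ := c 0 0 with hκ
  set c' : (∀ i : Fin k, ZMod (n i)) → (∀ i : Fin k, ZMod (n i)) → Fˣ :=
    fun a b => c a b * κ⁻¹ with hc'
  have hc'c : IsCocycle c' := by
    intro a b d
    have h := hc a b d
    simp only [hc']
    rw [mul_mul_mul_comm, h, mul_mul_mul_comm]
  have hl : ∀ b, c' 0 b = 1 := fun b => by
    simp only [hc']; rw [cocycle_zero_left hc b, ← hκ, mul_inv_cancel]
  have hr : ∀ a, c' a 0 = 1 := fun a => by
    simp only [hc']; rw [cocycle_zero_right hc a, ← hκ, mul_inv_cancel]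
  have hs' : ∀ a b, c' a b = c' b a := fun a b => by simp only [hc']; rw [hs]
  letI : AddCommGroup (Fˣ × (∀ i : Fin k, ZMod (n i))) := extAddCommGroup c' hc'c hl hr hs'
  have addDef : ∀ x y : Fˣ × (∀ i : Fin k, ZMod (n i)),
      x + y = (x.1 * y.1 * c' x.2 y.2, x.2 + y.2) := fun _ _ => rfl
  have zeroDef : (0 : Fˣ × (∀ i : Fin k, ZMod (n i))) = (1, 0) := rfl
  set π : (Fˣ × (∀ i : Fin k, ZMod (n i))) →+ (∀ i : Fin k, ZMod (n i)) :=
    AddMonoidHom.mk' Prod.snd (fun _ _ => rfl) with hπ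
  have key : ∀ (v : Fˣ) (x : Fˣ × (∀ i : Fin k, ZMod (n i))),
      ((v, (0 : ∀ i : Fin k, ZMod (n i))) : Fˣ × _) + x = (v * x.1, x.2) := by
    intro v x; rw [addDef]; simp [hl]
  have pow0 : ∀ (m : ℕ) (v : Fˣ),
      m • (((v, (0 : ∀ i : Fin k, ZMod (n i)))) : Fˣ × _) = (v ^ m, 0) := by
    intro m
    induction m with
    | zero => intro v; rw [zero_nsmul, pow_zero, zeroDef]
    | succ m ih => intro v; rw [succ_nsmul, ih, key, ← pow_succ]
  have hdiv : ∀ (m : ℕ) (z : Fˣ), m ≠ 0 → ∃ w : Fˣ, w ^ m = z := by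
    intro m z hm
    obtain ⟨x, hx⟩ := IsAlgClosed.exists_pow_nat_eq (z : F) (Nat.pos_of_ne_zero hm)
    have hx0 : x ≠ 0 := by
      intro h0; rw [h0, zero_pow hm] at hx; exact (Units.ne_zero z) hx.symm
    refine ⟨Units.mk0 x hx0, Units.ext ?_⟩
    simpa using hx
  have ht : ∀ i : Fin k, ∃ t : Fˣ × (∀ i : Fin k, ZMod (n i)),
      t.2 = Pi.single i 1 ∧ (n i) • t = 0 := by
    intro i
    set u : Fˣ × (∀ i : Fin k, ZMod (n i)) := (1, Pi.single i 1) with hu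
    have hsnd : ((n i) • u).2 = 0 := by
      have h1 : ((n i) • u).2 = π ((n i) • u) := rfl
      rw [h1, map_nsmul]
      have h2 : π u = Pi.single i 1 := rfl
      rw [h2, ← Pi.single_smul, nsmul_eq_mul, mul_one, ZMod.natCast_self, Pi.single_zero]
    rcases Nat.eq_zero_or_pos (n i) with h0 | hpos
    · exact ⟨u, rfl, by rw [h0, zero_nsmul]⟩
    · set z := ((n i) • u).1 with hz1
      have hz : (n i) • u = (z, 0) := Prod.ext rfl hsnd
      obtain ⟨w, hw⟩ := hdiv (n i) z⁻¹ (Nat.pos_iff_ne_zero.mp hpos)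
      refine ⟨(w, Pi.single i 1), rfl, ?_⟩
      have hsplit : ((w, Pi.single i 1) : Fˣ × _) = ((w, 0) : Fˣ × _) + u := by
        rw [key]; simp [hu]
      rw [hsplit, nsmul_add, pow0, hz, key, hw]
      rw [zeroDef]
      simp
  choose t htsnd htord using ht
  have hsi : ∀ i : Fin k, ∃ si : ZMod (n i) →+ (Fˣ × (∀ i : Fin k, ZMod (n i))),
      ∀ x, (si x).2 = Pi.single i x := by
    intro i
    refine ⟨ZMod.lift (n i) ⟨zmultiplesHom _ (t i), ?_⟩, ?_⟩
    · simp only [zmultiplesHom_apply]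
      rw [natCast_zsmul]; exact htord i
    · intro x
      obtain ⟨m, rfl⟩ := ZMod.intCast_surjective x
      rw [ZMod.lift_coe]
      simp only [zmultiplesHom_apply]
      have h1 : ((m • t i).2) = m • (t i).2 := map_zsmul π m (t i)
      rw [h1, htsnd i, ← Pi.single_smul, Int.smul_one_eq_cast]
  choose si hsi2 using hsi
  set s : (∀ i : Fin k, ZMod (n i)) →+ (Fˣ × (∀ i : Fin k, ZMod (n i))) :=
    ∑ i : Fin k, (si i).comp (Pi.evalAddMonoidHom (fun j => ZMod (n j)) i) with hsdef
  have hπs : ∀ a, (s a).2 = a := by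
    intro a
    have h1 : s a = ∑ i : Fin k, si i (a i) := by
      rw [hsdef, AddMonoidHom.finset_sum_apply]
      rfl
    have h2 : (s a).2 = π (s a) := rfl
    rw [h2, h1, map_sum]
    have h3 : ∀ i : Fin k, π (si i (a i)) = Pi.single i (a i) := fun i => hsi2 i (a i)
    rw [Finset.sum_congr rfl fun i _ => h3 i]
    exact Finset.univ_sum_single a
  refine ⟨fun a => ((s a).1)⁻¹ * κ, ?_⟩
  intro a b
  have h1 : s (a + b) = s a + s b := map_add s a b
  rw [addDef] at h1
  have h2 := congrArg Prod.fst h1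
  simp only at h2
  rw [hπs a, hπs b] at h2
  have hc'ab : c a b = c' a b * κ := by
    simp only [hc']; rw [inv_mul_cancel_right]
  rw [hc'ab]
  show c' a b * κ = ((s a).1)⁻¹ * κ * (((s b).1)⁻¹ * κ) * (((s (a + b)).1)⁻¹ * κ)⁻¹
  rw [h2]
  apply Units.ext
  simp only [Units.val_mul, Units.val_inv_eq_inv_val, mul_inv_rev, inv_inv]
  field_simp
end Master3

section Part3
variable {G : Type*} [AddCommGroup G] {F : Type*} [Field F]

lemma psi_eq_of_cob {ξ ξ' : G → G → Fˣ} (μ : G → Fˣ)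
    (hμ : ∀ a b, ξ' a b = ξ a b * (μ a * μ b * (μ (a + b))⁻¹)) : Psi ξ = Psi ξ' := by
  funext a b
  have h1 := congrArg Units.val (hμ a b)
  have h2 := congrArg Units.val (hμ b a)
  rw [add_comm b a] at h2
  simp only [Units.val_mul, Units.val_inv_eq_inv_val] at h1 h2
  apply Units.ext
  simp only [Psi, Units.val_mul, Units.val_inv_eq_inv_val]
  have n1 : ((ξ b a : F)) ≠ 0 := Units.ne_zero _
  have n2 : ((ξ' b a : F)) ≠ 0 := Units.ne_zero _
  have n3 : ((μ a : F)) ≠ 0 := Units.ne_zero _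
  have n4 : ((μ b : F)) ≠ 0 := Units.ne_zero _
  have n5 : ((μ (a + b) : F)) ≠ 0 := Units.ne_zero _
  field_simp at h1 h2 ⊢
  apply mul_left_cancel₀ n5
  linear_combination ((ξ a b : F)) * h2 - ((ξ b a : F)) * h1

lemma ratio_cocycle {ξ ξ' : G → G → Fˣ} (hξ : IsCocycle ξ) (hξ' : IsCocycle ξ') :
    IsCocycle (fun a b => ξ' a b * (ξ a b)⁻¹) := by
  intro a b d
  have h := congrArg Units.val (hξ a b d)
  have h' := congrArg Units.val (hξ' a b d)
  simp only [Units.val_mul] at h h'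
  apply Units.ext
  simp only [Units.val_mul, Units.val_inv_eq_inv_val]
  have n1 : ((ξ a b : F)) ≠ 0 := Units.ne_zero _
  have n2 : ((ξ (a + b) d : F)) ≠ 0 := Units.ne_zero _
  have n3 : ((ξ b d : F)) ≠ 0 := Units.ne_zero _
  have n4 : ((ξ a (b + d) : F)) ≠ 0 := Units.ne_zero _
  field_simp
  linear_combination ((ξ b d : F) * (ξ a (b + d) : F)) * h' -
    ((ξ' b d : F) * (ξ' a (b + d) : F)) * h

lemma ratio_symm {ξ ξ' : G → G → Fˣ} (hP : Psi ξ = Psi ξ') (a b : G) :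
    ξ' a b * (ξ a b)⁻¹ = ξ' b a * (ξ b a)⁻¹ := by
  have h := congrArg Units.val (congrFun (congrFun hP a) b)
  simp only [Psi, Units.val_mul, Units.val_inv_eq_inv_val] at h
  apply Units.ext
  simp only [Units.val_mul, Units.val_inv_eq_inv_val]
  have n1 : ((ξ a b : F)) ≠ 0 := Units.ne_zero _
  have n2 : ((ξ b a : F)) ≠ 0 := Units.ne_zero _
  field_simp at h ⊢
  linear_combination -h

end Part3

lemma exists_pi_zmod_equiv (G : Type*) [AddCommGroup G] [AddGroup.FG G] :
    ∃ (k : ℕ) (n : Fin k → ℕ), Nonempty (G ≃+ ∀ i : Fin k, ZMod (n i)) := by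
  obtain ⟨m, ι, hι, p, hp, e, ⟨f⟩⟩ := AddCommGroup.equiv_free_prod_directSum_zmod G
  let fam : Fin m ⊕ ι → ℕ := Sum.elim (fun _ => 0) (fun i => p i ^ e i)
  -- step 1 : free part
  have e1 : (Fin m →₀ ℤ) ≃+ (Fin m → ℤ) :=
    (Finsupp.linearEquivFunOnFinite ℤ ℤ (Fin m)).toAddEquiv
  have e2 : (Fin m → ℤ) ≃+ (Fin m → ZMod 0) := AddEquiv.refl _
  -- step 2 : torsion part
  have e3 : (DirectSum ι fun i => ZMod (p i ^ e i)) ≃+ (∀ i : ι, ZMod (p i ^ e i)) :=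
    { toEquiv := DFinsupp.equivFunOnFintype
      map_add' := fun x y => rfl }
  -- step 3 : combine to Pi over sum type
  have e4 : ((∀ i : Fin m, ZMod 0) × (∀ i : ι, ZMod (p i ^ e i))) ≃+
      (∀ x : Fin m ⊕ ι, ZMod (fam x)) :=
    { toFun := fun q => Sum.rec (fun i => q.1 i) (fun i => q.2 i)
      invFun := fun f => (fun i => f (Sum.inl i), fun i => f (Sum.inr i))
      left_inv := fun q => rfl
      right_inv := fun f => by funext x; cases x <;> rfl
      map_add' := fun q r => by funext x; cases x <;> rfl }
  -- step 4 : reindex by Fin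
  let σ : (Fin m ⊕ ι) ≃ Fin (Fintype.card (Fin m ⊕ ι)) := Fintype.equivFin _
  have e5 : (∀ x : Fin m ⊕ ι, ZMod (fam x)) ≃+
      (∀ i : Fin (Fintype.card (Fin m ⊕ ι)), ZMod (fam (σ.symm i))) :=
    { toEquiv := Equiv.piCongrLeft' (fun x => ZMod (fam x)) σ
      map_add' := fun f g => rfl }
  exact ⟨_, fun i => fam (σ.symm i),
    ⟨f.trans (((e1.trans e2).prodCongr e3).trans (e4.trans e5))⟩⟩


/-- The map `Ψ` sends 2-cocycles to alternating bicharacters, is surjective onto the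
alternating bicharacters, and two 2-cocycles have the same image iff they are cohomologous:
i.e. `Ψ` induces a (group) isomorphism `H²(G,Fˣ) ≅ ∧²(G,Fˣ)`. -/
theorem psi_induces_iso_H2_to_alternating
    {G : Type*} [AddCommGroup G] [AddGroup.FG G]
    {F : Type*} [Field F] [IsAlgClosed F] [CharZero F] :
    (∀ ξ : G → G → Fˣ, IsCocycle ξ → IsAltBichar (Psi ξ)) ∧
    (∀ β : G → G → Fˣ, IsAltBichar β → ∃ ξ : G → G → Fˣ, IsCocycle ξ ∧ Psi ξ = β) ∧
    (∀ ξ ξ' : G → G → Fˣ, IsCocycle ξ → IsCocycle ξ' →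
      (Psi ξ = Psi ξ' ↔
        ∃ μ : G → Fˣ, ∀ a b : G, ξ' a b = ξ a b * (μ a * μ b * (μ (a + b))⁻¹))) := by
  obtain ⟨k, n, ⟨e⟩⟩ := exists_pi_zmod_equiv G
  refine ⟨fun ξ hξ => part1 hξ, ?_, ?_⟩
  · intro β hβ
    have hβ' : IsAltBichar (fun x y => β (e.symm x) (e.symm y)) := by
      refine ⟨⟨fun a b cc => ?_, fun a b cc => ?_⟩, fun g => hβ.2 _⟩
      · show β (e.symm (a + b)) (e.symm cc) = _
        rw [map_add]; exact hβ.1.1 _ _ _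
      · show β (e.symm a) (e.symm (b + cc)) = _
        rw [map_add]; exact hβ.1.2 _ _ _
    obtain ⟨ξ', hξ'c, hξ'P⟩ := master2 hβ'
    refine ⟨fun a b => ξ' (e a) (e b), fun a b c => ?_, ?_⟩
    · simp only [map_add]; exact hξ'c (e a) (e b) (e c)
    · funext a b
      show Psi ξ' (e a) (e b) = β a b
      rw [hξ'P]
      show β (e.symm (e a)) (e.symm (e b)) = β a b
      rw [AddEquiv.symm_apply_apply, AddEquiv.symm_apply_apply]
  · intro ξ ξ' hξ hξ'
    constructor
    · intro hP
      have hcc : IsCocycle (fun a b => ξ' a b * (ξ a b)⁻¹) := ratio_cocycle hξ hξ'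
      have hdc : IsCocycle (fun x y => ξ' (e.symm x) (e.symm y) * (ξ (e.symm x) (e.symm y))⁻¹) := by
        intro a b cc
        have h1 : e.symm (a + b) = e.symm a + e.symm b := map_add _ _ _
        have h2 : e.symm (b + cc) = e.symm b + e.symm cc := map_add _ _ _
        simp only []
        rw [h1, h2]
        exact hcc (e.symm a) (e.symm b) (e.symm cc)
      have hds : ∀ x y, ξ' (e.symm x) (e.symm y) * (ξ (e.symm x) (e.symm y))⁻¹
          = ξ' (e.symm y) (e.symm x) * (ξ (e.symm y) (e.symm x))⁻¹ :=
        fun x y => ratio_symm hP _ _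
      obtain ⟨μ', hμ'⟩ := master3 _ hdc hds
      refine ⟨fun a => μ' (e a), fun a b => ?_⟩
      have h := hμ' (e a) (e b)
      rw [AddEquiv.symm_apply_apply, AddEquiv.symm_apply_apply] at h
      have h3 : e a + e b = e (a + b) := (map_add e a b).symm
      rw [h3] at h
      rw [← h, mul_comm (ξ' a b) (ξ a b)⁻¹, mul_inv_cancel_left]
    · rintro ⟨μ, hμ⟩
      exact psi_eq_of_cob μ hμ
end

section
/- Let G be a finitely generated abelian group and F an algebraically closed field of characteristic zero. The map Ψ: L²(G,F^×) → ∧²(G,F^×), Ψ(ξ)(a,b) = ξ(a,b)ξ(b,a)^{-1}, restricted to bicharacters (Z-bilinear maps G × G → F^×), is surjective onto the alternating bicharacters, with kernel the symmetric bicharacters; i.e., there is a short exact sequence 1 → Sym²(G,F^×) → L²(G,F^×) → ∧²(G,F^×) → 1. -/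
section Aux

variable {M : Type*} [CommGroup M]

/-- A bicharacter valued in a general commutative group. -/
def IsB {G : Type*} [AddCommGroup G] (ξ : G → G → M) : Prop :=
  (∀ a b c : G, ξ (a + b) c = ξ a c * ξ b c) ∧ (∀ a b c : G, ξ a (b + c) = ξ a b * ξ a c)

/-- Surjectivity of `Ψ` onto alternating bicharacters, abstractly. -/
def Srj (G : Type*) [AddCommGroup G] (M : Type*) [CommGroup M] : Prop :=
  ∀ β : G → G → M, IsB β → (∀ g : G, β g g = 1) →
    ∃ ξ : G → G → M, IsB ξ ∧ ∀ a b : G, ξ a b * (ξ b a)⁻¹ = β a b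

variable {G : Type*} [AddCommGroup G]

theorem IsB.zsmul_left {ξ : G → G → M} (h : IsB ξ) (k : ℤ) (g b : G) :
    ξ (k • g) b = ξ g b ^ k := by
  let f : G →+ Additive M :=
    AddMonoidHom.mk' (fun a => Additive.ofMul (ξ a b)) (fun x y => by
      simp [h.1 x y b])
  have hf : f (k • g) = k • f g := map_zsmul f k g
  simpa [f, ← ofMul_zpow] using hf

theorem IsB.zsmul_right {ξ : G → G → M} (h : IsB ξ) (k : ℤ) (a g : G) :
    ξ a (k • g) = ξ a g ^ k := by
  let f : G →+ Additive M :=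
    AddMonoidHom.mk' (fun b => Additive.ofMul (ξ a b)) (fun x y => by
      simp [h.2 a x y])
  have hf : f (k • g) = k • f g := map_zsmul f k g
  simpa [f, ← ofMul_zpow] using hf

theorem IsB.skew {β : G → G → M} (h : IsB β) (hd : ∀ g : G, β g g = 1) (x y : G) :
    β x y * β y x = 1 := by
  have h1 := hd (x + y)
  rw [h.1, h.2, h.2, hd x, hd y, one_mul, mul_one] at h1
  exact h1

/-- `Srj` transports along additive isomorphisms. -/
theorem srj_of_addEquiv {G' : Type*} [AddCommGroup G'] (e : G ≃+ G') (hs : Srj G M) :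
    Srj G' M := by
  intro β hb hd
  obtain ⟨ξ, hξ, hp⟩ := hs (fun a b => β (e a) (e b))
    ⟨fun a b c => by dsimp only; rw [map_add, hb.1], fun a b c => by dsimp only; rw [map_add, hb.2]⟩
    (fun g => hd (e g))
  refine ⟨fun a b => ξ (e.symm a) (e.symm b),
    ⟨fun a b c => by dsimp only; rw [map_add, hξ.1], fun a b c => by dsimp only; rw [map_add, hξ.2]⟩, fun a b => ?_⟩
  simpa using hp (e.symm a) (e.symm b)

/-- On a cyclic group every alternating bicharacter is trivial. -/
theorem srj_of_cyclic (g : G) (hg : ∀ x : G, ∃ k : ℤ, k • g = x) : Srj G M := by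
  intro β hb hd
  have hβ : ∀ a b : G, β a b = 1 := by
    intro a b
    obtain ⟨k, hk⟩ := hg a
    obtain ⟨l, hl⟩ := hg b
    rw [← hk, ← hl, hb.zsmul_left, hb.zsmul_right, hd, one_zpow, one_zpow]
  exact ⟨fun _ _ => 1, ⟨fun _ _ _ => by simp, fun _ _ _ => by simp⟩,
    fun a b => by rw [hβ a b]; simp⟩

theorem srj_trivial [Subsingleton G] : Srj G M :=
  srj_of_cyclic 0 fun x => ⟨0, Subsingleton.elim _ _⟩

theorem srj_prod {G₁ G₂ : Type*} [AddCommGroup G₁] [AddCommGroup G₂]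
    (h₁ : Srj G₁ M) (h₂ : Srj G₂ M) : Srj (G₁ × G₂) M := by
  intro β hb hd
  obtain ⟨ξ₁, hξ₁, hp₁⟩ := h₁ (fun a b => β (a, 0) (b, 0))
    ⟨fun a b c => by dsimp only; rw [show ((a + b : G₁), (0 : G₂)) = (a, 0) + (b, 0) by simp, hb.1],
     fun a b c => by dsimp only; rw [show ((b + c : G₁), (0 : G₂)) = (b, 0) + (c, 0) by simp, hb.2]⟩
    (fun g => hd (g, 0))
  obtain ⟨ξ₂, hξ₂, hp₂⟩ := h₂ (fun a b => β (0, a) (0, b))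
    ⟨fun a b c => by dsimp only; rw [show ((0 : G₁), (a + b : G₂)) = (0, a) + (0, b) by simp, hb.1],
     fun a b c => by dsimp only; rw [show ((0 : G₁), (b + c : G₂)) = (0, b) + (0, c) by simp, hb.2]⟩
    (fun g => hd (0, g))
  refine ⟨fun a b => ξ₁ a.1 b.1 * ξ₂ a.2 b.2 * β (a.1, 0) (0, b.2), ⟨?_, ?_⟩, ?_⟩
  · intro a b c
    have e1 : ((a.1 + b.1 : G₁), (0 : G₂)) = (a.1, 0) + (b.1, 0) := by simp
    simp only [Prod.fst_add, Prod.snd_add, hξ₁.1, hξ₂.1, e1, hb.1]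
    simp [mul_assoc, mul_comm, mul_left_comm]
  · intro a b c
    have e1 : ((0 : G₁), (b.2 + c.2 : G₂)) = (0, b.2) + (0, c.2) := by simp
    simp only [Prod.fst_add, Prod.snd_add, hξ₁.2, hξ₂.2, e1, hb.2]
    simp [mul_assoc, mul_comm, mul_left_comm]
  · intro a b
    have key : β a b = β (a.1, 0) (b.1, 0) * β (0, a.2) (0, b.2)
        * (β (a.1, 0) (0, b.2) * β (0, a.2) (b.1, 0)) := by
      have ha : a = (a.1, 0) + ((0 : G₁), a.2) := by simp
      have hbb : b = (b.1, 0) + ((0 : G₁), b.2) := by simp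
      rw [ha, hbb, hb.1, hb.2, hb.2]
      simp [mul_assoc, mul_comm, mul_left_comm]
    have hskew : β (0, a.2) (b.1, 0) = (β (b.1, 0) (0, a.2))⁻¹ := by
      have := hb.skew hd ((0 : G₁), a.2) ((b.1 : G₁), (0 : G₂))
      exact eq_inv_of_mul_eq_one_left this
    rw [key, hskew, ← hp₁ a.1 b.1, ← hp₂ a.2 b.2]
    simp [mul_assoc, mul_comm, mul_left_comm]

/-- Surjectivity for finite dependent products, by induction. -/
theorem srj_pi : ∀ (m : ℕ) (H : Fin m → Type*) (_ : ∀ i, AddCommGroup (H i))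
    (_ : ∀ i, Srj (H i) M), Srj (∀ i, H i) M := by
  intro m
  induction m with
  | zero => intro H _ _; exact srj_trivial
  | succ m ih =>
    intro H _ hs
    let e : (∀ i, H i) ≃+ H 0 × ∀ i : Fin m, H i.succ :=
      { toFun := fun f => (f 0, fun i => f i.succ)
        invFun := fun p => Fin.cons p.1 p.2
        left_inv := fun f => by
          funext i
          refine Fin.cases ?_ ?_ i
          · simp
          · intro j; simp
        right_inv := fun p => by simp
        map_add' := fun f g => rfl }
    exact srj_of_addEquiv e.symm (srj_prod (hs 0) (ih (fun i => H i.succ) _ (fun i => hs i.succ)))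

theorem srj_int : Srj ℤ M :=
  srj_of_cyclic 1 fun x => ⟨x, by simp⟩

theorem srj_zmod (q : ℕ) : Srj (ZMod q) M :=
  srj_of_cyclic 1 fun x => ⟨(x.cast : ℤ), by
    rw [zsmul_one]
    exact ZMod.intCast_zmod_cast x⟩

/-- Every finitely generated abelian group satisfies `Srj`. -/
theorem srj_of_fg (G : Type*) [AddCommGroup G] [AddGroup.FG G] : Srj G M := by
  obtain ⟨n, ι, fι, p, hp, e, ⟨f⟩⟩ := AddCommGroup.equiv_free_prod_directSum_zmod G
  have h1 : Srj (Fin n →₀ ℤ) M := by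
    refine srj_of_addEquiv (Finsupp.addEquivFunOnFinite (ι := Fin n) (M := ℤ)).symm ?_
    exact srj_pi n (fun _ => ℤ) (fun _ => inferInstance) (fun _ => srj_int)
  have h2 : Srj (DirectSum ι fun i => ZMod (p i ^ e i)) M := by
    refine srj_of_addEquiv (DirectSum.addEquivProd (fun i : ι => ZMod (p i ^ e i))).symm ?_
    let σ : ι ≃ Fin (Fintype.card ι) := Fintype.equivFin ι
    let e2 : (∀ i : ι, ZMod (p i ^ e i)) ≃+
        (∀ j : Fin (Fintype.card ι), ZMod (p (σ.symm j) ^ e (σ.symm j))) :=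
      { Equiv.piCongrLeft' (fun i => ZMod (p i ^ e i)) σ with map_add' := fun _ _ => rfl }
    refine srj_of_addEquiv e2.symm ?_
    exact srj_pi _ _ (fun _ => inferInstance) (fun j => srj_zmod _)
  exact srj_of_addEquiv f.symm (srj_prod h1 h2)

end Aux

/-- The short exact sequence `1 → Sym²(G,Fˣ) → L²(G,Fˣ) → ∧²(G,Fˣ) → 1`:
`Ψ` maps bicharacters to alternating bicharacters, is surjective onto the alternating
bicharacters, and its kernel consists exactly of the symmetric bicharacters. -/
theorem psi_short_exact_on_bicharacters
    {G : Type*} [AddCommGroup G] [AddGroup.FG G]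
    {F : Type*} [Field F] [IsAlgClosed F] [CharZero F] :
    (∀ ξ : G → G → Fˣ, IsBichar ξ → IsAltBichar (Psi ξ)) ∧
    (∀ β : G → G → Fˣ, IsAltBichar β → ∃ ξ : G → G → Fˣ, IsBichar ξ ∧ Psi ξ = β) ∧
    (∀ ξ : G → G → Fˣ, IsBichar ξ →
      ((∀ a b : G, Psi ξ a b = 1) ↔ ∀ a b : G, ξ a b = ξ b a)) := by
  refine ⟨?_, ?_, ?_⟩
  · intro ξ hξ
    refine ⟨⟨fun a b c => ?_, fun a b c => ?_⟩, fun g => ?_⟩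
    · simp only [Psi, hξ.1, hξ.2, mul_inv]
      simp [mul_assoc, mul_comm, mul_left_comm]
    · simp only [Psi, hξ.1, hξ.2, mul_inv]
      simp [mul_assoc, mul_comm, mul_left_comm]
    · simp [Psi]
  · intro β hβ
    obtain ⟨ξ, hξ, hp⟩ := srj_of_fg G (M := Fˣ) β ⟨hβ.1.1, hβ.1.2⟩ hβ.2
    exact ⟨ξ, ⟨hξ.1, hξ.2⟩, funext fun a => funext fun b => hp a b⟩
  · intro ξ _
    constructor
    · intro h a b
      have := h a b
      rw [Psi, mul_inv_eq_one] at this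
      exact this
    · intro h a b
      rw [Psi, h a b, mul_inv_cancel]
end

section
/- Let G = ⊕_{i=1}^k Z a_i be a finite abelian group with ord(a_i) = n_i, and β an alternating bicharacter on G with values in F^×. Define ξ on generators by ξ(a_i,a_j) = 1 if i ≤ j and ξ(a_i,a_j) = β(a_i,a_j) if i > j, extended bilinearly. Then ξ is a bicharacter with Ψ(ξ) = β, i.e., ξ(a,b)ξ(b,a)^{-1} = β(a,b) for all a,b ∈ G. -/
section helpers
variable {G : Type*} [AddCommGroup G] {F : Type*} [Field F] {β : G → G → Fˣ}

lemma bz_left (hb : IsBichar β) (b : G) : β 0 b = 1 := by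
  have h := hb.1 0 0 b
  rw [add_zero] at h
  exact (right_eq_mul.mp h)

lemma bz_right (hb : IsBichar β) (a : G) : β a 0 = 1 := by
  have h := hb.2 a 0 0
  rw [add_zero] at h
  exact (right_eq_mul.mp h)

lemma bnsmul_left (hb : IsBichar β) (m : ℕ) (a b : G) : β (m • a) b = β a b ^ m := by
  induction m with
  | zero => simp [bz_left hb]
  | succ t ih => rw [succ_nsmul, hb.1, ih, pow_succ]

lemma bnsmul_right (hb : IsBichar β) (m : ℕ) (a b : G) : β a (m • b) = β a b ^ m := by
  induction m with
  | zero => simp [bz_right hb]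
  | succ t ih => rw [succ_nsmul, hb.2, ih, pow_succ]

lemma bsum_left (hb : IsBichar β) {ι : Type*} (s : Finset ι) (f : ι → G) (b : G) :
    β (∑ i ∈ s, f i) b = ∏ i ∈ s, β (f i) b := by
  classical
  induction s using Finset.induction with
  | empty => simp [bz_left hb]
  | insert _ _ hx ih => rw [Finset.sum_insert hx, hb.1, ih, Finset.prod_insert hx]

lemma bsum_right (hb : IsBichar β) {ι : Type*} (s : Finset ι) (a : G) (f : ι → G) :
    β a (∑ i ∈ s, f i) = ∏ i ∈ s, β a (f i) := by
  classical
  induction s using Finset.induction with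
  | empty => simp [bz_right hb]
  | insert _ _ hx ih => rw [Finset.sum_insert hx, hb.2, ih, Finset.prod_insert hx]

lemma balt_swap (hb : IsBichar β) (halt : ∀ g : G, β g g = 1) (a b : G) :
    β b a = (β a b)⁻¹ := by
  have h := halt (a + b)
  rw [hb.1, hb.2, hb.2, halt a, halt b, one_mul, mul_one] at h
  exact eq_inv_of_mul_eq_one_right h

end helpers

/-- Let `G = ⊕_{i=1}^k ℤ aᵢ` be a finite abelian group (realized as `∀ i, ZMod (n i)`,
with generators the standard "basis vectors" `Pi.single i 1` of respective orders `n i`),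
and `β` an alternating bicharacter on `G`.  The map `ξ` obtained by setting
`ξ(aᵢ,aⱼ) = 1` for `i ≤ j` and `ξ(aᵢ,aⱼ) = β(aᵢ,aⱼ)` for `i > j` and extending bilinearly
is a bicharacter with `Ψ(ξ) = β`, i.e. `ξ(a,b)ξ(b,a)⁻¹ = β(a,b)` for all `a b`. -/
theorem exists_bicharacter_section
    {F : Type*} [Field F] [IsAlgClosed F] [CharZero F]
    (k : ℕ) (n : Fin k → ℕ) (hn : ∀ i, 0 < n i)
    (β : (∀ i : Fin k, ZMod (n i)) → (∀ i : Fin k, ZMod (n i)) → Fˣ)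
    (hβ : IsAltBichar β)
    (ξ : (∀ i : Fin k, ZMod (n i)) → (∀ i : Fin k, ZMod (n i)) → Fˣ)
    (hξ : ∀ a b, ξ a b = ∏ i : Fin k, ∏ j : Fin k,
        if j < i then β (Pi.single i (a i)) (Pi.single j (b j)) else 1) :
    IsBichar ξ ∧
    (∀ i j : Fin k, ξ (Pi.single i 1) (Pi.single j 1) =
        if i ≤ j then 1 else β (Pi.single i 1) (Pi.single j 1)) ∧
    (∀ a b, Psi ξ a b = β a b) := by
  haveI : ∀ i, NeZero (n i) := fun i => ⟨(hn i).ne'⟩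
  obtain ⟨hb, halt⟩ := hβ
  -- diagonal vanishing
  have diag : ∀ (i : Fin k) (x y : ZMod (n i)),
      β (Pi.single i x) (Pi.single i y) = 1 := by
    intro i x y
    have hsingle : ∀ x : ZMod (n i),
        Pi.single i x = x.val • (Pi.single i (1 : ZMod (n i)) : ∀ l, ZMod (n l)) := by
      intro x
      ext l
      rcases eq_or_ne l i with rfl | h
      · simp [Pi.single_eq_same, nsmul_eq_mul, ZMod.natCast_val, ZMod.cast_id]
      · simp [Pi.single_eq_of_ne h]
    have hx := hsingle x
    have hy := hsingle y
    rw [hx, hy, bnsmul_left hb, bnsmul_right hb, halt, one_pow, one_pow]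
  -- expansion of β in terms of singles
  have expand : ∀ a b, β a b = ∏ i : Fin k, ∏ j : Fin k,
      β (Pi.single i (a i)) (Pi.single j (b j)) := by
    intro a b
    conv_lhs => rw [← Finset.univ_sum_single a]
    rw [bsum_left hb]
    refine Finset.prod_congr rfl fun i _ => ?_
    conv_lhs => rw [← Finset.univ_sum_single b]
    rw [bsum_right hb]
  -- ξ is a bicharacter
  have hbichar : IsBichar ξ := by
    constructor
    · intro a b c
      rw [hξ, hξ, hξ, ← Finset.prod_mul_distrib]
      refine Finset.prod_congr rfl fun i _ => ?_
      rw [← Finset.prod_mul_distrib]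
      refine Finset.prod_congr rfl fun j _ => ?_
      split_ifs with h
      · rw [Pi.add_apply, Pi.single_add, hb.1]
      · rw [mul_one]
    · intro a b c
      rw [hξ, hξ, hξ, ← Finset.prod_mul_distrib]
      refine Finset.prod_congr rfl fun i _ => ?_
      rw [← Finset.prod_mul_distrib]
      refine Finset.prod_congr rfl fun j _ => ?_
      split_ifs with h
      · rw [Pi.add_apply, Pi.single_add, hb.2]
      · rw [mul_one]
  refine ⟨hbichar, ?_, ?_⟩
  · -- values on generators
    intro i j
    rw [hξ]
    rw [Fintype.prod_eq_single i (fun i' hi' => Finset.prod_eq_one fun j' _ => by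
      rw [Pi.single_eq_of_ne hi', Pi.single_zero]
      split_ifs with h
      · exact bz_left hb _
      · rfl)]
    rw [Fintype.prod_eq_single j (fun j' hj' => by
      rw [Pi.single_eq_of_ne hj', Pi.single_zero]
      split_ifs with h
      · exact bz_right hb _
      · rfl)]
    rw [Pi.single_eq_same, Pi.single_eq_same]
    rcases le_or_gt i j with h | h
    · rw [if_neg (not_lt.mpr h), if_pos h]
    · rw [if_pos h, if_neg (not_le.mpr h)]
  · -- Psi ξ = β
    intro a b
    show ξ a b * (ξ b a)⁻¹ = β a b
    rw [hξ a b, hξ b a]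
    have hinv : (∏ i : Fin k, ∏ j : Fin k,
        if j < i then β (Pi.single i (b i)) (Pi.single j (a j)) else 1)⁻¹ =
        ∏ i : Fin k, ∏ j : Fin k,
        if i < j then β (Pi.single i (a i)) (Pi.single j (b j)) else 1 := by
      rw [← Finset.prod_inv_distrib]
      calc (∏ i : Fin k, (∏ j : Fin k,
            if j < i then β (Pi.single i (b i)) (Pi.single j (a j)) else 1)⁻¹)
          = ∏ i : Fin k, ∏ j : Fin k,
            if j < i then β (Pi.single j (a j)) (Pi.single i (b i)) else 1 := by
            refine Finset.prod_congr rfl fun i _ => ?_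
            rw [← Finset.prod_inv_distrib]
            refine Finset.prod_congr rfl fun j _ => ?_
            split_ifs with h
            · exact (balt_swap hb halt _ _).symm
            · exact inv_one
        _ = _ := Finset.prod_comm
    rw [hinv, ← Finset.prod_mul_distrib, expand a b]
    refine Finset.prod_congr rfl fun i _ => ?_
    rw [← Finset.prod_mul_distrib]
    refine Finset.prod_congr rfl fun j _ => ?_
    rcases lt_trichotomy i j with h | h | h
    · rw [if_neg (asymm h), if_pos h, one_mul]
    · subst h
      simp [diag]
    · rw [if_pos h, if_neg (asymm h), mul_one]
end

section
/- Let G be a finite abelian group with generators a_1,…,a_k of orders n_1,…,n_k (G = ⊕ Z a_i), β an alternating bicharacter on G, and ξ the bicharacter with ξ(a_i,a_j)=1 for i≤j and β(a_i,a_j) for i>j. Then the twisted group algebra F^ξ G is isomorphic to the associative F-algebra generated by x_1,…,x_k subject to relations x_i x_j = β(a_i,a_j) x_j x_i and x_i^{n_i} = 1. -/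
/-- Let `G = ⊕_{i=1}^k ℤ aᵢ` be a finite abelian group (realized as `∀ i, ZMod (n i)` with
generators `aᵢ = Pi.single i 1` of orders `n i`), `β` an alternating bicharacter on `G`, and
`ξ` the bicharacter with `ξ(aᵢ,aⱼ) = 1` for `i ≤ j` and `β(aᵢ,aⱼ)` for `i > j`.  The twisted
group algebra `F^ξ G` (an algebra `A` with basis `u : G → A`, `u 0 = 1` and
`u a * u b = ξ a b • u (a+b)`) is isomorphic to the `F`-algebra generated by `x₁,…,x_k`
subject to the relations `xᵢxⱼ = β(aᵢ,aⱼ) xⱼxᵢ` and `xᵢ^{nᵢ} = 1`, via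
`xᵢ ↦ u_{aᵢ}`. -/
theorem twisted_group_algebra_presentation
    {F : Type*} [Field F] [IsAlgClosed F] [CharZero F]
    (k : ℕ) (n : Fin k → ℕ) (hn : ∀ i, 0 < n i)
    (β : (∀ i : Fin k, ZMod (n i)) → (∀ i : Fin k, ZMod (n i)) → Fˣ)
    (hβ : IsAltBichar β)
    (ξ : (∀ i : Fin k, ZMod (n i)) → (∀ i : Fin k, ZMod (n i)) → Fˣ)
    (hξbil : IsBichar ξ)
    (hξval : ∀ i j : Fin k, ξ (Pi.single i 1) (Pi.single j 1) =
        if i ≤ j then 1 else β (Pi.single i 1) (Pi.single j 1))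
    {A : Type*} [Ring A] [Algebra F A]
    (u : (∀ i : Fin k, ZMod (n i)) → A)
    (hind : LinearIndependent F u)
    (hspan : Submodule.span F (Set.range u) = ⊤)
    (hone : u 0 = 1)
    (hmul : ∀ a b, u a * u b = (ξ a b : F) • u (a + b))
    (rel : FreeAlgebra F (Fin k) → FreeAlgebra F (Fin k) → Prop)
    (hrel : ∀ x y, rel x y ↔
      (∃ i j : Fin k, x = FreeAlgebra.ι F i * FreeAlgebra.ι F j ∧
          y = (β (Pi.single i 1) (Pi.single j 1) : F) •
              (FreeAlgebra.ι F j * FreeAlgebra.ι F i)) ∨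
      (∃ i : Fin k, x = FreeAlgebra.ι F i ^ (n i) ∧ y = 1)) :
    ∃ φ : RingQuot rel ≃ₐ[F] A,
      ∀ i : Fin k, φ (RingQuot.mkAlgHom F rel (FreeAlgebra.ι F i)) = u (Pi.single i 1) := by
  classical
  haveI : ∀ i, NeZero (n i) := fun i => ⟨(hn i).ne'⟩
  -- basic bicharacter facts
  have hξ0l : ∀ b, ξ 0 b = 1 := by
    intro b
    have h := hξbil.1 0 0 b
    rw [add_zero] at h
    exact (left_eq_mul.mp h)
  have hξsmul : ∀ (a : ℕ) (x b : ∀ t, ZMod (n t)), ξ (a • x) b = ξ x b ^ a := by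
    intro a x b
    induction a with
    | zero => simpa using hξ0l b
    | succ a ih => rw [succ_nsmul, hξbil.1, ih, pow_succ]
  have hβskew : ∀ a b, β a b * β b a = 1 := by
    intro a b
    have h := hβ.2 (a + b)
    rw [hβ.1.1 a b (a + b), hβ.1.2, hβ.1.2, hβ.2 a, hβ.2 b, one_mul, mul_one] at h
    exact h
  have hξee : ∀ i : Fin k, ξ (Pi.single i 1) (Pi.single i 1) = 1 := by
    intro i; simpa using hξval i i
  -- A-side computations
  have hupow : ∀ (i : Fin k) (a : ℕ),
      u (Pi.single i 1) ^ a = u (a • (Pi.single i 1 : ∀ t, ZMod (n t))) := by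
    intro i a
    induction a with
    | zero => simpa using hone.symm
    | succ a ih =>
        rw [pow_succ, ih, hmul, succ_nsmul, hξsmul, hξee, one_pow, Units.val_one, one_smul]
  have hnsmul : ∀ i : Fin k, (n i) • (Pi.single i 1 : ∀ t, ZMod (n t)) = 0 := by
    intro i
    ext t
    rcases eq_or_ne t i with rfl | h
    · rw [Pi.smul_apply, Pi.single_eq_same, Pi.zero_apply, nsmul_eq_mul, mul_one,
        ZMod.natCast_self]
    · rw [Pi.smul_apply, Pi.single_eq_of_ne h, Pi.zero_apply, smul_zero]
  -- the algebra map out of the free algebra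
  set φ0 : FreeAlgebra F (Fin k) →ₐ[F] A :=
    FreeAlgebra.lift F (fun i => u (Pi.single i 1)) with hφ0def
  have hφ0ι : ∀ i, φ0 (FreeAlgebra.ι F i) = u (Pi.single i 1) := fun i =>
    FreeAlgebra.lift_ι_apply _ _
  have hxi : ∀ i j : Fin k, ξ (Pi.single i 1) (Pi.single j 1)
      = β (Pi.single i 1) (Pi.single j 1) * ξ (Pi.single j 1) (Pi.single i 1) := by
    intro i j
    rcases lt_trichotomy i j with hij | rfl | hij
    · rw [hξval i j, if_pos hij.le, hξval j i, if_neg (not_le_of_gt hij), hβskew]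
    · rw [hξval i i, if_pos le_rfl, hβ.2, one_mul]
    · rw [hξval i j, if_neg (not_le_of_gt hij), hξval j i, if_pos hij.le, mul_one]
  have hcompat : ∀ ⦃x y⦄, rel x y → φ0 x = φ0 y := by
    intro x y hxy
    rcases (hrel x y).mp hxy with ⟨i, j, rfl, rfl⟩ | ⟨i, rfl, rfl⟩
    · simp only [map_mul, map_smul, hφ0ι]
      rw [hmul, hmul, add_comm (Pi.single j 1) (Pi.single i 1), smul_smul, hxi i j,
        Units.val_mul]
    · rw [map_pow, map_one, hφ0ι, hupow, hnsmul, hone]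
  set φ : RingQuot rel →ₐ[F] A := RingQuot.liftAlgHom F ⟨φ0, hcompat⟩ with hφdef
  set y : Fin k → RingQuot rel := fun i => RingQuot.mkAlgHom F rel (FreeAlgebra.ι F i) with hy
  have hφy : ∀ i, φ (y i) = u (Pi.single i 1) :=
    fun i => (RingQuot.liftAlgHom_mkAlgHom_apply F φ0 hcompat _).trans (hφ0ι i)
  -- relations in the quotient
  have hcomm : ∀ i j : Fin k,
      y i * y j = ((β (Pi.single i 1) (Pi.single j 1) : F)) • (y j * y i) := by
    intro i j
    have h := RingQuot.mkAlgHom_rel F ((hrel _ _).mpr (Or.inl ⟨i, j, rfl, rfl⟩))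
    rw [map_mul, map_smul, map_mul] at h
    exact h
  have hpown : ∀ i : Fin k, y i ^ (n i) = 1 := by
    intro i
    have h := RingQuot.mkAlgHom_rel F ((hrel _ _).mpr (Or.inr ⟨i, rfl, rfl⟩))
    rw [map_pow, map_one] at h
    exact h
  have hpowmod : ∀ (i : Fin k) (a : ℕ), y i ^ a = y i ^ (a % n i) := by
    intro i a
    conv_lhs => rw [← Nat.div_add_mod a (n i)]
    rw [pow_add, pow_mul, hpown, one_pow, one_mul]
  have hL4 : ∀ (i j : Fin k) (a : ℕ),
      y i * y j ^ a = ((β (Pi.single i 1) (Pi.single j 1) : F) ^ a) • (y j ^ a * y i) := by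
    intro i j a
    induction a with
    | zero => simp
    | succ a ih =>
        rw [pow_succ, ← mul_assoc, ih, smul_mul_assoc, mul_assoc, hcomm i j,
          mul_smul_comm, smul_smul, ← pow_succ, ← mul_assoc, ← pow_succ]
  have hPT : ∀ (i : Fin k) (g : ∀ t, ZMod (n t)) (l : List (Fin k)), ∃ c : Fˣ,
      y i * (l.map fun j => y j ^ (g j).val).prod
        = (c : F) • ((l.map fun j => y j ^ (g j).val).prod * y i) := by
    intro i g l
    induction l with
    | nil => exact ⟨1, by simp⟩
    | cons j l ih =>
        obtain ⟨c, hc⟩ := ih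
        refine ⟨β (Pi.single i 1) (Pi.single j 1) ^ ((g j).val) * c, ?_⟩
        rw [List.map_cons, List.prod_cons, ← mul_assoc, hL4 i j, smul_mul_assoc,
          mul_assoc, hc, mul_smul_comm, smul_smul, ← mul_assoc, Units.val_mul,
          Units.val_pow_eq_pow_val]
  set m : (∀ t, ZMod (n t)) → RingQuot rel :=
    fun g => ((List.finRange k).map fun j => y j ^ (g j).val).prod with hm
  have hm0 : m 0 = 1 := by
    simp only [hm]
    refine List.prod_eq_one ?_
    intro x hx
    simp only [List.mem_map] at hx
    obtain ⟨j, -, rfl⟩ := hx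
    simp [ZMod.val_zero]
  have hMne : ∀ (i : Fin k) (g : ∀ t, ZMod (n t)) (l : List (Fin k)), i ∉ l →
      (l.map fun j => y j ^ (((g + Pi.single i 1 : ∀ t, ZMod (n t))) j).val).prod
        = (l.map fun j => y j ^ (g j).val).prod := by
    intro i g l hl
    induction l with
    | nil => rfl
    | cons j l ih =>
        have hji : j ≠ i := fun h => hl (h ▸ List.mem_cons_self)
        have h1 : ((g + Pi.single i 1 : ∀ t, ZMod (n t))) j = g j := by
          rw [Pi.add_apply, Pi.single_eq_of_ne hji, add_zero]
        rw [List.map_cons, List.map_cons, List.prod_cons, List.prod_cons, h1,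
          ih (fun h => hl (List.mem_cons_of_mem _ h))]
  have hsplit : ∀ i : Fin k, List.finRange k =
      (List.finRange k).take i.val ++ i :: (List.finRange k).drop (i.val + 1) := by
    intro i
    have h1 : i.val < (List.finRange k).length := by
      rw [List.length_finRange]; exact i.isLt
    have h2 : (List.finRange k)[i.val] = i := by
      rw [List.getElem_finRange]
      ext
      simp
    conv_lhs => rw [← List.take_append_drop i.val (List.finRange k),
      List.drop_eq_getElem_cons h1, h2]
  have hswap : ∀ (i : Fin k) (g : ∀ t, ZMod (n t)), ∃ c : Fˣ,
      y i * m g = (c : F) • m (g + Pi.single i 1) := by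
    intro i g
    have hnd := List.nodup_finRange k
    rw [hsplit i] at hnd
    have hdisj := (List.nodup_append'.mp hnd).2.2
    have hitake : i ∉ (List.finRange k).take i.val := by
      intro hmem
      exact hdisj hmem List.mem_cons_self
    have hidrop : i ∉ (List.finRange k).drop (i.val + 1) :=
      (List.nodup_cons.mp (List.nodup_append'.mp hnd).2.1).1
    obtain ⟨c, hc⟩ := hPT i g ((List.finRange k).take i.val)
    refine ⟨c, ?_⟩
    have hval : (((g + Pi.single i 1 : ∀ t, ZMod (n t))) i).val = ((g i).val + 1) % n i := by
      rw [Pi.add_apply, Pi.single_eq_same, ZMod.val_add, ZMod.val_one_eq_one_mod]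
      conv_rhs => rw [Nat.add_mod, Nat.mod_eq_of_lt (ZMod.val_lt (g i))]
    simp only [hm]
    conv_lhs => rw [hsplit i]
    conv_rhs => rw [hsplit i]
    rw [List.map_append, List.prod_append, List.map_cons, List.prod_cons,
      List.map_append, List.prod_append, List.map_cons, List.prod_cons,
      hMne i g _ hitake, hMne i g _ hidrop, hval, ← mul_assoc, hc, smul_mul_assoc,
      mul_assoc]
    congr 2
    rw [← mul_assoc, ← pow_succ', ← hpowmod]
  -- the monomials span the quotient
  have hmemS : ∀ r : RingQuot rel, r ∈ Submodule.span F (Set.range m) := by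
    set S := Submodule.span F (Set.range m) with hS
    have h1S : (1 : RingQuot rel) ∈ S := by
      rw [← hm0]; exact Submodule.subset_span ⟨0, rfl⟩
    have hyS : ∀ i : Fin k, ∀ s ∈ S, y i * s ∈ S := by
      intro i s hs
      refine Submodule.span_induction ?_ ?_ ?_ ?_ hs
      · rintro x ⟨g, rfl⟩
        obtain ⟨c, hc⟩ := hswap i g
        rw [hc]
        exact S.smul_mem _ (Submodule.subset_span ⟨_, rfl⟩)
      · rw [mul_zero]; exact S.zero_mem
      · intro a b _ _ ha hb; rw [mul_add]; exact S.add_mem ha hb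
      · intro t a _ ha; rw [mul_smul_comm]; exact S.smul_mem _ ha
    let Q : Subalgebra F (RingQuot rel) :=
      { carrier := {r | ∀ s ∈ S, r * s ∈ S}
        mul_mem' := fun {a b} ha hb s hs => by rw [mul_assoc]; exact ha _ (hb _ hs)
        one_mem' := fun s hs => by rwa [one_mul]
        add_mem' := fun {a b} ha hb s hs => by rw [add_mul]; exact S.add_mem (ha _ hs) (hb _ hs)
        algebraMap_mem' := fun t s hs => by
          rw [Algebra.algebraMap_eq_smul_one, smul_mul_assoc, one_mul]
          exact S.smul_mem _ hs }
    have hadj : Algebra.adjoin F (Set.range y) = ⊤ := by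
      have h1 : Set.range y = ⇑(RingQuot.mkAlgHom F rel) '' Set.range (FreeAlgebra.ι F) := by
        rw [← Set.range_comp]; rfl
      rw [h1, ← AlgHom.map_adjoin, FreeAlgebra.adjoin_range_ι, Algebra.map_top]
      exact (AlgHom.range_eq_top _).mpr (RingQuot.mkAlgHom_surjective F rel)
    have hQ : ∀ r : RingQuot rel, r ∈ Q := by
      intro r
      have hr : r ∈ Algebra.adjoin F (Set.range y) := by rw [hadj]; trivial
      refine Algebra.adjoin_le ?_ hr
      rintro x ⟨i, rfl⟩
      exact fun s hs => hyS i s hs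
    intro r
    have h := hQ r 1 h1S
    rwa [mul_one] at h
  -- image of monomials under φ
  have hPHIl : ∀ (l : List (Fin k)) (g : ∀ t, ZMod (n t)), ∃ c : Fˣ,
      φ ((l.map fun j => y j ^ (g j).val).prod)
        = (c : F) • u ((l.map fun j =>
            (g j).val • (Pi.single j 1 : ∀ t, ZMod (n t))).sum) := by
    intro l g
    induction l with
    | nil => exact ⟨1, by simp [hone]⟩
    | cons j l ih =>
        obtain ⟨c, hc⟩ := ih
        refine ⟨ξ ((g j).val • Pi.single j 1)
          ((l.map fun j => (g j).val • (Pi.single j 1 : ∀ t, ZMod (n t))).sum) * c, ?_⟩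
        rw [List.map_cons, List.prod_cons, map_mul, map_pow, hφy, hupow, hc,
          mul_smul_comm, hmul, smul_smul, List.map_cons, List.sum_cons,
          Units.val_mul, mul_comm (c : F)]
  have hsumg : ∀ g : ∀ t, ZMod (n t),
      ((List.finRange k).map fun j =>
        (g j).val • (Pi.single j 1 : ∀ t, ZMod (n t))).sum = g := by
    intro g
    rw [← Fin.sum_univ_def]
    have h1 : ∀ j, (g j).val • (Pi.single j 1 : ∀ t, ZMod (n t)) = Pi.single j (g j) := by
      intro j
      ext t
      rcases eq_or_ne t j with rfl | h
      · rw [Pi.smul_apply, Pi.single_eq_same, Pi.single_eq_same, nsmul_eq_mul, mul_one]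
        exact ZMod.natCast_rightInverse (g t)
      · rw [Pi.smul_apply, Pi.single_eq_of_ne h, Pi.single_eq_of_ne h, smul_zero]
    simp_rw [h1]
    exact Finset.univ_sum_single g
  choose c hc using fun g => hPHIl (List.finRange k) g
  have hc' : ∀ g, φ (m g) = (c g : F) • u g := by
    intro g
    simp only [hm]
    rw [hc g, hsumg g]
  set w : (∀ t, ZMod (n t)) → RingQuot rel :=
    fun g => (((c g)⁻¹ : Fˣ) : F) • m g with hw
  have hφw : ∀ g, φ (w g) = u g := by
    intro g
    rw [hw]
    simp only []
    rw [map_smul, hc' g, smul_smul, ← Units.val_mul, inv_mul_cancel, Units.val_one, one_smul]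
  have hmw : ∀ g, m g = (c g : F) • w g := by
    intro g
    rw [hw]
    simp only []
    rw [smul_smul, ← Units.val_mul, mul_inv_cancel, Units.val_one, one_smul]
  have hspanw : ∀ r : RingQuot rel, r ∈ Submodule.span F (Set.range w) := by
    intro r
    refine Submodule.span_le.mpr ?_ (hmemS r)
    rintro x ⟨g, rfl⟩
    rw [hmw g]
    exact Submodule.smul_mem _ _ (Submodule.subset_span ⟨g, rfl⟩)
  -- the inverse linear map
  let B : Module.Basis (∀ t, ZMod (n t)) F A := Module.Basis.mk hind (by rw [hspan])
  let ψ : A →ₗ[F] RingQuot rel := B.constr F w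
  have hψu : ∀ g, ψ (u g) = w g := by
    intro g
    have hBg : u g = B g := (Module.Basis.mk_apply hind _ g).symm
    rw [hBg]
    exact B.constr_basis F w g
  have hφψ : ∀ a : A, φ (ψ a) = a := by
    intro a
    have ha : a ∈ Submodule.span F (Set.range u) := by rw [hspan]; trivial
    refine Submodule.span_induction ?_ ?_ ?_ ?_ ha
    · rintro x ⟨g, rfl⟩; rw [hψu, hφw]
    · rw [map_zero, map_zero]
    · intro a b _ _ ha hb; rw [map_add, map_add, ha, hb]
    · intro t a _ ha; rw [map_smul, map_smul, ha]
  have hψφ : ∀ r : RingQuot rel, ψ (φ r) = r := by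
    intro r
    refine Submodule.span_induction ?_ ?_ ?_ ?_ (hspanw r)
    · rintro x ⟨g, rfl⟩; rw [hφw, hψu]
    · rw [map_zero, map_zero]
    · intro a b _ _ ha hb; rw [map_add, map_add, ha, hb]
    · intro t a _ ha; rw [map_smul, map_smul, ha]
  refine ⟨AlgEquiv.ofBijective φ
    ⟨fun r r' h => by rw [← hψφ r, h, hψφ], fun a => ⟨ψ a, hφψ a⟩⟩, ?_⟩
  intro i
  exact hφy i
end

section
/- Let (G,β,R) be a skew root system of Lie type and ξ a 2-cocycle on G with Ψ(ξ) = β. Then L(R) = ⊕_{a∈R} F u_a is a G-graded Lie subalgebra of (F^ξ G)^− (the twisted group algebra with bracket [x,y] = xy − yx), with [u_a, u_b] = (ξ(a,b) − ξ(b,a)) u_{a+b}. -/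
/-- `R` is a skew root system of Lie type in `(G, β)`:  `R ⊆ G ∖ Rad(β)` generates `G`,
is symmetric, and is closed under addition of pairs `a b` with `β a b ≠ 1`. -/
def IsSkewRootLie {G : Type*} [AddCommGroup G] {F : Type*} [Field F]
    (β : G → G → Fˣ) (R : Set G) : Prop :=
  (∀ a ∈ R, ∃ h : G, β a h ≠ 1) ∧ AddSubgroup.closure R = ⊤ ∧
  (∀ a ∈ R, -a ∈ R) ∧ ∀ a ∈ R, ∀ b ∈ R, β a b ≠ 1 → a + b ∈ R

/-- Let `(G,β,R)` be a skew root system of Lie type and `ξ` a 2-cocycle with `Ψ(ξ) = β`.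
In the twisted group algebra `F^ξ G` (modelled as an algebra `A` with linearly independent
family `u : G → A` satisfying `u a * u b = ξ a b • u (a+b)`), the span
`L(R) = ⊕_{a ∈ R} F u_a` is closed under the commutator bracket, i.e. is a `G`-graded Lie
subalgebra of `(F^ξ G)⁻`, with `[u_a, u_b] = (ξ(a,b) − ξ(b,a)) u_{a+b}`. -/
theorem skewRootLie_gives_graded_lie_subalgebra
    {G : Type*} [AddCommGroup G] {F : Type*} [Field F] [IsAlgClosed F] [CharZero F]
    {A : Type*} [Ring A] [Algebra F A]
    (β ξ : G → G → Fˣ) (hβ : IsAltBichar β) (hβnt : ∃ g h : G, β g h ≠ 1)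
    (hξ : IsCocycle ξ) (hΨ : ∀ a b : G, ξ a b * (ξ b a)⁻¹ = β a b)
    (R : Set G) (hR : IsSkewRootLie β R)
    (u : G → A) (hind : LinearIndependent F u)
    (hmul : ∀ a b : G, u a * u b = (ξ a b : F) • u (a + b)) :
    (∀ x ∈ Submodule.span F (u '' R), ∀ y ∈ Submodule.span F (u '' R),
        x * y - y * x ∈ Submodule.span F (u '' R)) ∧
    (∀ a ∈ R, ∀ b ∈ R,
        u a * u b - u b * u a = ((ξ a b : F) - (ξ b a : F)) • u (a + b)) := by
  have hbr : ∀ a b : G, u a * u b - u b * u a = ((ξ a b : F) - (ξ b a : F)) • u (a + b) := by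
    intro a b
    rw [hmul, hmul, add_comm b a, sub_smul]
  have hmem : ∀ a ∈ R, ∀ b ∈ R, u a * u b - u b * u a ∈ Submodule.span F (u '' R) := by
    intro a ha b hb
    rw [hbr]
    by_cases h : β a b = 1
    · have : ξ a b = ξ b a := by
        have := hΨ a b
        rw [h] at this
        have := mul_eq_one_iff_eq_inv.mp this
        simpa [inv_inv] using congrArg (·⁻¹) this
      rw [this, sub_self, zero_smul]
      exact Submodule.zero_mem _
    · exact Submodule.smul_mem _ _ (Submodule.subset_span ⟨a + b, hR.2.2.2 a ha b hb h, rfl⟩)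
  refine ⟨?_, fun a ha b hb => hbr a b⟩
  intro x hx y hy
  induction hx using Submodule.span_induction with
  | mem x hxm =>
    induction hy using Submodule.span_induction with
    | mem y hym =>
      obtain ⟨a, ha, rfl⟩ := hxm
      obtain ⟨b, hb, rfl⟩ := hym
      exact hmem a ha b hb
    | zero => simpa using Submodule.zero_mem _
    | add y z _ _ hy hz =>
      have : x * (y + z) - (y + z) * x = (x * y - y * x) + (x * z - z * x) := by noncomm_ring
      rw [this]; exact Submodule.add_mem _ hy hz
    | smul c y _ hy =>
      have : x * (c • y) - (c • y) * x = c • (x * y - y * x) := by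
        rw [mul_smul_comm, smul_mul_assoc, smul_sub]
      rw [this]; exact Submodule.smul_mem _ _ hy
  | zero => simpa using Submodule.zero_mem _
  | add x z _ _ hx hz =>
    have : (x + z) * y - y * (x + z) = (x * y - y * x) + (z * y - y * z) := by noncomm_ring
    rw [this]; exact Submodule.add_mem _ hx hz
  | smul c x _ hx =>
    have : (c • x) * y - y * (c • x) = c • (x * y - y * x) := by
      rw [mul_smul_comm, smul_mul_assoc, smul_sub]
    rw [this]; exact Submodule.smul_mem _ _ hx
end

section
/- Let (G,β,R) be a skew root system of Jordan type and ξ a 2-cocycle on G with Ψ(ξ) = β. Then J(R) = ⊕_{a∈R} F u_a is a G-graded Jordan subalgebra of (F^ξ G)^+ (the twisted group algebra with product x∘y = (xy+yx)/2), with u_a ∘ u_b = ((ξ(a,b)+ξ(b,a))/2) u_{a+b}. -/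
/-- `R` is a skew root system of Jordan type in `(G, β)`. -/
def IsSkewRootJordan {G : Type*} [AddCommGroup G] {F : Type*} [Field F]
    (β : G → G → Fˣ) (R : Set G) : Prop :=
  AddSubgroup.closure R = ⊤ ∧ (∀ a ∈ R, -a ∈ R) ∧
  ∀ a ∈ R, ∀ b ∈ R, β a b ≠ -1 → a + b ∈ R

/-- Let `(G,β,R)` be a skew root system of Jordan type and `ξ` a 2-cocycle with `Ψ(ξ) = β`.
In the twisted group algebra `F^ξ G` (modelled as an algebra `A` with linearly independent
family `u : G → A` satisfying `u a * u b = ξ a b • u (a+b)`), the span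
`J(R) = ⊕_{a ∈ R} F u_a` is closed under the Jordan product `x ∘ y = (xy + yx)/2`, i.e. is
a `G`-graded Jordan subalgebra of `(F^ξ G)⁺`, with
`u_a ∘ u_b = ((ξ(a,b) + ξ(b,a))/2) u_{a+b}`. -/
theorem skewRootJordan_gives_graded_jordan_subalgebra
    {G : Type*} [AddCommGroup G] {F : Type*} [Field F] [IsAlgClosed F] [CharZero F]
    {A : Type*} [Ring A] [Algebra F A]
    (β ξ : G → G → Fˣ) (hβ : IsAltBichar β)
    (hξ : IsCocycle ξ) (hΨ : ∀ a b : G, ξ a b * (ξ b a)⁻¹ = β a b)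
    (R : Set G) (hR : IsSkewRootJordan β R)
    (u : G → A) (hind : LinearIndependent F u)
    (hmul : ∀ a b : G, u a * u b = (ξ a b : F) • u (a + b)) :
    (∀ x ∈ Submodule.span F (u '' R), ∀ y ∈ Submodule.span F (u '' R),
        (1/2 : F) • (x * y + y * x) ∈ Submodule.span F (u '' R)) ∧
    (∀ a ∈ R, ∀ b ∈ R,
        (1/2 : F) • (u a * u b + u b * u a) =
          (((ξ a b : F) + (ξ b a : F)) / 2) • u (a + b)) := by
  obtain ⟨hclos, hneg, hsum⟩ := hR
  have key : ∀ a b : G,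
      (1/2 : F) • (u a * u b + u b * u a) = (((ξ a b : F) + (ξ b a : F)) / 2) • u (a + b) := by
    intro a b
    rw [hmul, hmul, add_comm b a, ← add_smul, smul_smul]
    congr 1
    field_simp
  refine ⟨?_, fun a _ b _ => key a b⟩
  intro x hx y hy
  induction hx, hy using Submodule.span_induction₂ with
  | mem_mem x y hx hy =>
      obtain ⟨a, ha, rfl⟩ := hx
      obtain ⟨b, hb, rfl⟩ := hy
      rw [key a b]
      by_cases hb1 : β a b = -1
      · have : (ξ a b : F) = -(ξ b a : F) := by
          have h := hΨ a b
          rw [hb1] at h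
          have h2 : ξ a b = -1 * ξ b a := by rw [← h]; group
          rw [h2]
          push_cast
          ring
        rw [this]
        simp
      · exact Submodule.smul_mem _ _ (Submodule.subset_span ⟨a + b, hsum a ha b hb hb1, rfl⟩)
  | zero_left y hy => simp
  | zero_right x hx => simp
  | add_left x y z hx hy hz h1 h2 =>
      have : (1/2 : F) • ((x + y) * z + z * (x + y)) =
          (1/2 : F) • (x * z + z * x) + (1/2 : F) • (y * z + z * y) := by
        rw [← smul_add]; congr 1; noncomm_ring
      rw [this]; exact Submodule.add_mem _ h1 h2
  | add_right x y z hx hy hz h1 h2 =>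
      have : (1/2 : F) • (x * (y + z) + (y + z) * x) =
          (1/2 : F) • (x * y + y * x) + (1/2 : F) • (x * z + z * x) := by
        rw [← smul_add]; congr 1; noncomm_ring
      rw [this]; exact Submodule.add_mem _ h1 h2
  | smul_left r x y hx hy h =>
      have : (1/2 : F) • (r • x * y + y * r • x) = r • ((1/2 : F) • (x * y + y * x)) := by
        rw [smul_mul_assoc, mul_smul_comm, ← smul_add, smul_comm]
      rw [this]; exact Submodule.smul_mem _ _ h
  | smul_right r x y hx hy h =>
      have : (1/2 : F) • (x * r • y + r • y * x) = r • ((1/2 : F) • (x * y + y * x)) := by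
        rw [smul_mul_assoc, mul_smul_comm, ← smul_add, smul_comm]
      rw [this]; exact Submodule.smul_mem _ _ h
end

section
/- Let (G,β,R) be a skew root system (of Lie or Jordan type) and H a subgroup of Rad(β). Let Ḡ = G/H, R̄ the image of R in Ḡ, and β̄ the induced alternating bicharacter on Ḡ. Then (Ḡ, β̄, R̄) is a skew root system of the same type, and it is reduced (β̄ nonsingular) when H = Rad(β). -/
/-- Let `(G,β,R)` be a skew root system (of Lie or Jordan type), `H ≤ Rad(β)` a subgroup,
`Ḡ = G/H`, `R̄` the image of `R` and `β̄` the induced alternating bicharacter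
(`β̄(ḡ,h̄) = β(g,h)`).  Then `(Ḡ,β̄,R̄)` is a skew root system of the same type, and it is
reduced (i.e. `β̄` is nonsingular) when `H = Rad(β)`. -/
theorem skewRoot_quotient
    {G : Type*} [AddCommGroup G] {F : Type*} [Field F] [IsAlgClosed F] [CharZero F]
    (β : G → G → Fˣ) (hβ : IsAltBichar β)
    (H : AddSubgroup G) (hH : ∀ g ∈ H, ∀ h : G, β g h = 1)
    (β' : G ⧸ H → G ⧸ H → Fˣ)
    (hβ' : ∀ g h : G, β' (g : G ⧸ H) (h : G ⧸ H) = β g h)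
    (R : Set G) :
    IsAltBichar β' ∧
    (IsSkewRootLie β R →
      IsSkewRootLie β' ((QuotientAddGroup.mk : G → G ⧸ H) '' R)) ∧
    (IsSkewRootJordan β R →
      IsSkewRootJordan β' ((QuotientAddGroup.mk : G → G ⧸ H) '' R)) ∧
    ((∀ g : G, (∀ h : G, β g h = 1) → g ∈ H) →
      ∀ x : G ⧸ H, (∀ y : G ⧸ H, β' x y = 1) → x = 0) := by
  have hsur := QuotientAddGroup.mk_surjective (s := H)
  have hclos : AddSubgroup.closure R = ⊤ →
      AddSubgroup.closure ((QuotientAddGroup.mk : G → G ⧸ H) '' R) = ⊤ := by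
    intro h
    have : AddSubgroup.map (QuotientAddGroup.mk' H) (AddSubgroup.closure R) =
        AddSubgroup.closure (⇑(QuotientAddGroup.mk' H) '' R) :=
      AddMonoidHom.map_closure _ R
    rw [h, AddSubgroup.map_top_of_surjective _ hsur] at this
    rw [show (QuotientAddGroup.mk : G → G ⧸ H) = ⇑(QuotientAddGroup.mk' H) from rfl, ← this]
  refine ⟨⟨⟨?_, ?_⟩, ?_⟩, ?_, ?_, ?_⟩
  · intro a b c
    obtain ⟨a, rfl⟩ := hsur a; obtain ⟨b, rfl⟩ := hsur b; obtain ⟨c, rfl⟩ := hsur c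
    rw [← QuotientAddGroup.mk_add, hβ', hβ', hβ', hβ.1.1]
  · intro a b c
    obtain ⟨a, rfl⟩ := hsur a; obtain ⟨b, rfl⟩ := hsur b; obtain ⟨c, rfl⟩ := hsur c
    rw [← QuotientAddGroup.mk_add, hβ', hβ', hβ', hβ.1.2]
  · intro g
    obtain ⟨g, rfl⟩ := hsur g
    rw [hβ', hβ.2]
  · rintro ⟨h1, h2, h3, h4⟩
    refine ⟨?_, hclos h2, ?_, ?_⟩
    · rintro x ⟨a, ha, rfl⟩
      obtain ⟨h, hh⟩ := h1 a ha
      exact ⟨(h : G ⧸ H), by rw [hβ']; exact hh⟩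
    · rintro x ⟨a, ha, rfl⟩
      exact ⟨-a, h3 a ha, by simp⟩
    · rintro x ⟨a, ha, rfl⟩ y ⟨b, hb, rfl⟩ hne
      rw [hβ'] at hne
      exact ⟨a + b, h4 a ha b hb hne, by simp⟩
  · rintro ⟨h2, h3, h4⟩
    refine ⟨hclos h2, ?_, ?_⟩
    · rintro x ⟨a, ha, rfl⟩
      exact ⟨-a, h3 a ha, by simp⟩
    · rintro x ⟨a, ha, rfl⟩ y ⟨b, hb, rfl⟩ hne
      rw [hβ'] at hne
      exact ⟨a + b, h4 a ha b hb hne, by simp⟩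
  · intro hrad x hx
    obtain ⟨g, rfl⟩ := hsur x
    have : g ∈ H := hrad g fun h => by rw [← hβ' g h]; exact hx h
    exact (QuotientAddGroup.eq_zero_iff g).mpr this
end

section
/- Let (G,β,R) be a reduced skew root system of Lie type and (R,E) its graph, where {a,b} ∈ E iff a≠b and β(a,b) ≠ 1. If R_1 is a connected component of (R,E), then |R_1| > 1 and R_1 = −R_1. -/
/-- The adjacency relation of the graph `(R, E)` of a skew root system of Lie type:
`{a,b} ∈ E` iff `a ≠ b` and `β a b ≠ 1`. -/
def LieGraphAdj {G : Type*} [AddCommGroup G] {F : Type*} [Field F]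
    (β : G → G → Fˣ) (R : Set G) (a b : G) : Prop :=
  a ∈ R ∧ b ∈ R ∧ a ≠ b ∧ β a b ≠ 1

/-- Let `(G,β,R)` be a reduced skew root system of Lie type with graph `(R,E)`.  Any
connected component `R₁` of the graph (here: the component of a vertex `a ∈ R`, consisting
of the vertices reachable from `a`) has more than one element and satisfies `R₁ = -R₁`. -/
theorem skewRootLie_component
    {G : Type*} [AddCommGroup G] {F : Type*} [Field F] [IsAlgClosed F] [CharZero F]
    (β : G → G → Fˣ) (hβ : IsAltBichar β)
    (hred : ∀ g : G, (∀ h : G, β g h = 1) → g = 0)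
    (R : Set G) (hR : IsSkewRootLie β R)
    (a : G) (ha : a ∈ R) :
    (∃ x ∈ {b | b ∈ R ∧ Relation.ReflTransGen (LieGraphAdj β R) a b},
       ∃ y ∈ {b | b ∈ R ∧ Relation.ReflTransGen (LieGraphAdj β R) a b}, x ≠ y) ∧
    (∀ b ∈ {b | b ∈ R ∧ Relation.ReflTransGen (LieGraphAdj β R) a b},
       -b ∈ {b | b ∈ R ∧ Relation.ReflTransGen (LieGraphAdj β R) a b}) := by
  obtain ⟨⟨hb1, hb2⟩, halt⟩ := hβ
  obtain ⟨hex, hcl, hneg, hsum⟩ := hR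
  -- basic bicharacter facts
  have hz2 : ∀ c : G, β c 0 = 1 := by
    intro c
    have h := hb2 c 0 0
    rw [add_zero] at h
    exact (left_eq_mul.mp h)
  have hz1 : ∀ c : G, β 0 c = 1 := by
    intro c
    have h := hb1 0 0 c
    rw [add_zero] at h
    exact (left_eq_mul.mp h)
  have hn1 : ∀ b c : G, β (-b) c = (β b c)⁻¹ := by
    intro b c
    have h := hb1 b (-b) c
    rw [add_neg_cancel, hz1] at h
    exact (inv_eq_of_mul_eq_one_right h.symm).symm
  have hn2 : ∀ b c : G, β b (-c) = (β b c)⁻¹ := by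
    intro b c
    have h := hb2 b c (-c)
    rw [add_neg_cancel, hz2] at h
    exact (inv_eq_of_mul_eq_one_right h.symm).symm
  have hskew : ∀ b c : G, β c b = (β b c)⁻¹ := by
    intro b c
    have h : β (b + c) (b + c) = 1 := halt _
    rw [hb1, hb2, hb2, halt, halt, one_mul, mul_one] at h
    exact inv_eq_of_mul_eq_one_right h |>.symm
  -- every element of R has a neighbor in R
  have hnbr : ∀ b ∈ R, ∃ r ∈ R, β b r ≠ 1 := by
    intro b hb
    obtain ⟨h, hh⟩ := hex b hb
    by_contra hcon
    push_neg at hcon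
    let H : AddSubgroup G :=
      { carrier := {g | β b g = 1}
        zero_mem' := hz2 b
        add_mem' := by
          intro x y hx hy
          simp only [Set.mem_setOf_eq] at *
          rw [hb2, hx, hy, one_mul]
        neg_mem' := by
          intro x hx
          simp only [Set.mem_setOf_eq] at *
          rw [hn2, hx, inv_one] }
    have hle : AddSubgroup.closure R ≤ H := AddSubgroup.closure_le H |>.mpr hcon
    rw [hcl] at hle
    exact hh (hle (AddSubgroup.mem_top h))
  -- adjacency from nonvanishing of β
  have hadj : ∀ b ∈ R, ∀ r ∈ R, β b r ≠ 1 → LieGraphAdj β R b r := by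
    intro b hb r hr hne
    refine ⟨hb, hr, ?_, hne⟩
    rintro rfl
    exact hne (halt b)
  constructor
  · obtain ⟨r, hr, hne⟩ := hnbr a ha
    refine ⟨a, ⟨ha, .refl⟩, r, ⟨hr, .single (hadj a ha r hr hne)⟩, ?_⟩
    rintro rfl
    exact hne (halt a)
  · rintro b ⟨hb, hab⟩
    obtain ⟨r, hr, hne⟩ := hnbr b hb
    have hnb : -b ∈ R := hneg b hb
    have e1 : LieGraphAdj β R b r := hadj b hb r hr hne
    have e2 : LieGraphAdj β R r (-b) := by
      refine hadj r hr (-b) hnb ?_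
      rw [hskew, hn1]
      simpa using hne
    exact ⟨hnb, (hab.tail e1).tail e2⟩
end

section
/- Let (G,β,R) be a reduced skew root system of Lie type whose graph (R,E) is disconnected, with connected component R_1 and complement R_2 = R ∖ R_1. Let G_i be the subgroup generated by R_i and β_i = β|_{G_i}. Then G = G_1 ⊕ G_2 is an orthogonal direct sum of nonsingular symplectic abelian groups, and each (G_i, β_i, R_i) is a skew root system of Lie type. -/
section helpers
variable {G : Type*} [AddCommGroup G] {F : Type*} [Field F] {β : G → G → Fˣ}

lemma bichar_zero_right_s11 (hb : IsBichar β) (g : G) : β g 0 = 1 := by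
  have h := hb.2 g 0 0
  rw [add_zero] at h
  exact right_eq_mul.mp h

lemma bichar_zero_left_s11 (hb : IsBichar β) (g : G) : β 0 g = 1 := by
  have h := hb.1 0 0 g
  rw [add_zero] at h
  exact right_eq_mul.mp h

lemma bichar_neg_right (hb : IsBichar β) (g h : G) : β g (-h) = (β g h)⁻¹ := by
  have h1 := hb.2 g h (-h)
  rw [add_neg_cancel, bichar_zero_right_s11 hb] at h1
  exact eq_inv_of_mul_eq_one_right h1.symm

lemma bichar_neg_left (hb : IsBichar β) (g h : G) : β (-g) h = (β g h)⁻¹ := by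
  have h1 := hb.1 g (-g) h
  rw [add_neg_cancel, bichar_zero_left_s11 hb] at h1
  exact eq_inv_of_mul_eq_one_left (by rw [mul_comm]; exact h1.symm)

lemma altbichar_skew (hβ : IsAltBichar β) (a b : G) : β b a = (β a b)⁻¹ := by
  have h := hβ.2 (a + b)
  rw [hβ.1.1 a b (a+b), hβ.1.2 a a b, hβ.1.2 b a b, hβ.2 a, hβ.2 b, one_mul, mul_one] at h
  exact eq_inv_of_mul_eq_one_left (by rw [mul_comm]; exact h)

lemma ortho_closure_right (hb : IsBichar β) {S : Set G} {g : G}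
    (h : ∀ b ∈ S, β g b = 1) : ∀ x ∈ AddSubgroup.closure S, β g x = 1 := by
  intro x hx
  induction hx using AddSubgroup.closure_induction with
  | mem y hy => exact h y hy
  | zero => exact bichar_zero_right_s11 hb g
  | add y z _ _ hy hz => rw [hb.2 g y z, hy, hz, one_mul]
  | neg y _ hy => rw [bichar_neg_right hb, hy, inv_one]

lemma ortho_closure_both (hβ : IsAltBichar β) {S T : Set G}
    (h : ∀ a ∈ S, ∀ b ∈ T, β a b = 1) :
    ∀ g ∈ AddSubgroup.closure S, ∀ x ∈ AddSubgroup.closure T, β g x = 1 := by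
  intro g hg x hx
  have hgb : ∀ b ∈ T, β g b = 1 := by
    intro b hb
    rw [altbichar_skew hβ]
    have hba : ∀ a ∈ S, β b a = 1 := fun a ha => by
      rw [altbichar_skew hβ, h a ha b hb, inv_one]
    rw [ortho_closure_right hβ.1 hba g hg, inv_one]
  exact ortho_closure_right hβ.1 hgb x hx

end helpers

/-- Let `(G,β,R)` be a reduced skew root system of Lie type whose graph is disconnected:
`R₁` is the connected component of a vertex `a₀` and `R₂ = R ∖ R₁` is nonempty.  With
`Gᵢ` the subgroup generated by `Rᵢ` and `βᵢ = β|_{Gᵢ}`:  `G = G₁ ⊕ G₂` is an orthogonal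
direct sum, each `(Gᵢ,βᵢ)` is nonsingular, and each `(Gᵢ,βᵢ,Rᵢ)` is a skew root system
of Lie type. -/
theorem skewRootLie_disconnected_decomposes
    {G : Type*} [AddCommGroup G] {F : Type*} [Field F] [IsAlgClosed F] [CharZero F]
    (β : G → G → Fˣ) (hβ : IsAltBichar β)
    (hred : ∀ g : G, (∀ h : G, β g h = 1) → g = 0)
    (R : Set G) (hR : IsSkewRootLie β R)
    (a₀ : G) (ha₀ : a₀ ∈ R)
    (R₁ R₂ : Set G)
    (hR₁ : R₁ = {b | b ∈ R ∧ Relation.ReflTransGen (LieGraphAdj β R) a₀ b})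
    (hR₂ : R₂ = R \ R₁) (hdis : R₂.Nonempty)
    (G₁ G₂ : AddSubgroup G)
    (hG₁ : G₁ = AddSubgroup.closure R₁) (hG₂ : G₂ = AddSubgroup.closure R₂) :
    (G₁ ⊓ G₂ = ⊥ ∧ G₁ ⊔ G₂ = ⊤ ∧ ∀ g ∈ G₁, ∀ h ∈ G₂, β g h = 1) ∧
    ((∀ g ∈ G₁, (∀ h ∈ G₁, β g h = 1) → g = 0) ∧
     (∀ g ∈ G₂, (∀ h ∈ G₂, β g h = 1) → g = 0)) ∧
    ((∀ a ∈ R₁, ∃ h ∈ G₁, β a h ≠ 1) ∧ (∀ a ∈ R₁, -a ∈ R₁) ∧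
      (∀ a ∈ R₁, ∀ b ∈ R₁, β a b ≠ 1 → a + b ∈ R₁)) ∧
    ((∀ a ∈ R₂, ∃ h ∈ G₂, β a h ≠ 1) ∧ (∀ a ∈ R₂, -a ∈ R₂) ∧
      (∀ a ∈ R₂, ∀ b ∈ R₂, β a b ≠ 1 → a + b ∈ R₂)) := by
  have hb := hβ.1
  have hinv : ∀ x : Fˣ, x ≠ 1 → x⁻¹ ≠ 1 := fun x hx h => hx (by rw [← inv_inv x, h, inv_one])
  have memR₁ : ∀ b : G, b ∈ R₁ ↔ b ∈ R ∧ Relation.ReflTransGen (LieGraphAdj β R) a₀ b :=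
    fun b => by rw [hR₁]; exact Iff.rfl
  have memR₂ : ∀ b : G, b ∈ R₂ ↔ b ∈ R ∧ b ∉ R₁ := fun b => by rw [hR₂]; exact Iff.rfl
  have hR₁R : R₁ ⊆ R := fun b hb => ((memR₁ b).mp hb).1
  have hR₂R : R₂ ⊆ R := fun b hb => ((memR₂ b).mp hb).1
  -- every root has a root it is not orthogonal to
  have neighbor : ∀ a ∈ R, ∃ b ∈ R, β a b ≠ 1 := by
    intro a ha
    by_contra hcon
    push_neg at hcon
    obtain ⟨h, hh⟩ := hR.1 a ha
    exact hh (ortho_closure_right hβ.1 hcon h (by rw [hR.2.1]; trivial))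
  -- adjacency spreads connectedness
  have spread : ∀ a ∈ R₁, ∀ b ∈ R, β a b ≠ 1 → b ∈ R₁ := by
    intro a ha b hbr hab
    have hane : a ≠ b := fun h => hab (by rw [h, hβ.2])
    exact (memR₁ b).mpr ⟨hbr, ((memR₁ a).mp ha).2.tail ⟨hR₁R ha, hbr, hane, hab⟩⟩
  -- orthogonality between R₁ and R₂
  have orthoRR : ∀ a ∈ R₁, ∀ b ∈ R₂, β a b = 1 := by
    intro a ha c hc
    by_contra hac
    exact ((memR₂ c).mp hc).2 (spread a ha c (hR₂R hc) hac)
  -- negation closure for R₁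
  have negR₁ : ∀ a ∈ R₁, -a ∈ R₁ := by
    intro a ha
    obtain ⟨c, hcR, hac⟩ := neighbor a (hR₁R ha)
    have hcR₁ : c ∈ R₁ := spread a ha c hcR hac
    have hval : β c (-a) = β a c := by
      rw [bichar_neg_right hb, altbichar_skew hβ, inv_inv]
    have hne : β c (-a) ≠ 1 := by rw [hval]; exact hac
    exact spread c hcR₁ (-a) (hR.2.2.1 a (hR₁R ha)) hne
  -- sum closure for R₁
  have sumR₁ : ∀ a ∈ R₁, ∀ c ∈ R₁, β a c ≠ 1 → a + c ∈ R₁ := by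
    intro a ha c hc hac
    have hsum : a + c ∈ R := hR.2.2.2 a (hR₁R ha) c (hR₁R hc) hac
    have hval : β (-a) (a + c) = (β a c)⁻¹ := by
      rw [bichar_neg_left hb, hb.2 a a c, hβ.2 a, one_mul]
    have hne : β (-a) (a + c) ≠ 1 := by rw [hval]; exact hinv _ hac
    exact spread (-a) (negR₁ a ha) (a + c) hsum hne
  -- negation closure for R₂
  have negR₂ : ∀ a ∈ R₂, -a ∈ R₂ := by
    intro a ha
    refine (memR₂ (-a)).mpr ⟨hR.2.2.1 a (hR₂R ha), fun hneg => ?_⟩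
    have := negR₁ (-a) hneg
    rw [neg_neg] at this
    exact ((memR₂ a).mp ha).2 this
  -- sum closure for R₂
  have sumR₂ : ∀ a ∈ R₂, ∀ c ∈ R₂, β a c ≠ 1 → a + c ∈ R₂ := by
    intro a ha c hc hac
    have hsum : a + c ∈ R := hR.2.2.2 a (hR₂R ha) c (hR₂R hc) hac
    refine (memR₂ (a + c)).mpr ⟨hsum, fun hmem => ?_⟩
    have hval : β (a + c) (-a) = β a c := by
      rw [hb.1 a c (-a), bichar_neg_right hb, bichar_neg_right hb, hβ.2 a, inv_one, one_mul,
        altbichar_skew hβ, inv_inv]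
    exact hac (by rw [← hval]; exact orthoRR (a + c) hmem (-a) (negR₂ a ha))
  -- the subgroups
  have hsup : G₁ ⊔ G₂ = ⊤ := by
    rw [hG₁, hG₂, ← AddSubgroup.closure_union, hR₂, Set.union_diff_cancel hR₁R, hR.2.1]
  have orthoG : ∀ g ∈ G₁, ∀ h ∈ G₂, β g h = 1 := by
    intro g hg h hh
    rw [hG₁] at hg; rw [hG₂] at hh
    exact ortho_closure_both hβ orthoRR g hg h hh
  have decomp : ∀ h : G, ∃ x ∈ G₁, ∃ y ∈ G₂, x + y = h := by
    intro h
    have : h ∈ G₁ ⊔ G₂ := by rw [hsup]; trivial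
    exact AddSubgroup.mem_sup.mp this
  have total : ∀ g : G, (∀ x ∈ G₁, β g x = 1) → (∀ y ∈ G₂, β g y = 1) → g = 0 := by
    intro g h1 h2
    apply hred
    intro h
    obtain ⟨x, hx, y, hy, hxy⟩ := decomp h
    rw [← hxy, hb.2 g x y, h1 x hx, h2 y hy, one_mul]
  have hinf : G₁ ⊓ G₂ = ⊥ := by
    rw [eq_bot_iff]
    intro g hg
    rw [AddSubgroup.mem_bot]
    refine total g (fun x hx => ?_) (fun y hy => orthoG g hg.1 y hy)
    rw [altbichar_skew hβ, orthoG x hx g hg.2, inv_one]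
  have ns₁ : ∀ g ∈ G₁, (∀ h ∈ G₁, β g h = 1) → g = 0 := fun g hg hall =>
    total g hall (fun y hy => orthoG g hg y hy)
  have ns₂ : ∀ g ∈ G₂, (∀ h ∈ G₂, β g h = 1) → g = 0 := fun g hg hall =>
    total g (fun x hx => by rw [altbichar_skew hβ, orthoG x hx g hg, inv_one]) hall
  have wit₁ : ∀ a ∈ R₁, ∃ h ∈ G₁, β a h ≠ 1 := by
    intro a ha
    obtain ⟨c, hcR, hac⟩ := neighbor a (hR₁R ha)
    exact ⟨c, hG₁ ▸ AddSubgroup.subset_closure (spread a ha c hcR hac), hac⟩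
  have wit₂ : ∀ a ∈ R₂, ∃ h ∈ G₂, β a h ≠ 1 := by
    intro a ha
    obtain ⟨c, hcR, hac⟩ := neighbor a (hR₂R ha)
    have hcR₂ : c ∈ R₂ := by
      refine (memR₂ c).mpr ⟨hcR, fun hc₁ => ?_⟩
      exact hac (by rw [altbichar_skew hβ, orthoRR c hc₁ a ha, inv_one])
    exact ⟨c, hG₂ ▸ AddSubgroup.subset_closure hcR₂, hac⟩
  exact ⟨⟨hinf, hsup, orthoG⟩, ⟨ns₁, ns₂⟩, ⟨wit₁, negR₁, sumR₁⟩, ⟨wit₂, negR₂, sumR₂⟩⟩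
end

section
/- Let (G,β,R) be a reduced and indecomposable skew root system of Lie type. Then the Lie algebra L(R) = ⊕_{a∈R} F u_a (a subalgebra of the twisted group algebra under the commutator bracket) is a simple Lie algebra. -/
/-- Let `(G,β,R)` be a reduced (nonsingular) and indecomposable (connected graph) skew
root system of Lie type.  Then `L(R) = ⊕_{a ∈ R} F u_a`, a subalgebra of the twisted group
algebra under the commutator bracket, is a simple Lie algebra: it is nonabelian and its
only nonzero Lie ideal is `L(R)` itself. -/
theorem skewRootLie_reduced_indecomposable_simple
    {G : Type*} [AddCommGroup G] {F : Type*} [Field F] [IsAlgClosed F] [CharZero F]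
    {A : Type*} [Ring A] [Algebra F A]
    (β ξ : G → G → Fˣ) (hβ : IsAltBichar β) (hβnt : ∃ g h : G, β g h ≠ 1)
    (hξ : IsCocycle ξ) (hΨ : ∀ a b : G, ξ a b * (ξ b a)⁻¹ = β a b)
    (hred : ∀ g : G, (∀ h : G, β g h = 1) → g = 0)
    (R : Set G) (hR : IsSkewRootLie β R)
    (hconn : ∀ a ∈ R, ∀ b ∈ R,
      Relation.ReflTransGen (fun x y : G => x ∈ R ∧ y ∈ R ∧ β x y ≠ 1) a b)
    (u : G → A) (hind : LinearIndependent F u)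
    (hmul : ∀ a b : G, u a * u b = (ξ a b : F) • u (a + b)) :
    (∃ x ∈ Submodule.span F (u '' R), ∃ y ∈ Submodule.span F (u '' R), x * y - y * x ≠ 0) ∧
    (∀ I : Submodule F A, I ≤ Submodule.span F (u '' R) →
      (∀ x ∈ Submodule.span F (u '' R), ∀ y ∈ I, x * y - y * x ∈ I) →
      I ≠ ⊥ → I = Submodule.span F (u '' R)) := by
  classical
  obtain ⟨⟨hb1, hb2⟩, hbd⟩ := hβ
  obtain ⟨hR1, hR2, hR3, hR4⟩ := hR
  -- basic facts about β
  have hβ0r : ∀ a : G, β a 0 = 1 := by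
    intro a
    have h := hb2 a 0 0
    rw [zero_add] at h
    exact left_eq_mul.mp h
  have hβ0l : ∀ a : G, β 0 a = 1 := by
    intro a
    have h := hb1 0 0 a
    rw [zero_add] at h
    exact left_eq_mul.mp h
  have hβnr : ∀ a b : G, β a (-b) = (β a b)⁻¹ := by
    intro a b
    have h := hb2 a b (-b)
    rw [add_neg_cancel, hβ0r] at h
    exact eq_inv_of_mul_eq_one_right h.symm
  have hβnl : ∀ a b : G, β (-a) b = (β a b)⁻¹ := by
    intro a b
    have h := hb1 a (-a) b
    rw [add_neg_cancel, hβ0l] at h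
    exact eq_inv_of_mul_eq_one_right h.symm
  have hβswap : ∀ a b : G, β b a = (β a b)⁻¹ := by
    intro a b
    have h := hbd (a + b)
    rw [hb1, hb2, hb2, hbd, hbd, one_mul, mul_one] at h
    exact eq_inv_of_mul_eq_one_right h
  -- facts about ξ
  have hΨ' : ∀ a b : G, ξ a b = β a b * ξ b a := by
    intro a b
    rw [← hΨ a b, inv_mul_cancel_right]
  have hξ00 : ∀ a : G, ξ 0 a = ξ 0 0 := by
    intro a
    have h := hξ 0 0 a
    rw [zero_add, zero_add] at h
    exact (mul_right_cancel h).symm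
  have hkey : ∀ c a : G, ξ c a * ξ (-c) (c + a) = ξ (-c) c * ξ 0 0 := by
    intro c a
    have h := hξ (-c) c a
    rw [neg_add_cancel, hξ00 a] at h
    exact h.symm
  -- the structure constants
  set e : G → G → F := fun x y => (ξ x y : F) - (ξ y x : F) with he_def
  have he : ∀ x y : G, e x y = (ξ x y : F) * (1 - (β y x : F)) := by
    intro x y
    have h : (ξ y x : F) = (β y x : F) * (ξ x y : F) := by
      rw [← Units.val_mul, ← hΨ' y x]
    simp only [he_def]
    rw [h]; ring
  have he_ne : ∀ x y : G, β y x ≠ 1 → e x y ≠ 0 := by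
    intro x y h
    rw [he]
    exact mul_ne_zero (Units.ne_zero _) (sub_ne_zero.mpr fun h1 => h (Units.val_eq_one.mp h1.symm))
  have he_zero : ∀ x y : G, β y x = 1 → e x y = 0 := by
    intro x y h
    rw [he, h, Units.val_one, sub_self, mul_zero]
  have hbr : ∀ x y : G, u x * u y - u y * u x = e x y • u (x + y) := by
    intro x y
    rw [hmul x y, hmul y x, add_comm y x, ← sub_smul]
  have hbrs : ∀ (c : G) (s : Finset G) (σ : G → G) (f : G → F),
      u c * (∑ a ∈ s, f a • u (σ a)) - (∑ a ∈ s, f a • u (σ a)) * u c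
        = ∑ a ∈ s, (f a * e c (σ a)) • u (c + σ a) := by
    intro c s σ f
    rw [Finset.mul_sum, Finset.sum_mul, ← Finset.sum_sub_distrib]
    refine Finset.sum_congr rfl fun a _ => ?_
    rw [mul_smul_comm, smul_mul_assoc, ← smul_sub, hbr, smul_smul]
  -- eigenvalues of the diagonal operators
  set lam : G → G → F := fun c a => e c a * e (-c) (c + a) with hlam_def
  have hlam : ∀ c a : G, lam c a
      = ((ξ (-c) c : F) * (ξ 0 0 : F)) * ((1 - (β a c : F)) * (1 - (β a c : F)⁻¹)) := by
    intro c a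
    have h1 : (β (c + a) (-c) : F) = ((β a c : F))⁻¹ := by
      rw [hβnr, hb1, hbd, one_mul, Units.val_inv_eq_inv_val]
    have h2 : (ξ c a : F) * (ξ (-c) (c + a) : F) = (ξ (-c) c : F) * (ξ 0 0 : F) := by
      rw [← Units.val_mul, ← Units.val_mul, hkey]
    simp only [hlam_def]
    rw [he c a, he (-c) (c + a), h1]
    calc (ξ c a : F) * (1 - (β a c : F)) * ((ξ (-c) (c + a) : F) * (1 - ((β a c : F))⁻¹))
        = ((ξ c a : F) * (ξ (-c) (c + a) : F)) * ((1 - (β a c : F)) * (1 - ((β a c : F))⁻¹)) := by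
          ring
      _ = _ := by rw [h2]
  have hlam_eq : ∀ c p q : G, lam c p = lam c q → β p c = β q c ∨ β p c * β q c = 1 := by
    intro c p q h
    rw [hlam, hlam] at h
    have hK : ((ξ (-c) c : F) * (ξ 0 0 : F)) ≠ 0 :=
      mul_ne_zero (Units.ne_zero _) (Units.ne_zero _)
    have h' := mul_left_cancel₀ hK h
    have hs : (β p c : F) ≠ 0 := Units.ne_zero _
    have ht : (β q c : F) ≠ 0 := Units.ne_zero _
    have h0 : ((β p c : F) - (β q c : F)) * ((β p c : F) * (β q c : F) - 1)
        = (β p c : F) * (β q c : F) * ((1 - (β q c : F)) * (1 - ((β q c : F))⁻¹))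
          - (β p c : F) * (β q c : F) * ((1 - (β p c : F)) * (1 - ((β p c : F))⁻¹)) := by
      field_simp
      ring
    rw [← h', sub_self] at h0
    rcases mul_eq_zero.mp h0 with h1 | h1
    · exact Or.inl (Units.ext (sub_eq_zero.mp h1))
    · refine Or.inr (Units.ext ?_)
      rw [Units.val_mul, Units.val_one]
      exact sub_eq_zero.mp h1
  -- linear independence
  have hsum_ne : ∀ (s : Finset G) (f : G → F), s.Nonempty → (∀ a ∈ s, f a ≠ 0) →
      (∑ a ∈ s, f a • u a) ≠ 0 := by
    rintro s f ⟨p, hp⟩ hf h0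
    exact hf p hp (linearIndependent_iff'.mp hind s f h0 p hp)
  -- representation of elements of the span
  have hrep : ∀ x ∈ Submodule.span F (u '' R), ∃ (s : Finset G) (f : G → F),
      ↑s ⊆ R ∧ (∀ a ∈ s, f a ≠ 0) ∧ x = ∑ a ∈ s, f a • u a := by
    intro x hx
    rw [Finsupp.mem_span_image_iff_linearCombination] at hx
    obtain ⟨l, hls, hlx⟩ := hx
    refine ⟨l.support, l, (Finsupp.mem_supported F l).mp hls,
      fun a ha => Finsupp.mem_support_iff.mp ha, ?_⟩
    rw [← hlx, Finsupp.linearCombination_apply, Finsupp.sum]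
  -- kernels of characters
  have hfull : ∀ d : G, (∀ c ∈ R, β d c = 1) → ∀ g : G, β d g = 1 := by
    intro d hd g
    set H : AddSubgroup G :=
      { carrier := {g : G | β d g = 1}
        zero_mem' := hβ0r d
        add_mem' := by
          intro a b ha hb
          simp only [Set.mem_setOf_eq] at *
          rw [hb2, ha, hb, mul_one]
        neg_mem' := by
          intro a ha
          simp only [Set.mem_setOf_eq] at *
          rw [hβnr, ha, inv_one] } with hH
    have hle : AddSubgroup.closure R ≤ H := (AddSubgroup.closure_le H).mpr hd
    rw [hR2] at hle
    exact hle (AddSubgroup.mem_top g)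
  have hker : ∀ d : G, d ≠ 0 → ∃ c ∈ R, β d c ≠ 1 := by
    intro d hd
    by_contra h
    push_neg at h
    exact hd (hred d (hfull d h))
  have hne_root : ∀ p ∈ R, ∃ c ∈ R, β p c ≠ 1 := by
    intro p hp
    obtain ⟨g, hg⟩ := hR1 p hp
    by_contra h
    push_neg at h
    exact hg (hfull p h g)
  have hRne : R.Nonempty := by
    by_contra h
    rw [Set.not_nonempty_iff_eq_empty] at h
    obtain ⟨g, g', hg⟩ := hβnt
    have hz : ∀ x : G, x = 0 := by
      intro x
      have hx : x ∈ AddSubgroup.closure R := hR2 ▸ AddSubgroup.mem_top x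
      rw [h, AddSubgroup.closure_empty, AddSubgroup.mem_bot] at hx
      exact hx
    rw [hz g, hβ0l] at hg
    exact hg rfl
  constructor
  · -- nonabelian
    obtain ⟨p, hp⟩ := hRne
    obtain ⟨c, hc, hcne⟩ := hne_root p hp
    refine ⟨u p, Submodule.subset_span ⟨p, hp, rfl⟩, u c, Submodule.subset_span ⟨c, hc, rfl⟩, ?_⟩
    rw [hbr]
    intro h0
    rcases smul_eq_zero.mp h0 with h1 | h1
    · refine he_ne p c ?_ h1
      rw [hβswap]
      exact fun h2 => hcne (inv_eq_one.mp h2)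
    · exact hind.ne_zero (p + c) h1
  · -- simplicity
    intro I hIle hId hIbot
    obtain ⟨x, hxI, hxne⟩ := (Submodule.ne_bot_iff I).mp hIbot
    set W : Finset G → (G → F) → Prop := fun s f =>
      s.Nonempty ∧ ↑s ⊆ R ∧ (∀ a ∈ s, f a ≠ 0) ∧ (∑ a ∈ s, f a • u a) ∈ I with hW_def
    have hWex : ∃ n : ℕ, ∃ s f, W s f ∧ s.card = n := by
      obtain ⟨s, f, hsub, hf, hxs⟩ := hrep x (hIle hxI)
      have hsne : s.Nonempty := by
        rcases s.eq_empty_or_nonempty with h | h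
        · exfalso; apply hxne; rw [hxs, h, Finset.sum_empty]
        · exact h
      exact ⟨s.card, s, f, ⟨hsne, hsub, hf, hxs ▸ hxI⟩, rfl⟩
    set n := Nat.find hWex with hn_def
    obtain ⟨s, f, hW, hcard⟩ := Nat.find_spec hWex
    have hmin : ∀ (s' : Finset G) (f' : G → F), W s' f' → n ≤ s'.card :=
      fun s' f' h => Nat.find_le ⟨s', f', h, rfl⟩
    -- the shift move
    have hfilt : ∀ (s : Finset G) (f : G → F), W s f → ∀ c ∈ R, ∀ p ∈ s, β p c ≠ 1 →
        W ((s.filter (fun a => β a c ≠ 1)).image (fun a => c + a))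
          (fun b => f (b - c) * e c (b - c)) := by
      rintro s f ⟨hne, hsub, hf, hxI⟩ c hc p hp hpc
      have hinj : Function.Injective (fun a : G => c + a) := fun x y h => by
        simpa using h
      have hy : u c * (∑ a ∈ s, f a • u a) - (∑ a ∈ s, f a • u a) * u c
          = ∑ b ∈ (s.filter (fun a => β a c ≠ 1)).image (fun a => c + a),
              (f (b - c) * e c (b - c)) • u b := by
        rw [Finset.sum_image fun x _ y _ h => hinj h]
        have h1 := hbrs c s (fun a => a) f
        rw [h1, ← Finset.sum_filter_of_ne (p := fun a => β a c ≠ 1)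
          (fun a _ hne0 => fun h1 => hne0 (by rw [he_zero c a h1, mul_zero, zero_smul]))]
        refine Finset.sum_congr rfl fun a _ => ?_
        simp only [add_sub_cancel_left]
      refine ⟨⟨c + p, Finset.mem_image_of_mem _ (Finset.mem_filter.mpr ⟨hp, hpc⟩)⟩, ?_, ?_, ?_⟩
      · intro b hb
        obtain ⟨a, ha, rfl⟩ := Finset.mem_image.mp hb
        obtain ⟨haS, hac⟩ := Finset.mem_filter.mp ha
        rw [add_comm]
        exact hR4 a (hsub haS) c hc hac
      · intro b hb
        obtain ⟨a, ha, rfl⟩ := Finset.mem_image.mp hb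
        obtain ⟨haS, hac⟩ := Finset.mem_filter.mp ha
        simp only [add_sub_cancel_left]
        exact mul_ne_zero (hf a haS) (he_ne c a hac)
      · rw [← hy]
        exact hId (u c) (Submodule.subset_span ⟨c, hc, rfl⟩) _ hxI
    -- no partial shifts for minimal elements
    have hF1 : ∀ (s : Finset G) (f : G → F), W s f → s.card = n →
        ∀ c ∈ R, ∀ p ∈ s, β p c ≠ 1 → ∀ a ∈ s, β a c ≠ 1 := by
      intro s f hW hcard c hc p hp hpc a ha
      have h := hmin _ _ (hfilt s f hW c hc p hp hpc)
      rw [Finset.card_image_of_injective _ (fun x y hxy => by simpa using hxy)] at h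
      have heq : s.filter (fun a => β a c ≠ 1) = s :=
        Finset.eq_of_subset_of_card_le (Finset.filter_subset _ s) (hcard ▸ h)
      rw [← heq] at ha
      exact (Finset.mem_filter.mp ha).2
    -- eigenvalue conditions for minimal elements
    have heig : ∀ (s : Finset G) (f : G → F), W s f → s.card = n →
        ∀ c ∈ R, ∀ p ∈ s, ∀ q ∈ s, β p c = β q c ∨ β p c * β q c = 1 := by
      intro s f hW hcard c hc p hp q hq
      obtain ⟨hne, hsub, hf, hxI⟩ := hW
      refine hlam_eq c p q ?_
      by_contra hlne
      set X := ∑ a ∈ s, f a • u a with hX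
      set h : G → F := fun a => f a * (lam c a - lam c q) with hh
      have hzI : (∑ a ∈ s, (f a * lam c a) • u a) ∈ I := by
        have h1 : u c * X - X * u c ∈ I :=
          hId (u c) (Submodule.subset_span ⟨c, hc, rfl⟩) _ hxI
        have hyeq : u c * X - X * u c = ∑ a ∈ s, (f a * e c a) • u (c + a) :=
          hbrs c s (fun a => a) f
        rw [hyeq] at h1
        have h2 := hId (u (-c)) (Submodule.subset_span ⟨-c, hR3 c hc, rfl⟩) _ h1
        have hzeq : u (-c) * (∑ a ∈ s, (f a * e c a) • u (c + a))
            - (∑ a ∈ s, (f a * e c a) • u (c + a)) * u (-c)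
            = ∑ a ∈ s, (f a * lam c a) • u a := by
          rw [hbrs (-c) s (fun a => c + a) (fun a => f a * e c a)]
          refine Finset.sum_congr rfl fun a _ => ?_
          rw [neg_add_cancel_left]
          congr 1
          simp only [hlam_def]
          ring
        rwa [hzeq] at h2
      have hwI : (∑ a ∈ s, h a • u a) ∈ I := by
        have heq : (∑ a ∈ s, h a • u a)
            = (∑ a ∈ s, (f a * lam c a) • u a) - lam c q • X := by
          rw [hX, Finset.smul_sum, ← Finset.sum_sub_distrib]
          refine Finset.sum_congr rfl fun a _ => ?_
          rw [smul_smul, ← sub_smul]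
          congr 1
          simp only [hh]
          ring
        rw [heq]
        exact Submodule.sub_mem I hzI (Submodule.smul_mem I _ hxI)
      have hW'' : W (s.filter (fun a => h a ≠ 0)) h := by
        refine ⟨⟨p, Finset.mem_filter.mpr ⟨hp, ?_⟩⟩,
          fun a ha => hsub (Finset.filter_subset _ s ha),
          fun a ha => (Finset.mem_filter.mp ha).2, ?_⟩
        · simp only [hh]
          exact mul_ne_zero (hf p hp) (sub_ne_zero.mpr hlne)
        · rw [Finset.sum_subset (Finset.filter_subset _ s)
            (fun x hx hnx => by
              have hx0 : h x = 0 := by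
                by_contra hne0
                exact hnx (Finset.mem_filter.mpr ⟨hx, hne0⟩)
              rw [hx0, zero_smul])]
          exact hwI
      have hle := hmin _ _ hW''
      have hq0 : h q = 0 := by simp only [hh]; rw [sub_self, mul_zero]
      have hss : s.filter (fun a => h a ≠ 0) ⊆ s.erase q := by
        intro a ha
        obtain ⟨haS, hane⟩ := Finset.mem_filter.mp ha
        exact Finset.mem_erase.mpr ⟨fun heq => hane (heq ▸ hq0), haS⟩
      have hcle := Finset.card_le_card hss
      rw [Finset.card_erase_of_mem hq] at hcle
      have hpos : 0 < s.card := Finset.card_pos.mpr hne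
      omega
    -- orthogonality of minimal supports
    have horth : ∀ (s : Finset G) (f : G → F), W s f → s.card = n →
        ∀ p ∈ s, ∀ q ∈ s, β p q = 1 := by
      intro s f hW hcard p hp q hq
      have h := heig s f hW hcard p (hW.2.1 hp) p hp q hq
      rw [hbd p] at h
      have hqp : β q p = 1 := by
        rcases h with h | h
        · exact h.symm
        · rwa [one_mul] at h
      rw [hβswap p q] at hqp
      exact inv_eq_one.mp hqp
    -- minimal support is a singleton
    have hn1 : n = 1 := by
      by_contra hne1
      have hpos : 0 < s.card := Finset.card_pos.mpr hW.1
      have h2 : 1 < s.card := by omega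
      obtain ⟨p, hp, q, hq, hpq⟩ := Finset.one_lt_card.mp h2
      obtain ⟨c, hc, hbc⟩ := hker (p - q) (sub_ne_zero.mpr hpq)
      have hβpq : β p c ≠ β q c := by
        intro h
        apply hbc
        rw [sub_eq_add_neg, hb1, hβnl, h, mul_inv_cancel]
      have hpc1 : β p c ≠ 1 := by
        intro h1
        have hq1 : β q c ≠ 1 := fun h2 => hβpq (h1.trans h2.symm)
        exact hF1 s f hW hcard c hc q hq hq1 p hp h1
      have hall : ∀ a ∈ s, β a c ≠ 1 := hF1 s f hW hcard c hc p hp hpc1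
      have hWt := hfilt s f hW c hc p hp hpc1
      rw [Finset.filter_true_of_mem hall] at hWt
      have hcardt : (s.image (fun a => c + a)).card = n := by
        rw [Finset.card_image_of_injective _ (fun x y hxy => by simpa using hxy), hcard]
      have horth' := horth _ _ hWt hcardt (c + p) (Finset.mem_image_of_mem _ hp)
        (c + q) (Finset.mem_image_of_mem _ hq)
      have hmul1 : β p c * β q c = 1 := (heig s f hW hcard c hc p hp q hq).resolve_left hβpq
      have horthpq : β p q = 1 := horth s f hW hcard p hp q hq
      have hcq : β c q = β p c := by
        rw [hβswap q c]
        exact (eq_inv_of_mul_eq_one_left hmul1).symm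
      have hexp : β (c + p) (c + q) = β p c * β p c := by
        rw [hb1, hb2, hb2, hbd, hcq, horthpq, one_mul, mul_one]
      rw [horth'] at hexp
      apply hβpq
      calc β p c = (β p c)⁻¹ := eq_inv_of_mul_eq_one_left hexp.symm
        _ = β q c := (eq_inv_of_mul_eq_one_right hmul1).symm ▸ rfl
    -- extract a basis vector in I
    have hcard1 : s.card = 1 := hcard.trans hn1
    obtain ⟨p, hps⟩ := Finset.card_eq_one.mp hcard1
    obtain ⟨hne, hsub, hf, hxsI⟩ := hW
    rw [hps, Finset.sum_singleton] at hxsI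
    have hpR : p ∈ R := hsub (by rw [hps]; exact Finset.mem_singleton_self p)
    have hfp : f p ≠ 0 := hf p (by rw [hps]; exact Finset.mem_singleton_self p)
    have hupI : u p ∈ I := by
      have h := Submodule.smul_mem I (f p)⁻¹ hxsI
      rwa [smul_smul, inv_mul_cancel₀ hfp, one_smul] at h
    -- propagation along the graph
    have hstep : ∀ x ∈ R, ∀ y ∈ R, β x y ≠ 1 → u x ∈ I → u y ∈ I := by
      intro x hx y hy hxy huxI
      have h1 : u y * u x - u x * u y ∈ I :=
        hId (u y) (Submodule.subset_span ⟨y, hy, rfl⟩) _ huxI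
      rw [hbr] at h1
      have he1 : e y x ≠ 0 := he_ne y x hxy
      have h2 : u (y + x) ∈ I := by
        have h := Submodule.smul_mem I (e y x)⁻¹ h1
        rwa [smul_smul, inv_mul_cancel₀ he1, one_smul] at h
      have h3 : u (-x) * u (y + x) - u (y + x) * u (-x) ∈ I :=
        hId (u (-x)) (Submodule.subset_span ⟨-x, hR3 x hx, rfl⟩) _ h2
      rw [hbr] at h3
      have hbyx : β (y + x) (-x) = β x y := by
        rw [hβnr, hb1, hbd, mul_one, hβswap x y, inv_inv]
      have he2 : e (-x) (y + x) ≠ 0 := he_ne _ _ (by rw [hbyx]; exact hxy)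
      have h4 : u (-x + (y + x)) ∈ I := by
        have h := Submodule.smul_mem I (e (-x) (y + x))⁻¹ h3
        rwa [smul_smul, inv_mul_cancel₀ he2, one_smul] at h
      have : -x + (y + x) = y := by abel
      rwa [this] at h4
    have hfin : ∀ b ∈ R, u b ∈ I := by
      have key : ∀ b, Relation.ReflTransGen (fun x y : G => x ∈ R ∧ y ∈ R ∧ β x y ≠ 1) p b →
          u b ∈ I := by
        intro b h
        induction h with
        | refl => exact hupI
        | tail _ h2 ih => exact hstep _ h2.1 _ h2.2.1 h2.2.2 ih
      exact fun b hb => key b (hconn p hpR b hb)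
    refine le_antisymm hIle (Submodule.span_le.mpr ?_)
    rintro _ ⟨a, haR, rfl⟩
    exact hfin a haR
end

section
/- Let (G,β,R) be a skew root system of Jordan type. Then the G-graded Jordan algebra J(R) = ⊕_{a∈R} F u_a is graded-simple: every nonzero graded ideal of J(R) equals J(R). -/
/-- Let `(G,β,R)` be a skew root system of Jordan type.  The `G`-graded Jordan algebra
`J(R) = ⊕_{a ∈ R} F u_a` (inside the twisted group algebra, with product
`x ∘ y = (xy+yx)/2`) is graded-simple: every nonzero graded ideal (i.e. an ideal spanned
by a subset of the homogeneous basis elements `u_a`, `a ∈ S ⊆ R`) equals `J(R)`. -/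
theorem skewRootJordan_graded_simple
    {G : Type*} [AddCommGroup G] {F : Type*} [Field F] [IsAlgClosed F] [CharZero F]
    {A : Type*} [Ring A] [Algebra F A]
    (β ξ : G → G → Fˣ) (hβ : IsAltBichar β)
    (hξ : IsBichar ξ) (hΨ : ∀ a b : G, ξ a b * (ξ b a)⁻¹ = β a b)
    (R : Set G) (hR : IsSkewRootJordan β R)
    (u : G → A) (hind : LinearIndependent F u) (hone : u 0 = 1)
    (hmul : ∀ a b : G, u a * u b = (ξ a b : F) • u (a + b)) :
    ∀ S : Set G, S ⊆ R →
      (∀ x ∈ Submodule.span F (u '' R), ∀ y ∈ Submodule.span F (u '' S),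
        (1/2 : F) • (x * y + y * x) ∈ Submodule.span F (u '' S)) →
      Submodule.span F (u '' S) ≠ ⊥ →
      Submodule.span F (u '' S) = Submodule.span F (u '' R) := by
  intro S hSR hIdeal hne
  have hmem : ∀ g : G, u g ∈ Submodule.span F (u '' S) → g ∈ S := by
    intro g hg
    by_contra hgS
    exact hind.notMem_span_image hgS hg
  -- S is nonempty
  obtain ⟨b, hbS⟩ : S.Nonempty := by
    rw [Set.nonempty_iff_ne_empty]
    rintro rfl
    simp at hne
  have hbR : b ∈ R := hSR hbS
  have hnbR : -b ∈ R := hR.2.1 b hbR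
  -- β 0 g = 1
  have hβ0 : ∀ g : G, β 0 g = 1 := by
    intro g
    have h := hβ.1.1 0 0 g
    rw [add_zero] at h
    exact left_eq_mul.mp h
  -- β (-b) b = 1, hence ξ (-b) b = ξ b (-b)
  have hβnb : β (-b) b = 1 := by
    have h := hβ.1.1 (-b) b b
    rw [neg_add_cancel, hβ0 b, hβ.2 b, mul_one] at h
    exact h.symm
  have hξsym : ξ (-b) b = ξ b (-b) := by
    have h := hΨ (-b) b
    rw [hβnb, mul_inv_eq_one] at h
    exact h
  -- 0 ∈ S
  have h0mem : u 0 ∈ Submodule.span F (u '' S) := by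
    have hz := hIdeal (u (-b)) (Submodule.subset_span ⟨-b, hnbR, rfl⟩)
      (u b) (Submodule.subset_span ⟨b, hbS, rfl⟩)
    have heq : (1/2 : F) • (u (-b) * u b + u b * u (-b))
        = ((ξ b (-b) : F)) • u 0 := by
      rw [hmul, hmul, neg_add_cancel, add_neg_cancel, hξsym, ← add_smul, smul_smul]
      congr 1
      field_simp
      norm_num
    rw [heq] at hz
    have := Submodule.smul_mem (Submodule.span F (u '' S)) ((ξ b (-b) : F)⁻¹) hz
    rwa [smul_smul, inv_mul_cancel₀ (Units.ne_zero _), one_smul] at this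
  have h0S : (0 : G) ∈ S := hmem 0 h0mem
  -- every a ∈ R is in S
  have hRS : ∀ a ∈ R, u a ∈ Submodule.span F (u '' S) := by
    intro a haR
    have hz := hIdeal (u a) (Submodule.subset_span ⟨a, haR, rfl⟩)
      (u 0) h0mem
    have heq : (1/2 : F) • (u a * u 0 + u 0 * u a) = u a := by
      rw [hone, mul_one, one_mul, ← two_smul F, smul_smul]
      norm_num
    rwa [heq] at hz
  refine le_antisymm (Submodule.span_mono (Set.image_mono (f := u) hSR)) ?_
  rw [Submodule.span_le]
  rintro x ⟨a, haR, rfl⟩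
  exact hRS a haR
end

section
/- Let (G,β,R) be a reduced skew root system of Jordan type with G an elementary abelian 2-group. Then the Jordan algebra J(R) is simple. -/
/-- Let `(G,β,R)` be a reduced (nonsingular) skew root system of Jordan type with `G` a
finite elementary abelian 2-group.  Then the Jordan algebra `J(R) = ⊕_{a ∈ R} F u_a`
(inside the twisted group algebra, with product `x ∘ y = (xy+yx)/2`) is simple:
every nonzero ideal equals `J(R)`. -/
theorem skewRootJordan_elementary_two_group_simple
    {G : Type*} [AddCommGroup G] [Finite G]
    {F : Type*} [Field F] [IsAlgClosed F] [CharZero F]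
    {A : Type*} [Ring A] [Algebra F A]
    (h2 : ∀ g : G, g + g = 0)
    (β ξ : G → G → Fˣ) (hβ : IsAltBichar β)
    (hξ : IsBichar ξ) (hΨ : ∀ a b : G, ξ a b * (ξ b a)⁻¹ = β a b)
    (hred : ∀ g : G, (∀ h : G, β g h = 1) → g = 0)
    (R : Set G) (hR : IsSkewRootJordan β R)
    (u : G → A) (hind : LinearIndependent F u) (hone : u 0 = 1)
    (hmul : ∀ a b : G, u a * u b = (ξ a b : F) • u (a + b)) :
    ∀ I : Submodule F A, I ≤ Submodule.span F (u '' R) →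
      (∀ x ∈ Submodule.span F (u '' R), ∀ y ∈ I, (1/2 : F) • (x * y + y * x) ∈ I) →
      I ≠ ⊥ → I = Submodule.span F (u '' R) := by
    classical
  intro I hIle hIop hIne
  -- ξ 0 b = 1 and ξ a 0 = 1
  have hξ0l : ∀ b : G, ξ 0 b = 1 := by
    intro b
    have h := hξ.1 0 0 b
    rw [add_zero] at h
    exact (left_eq_mul.mp h)
  have hξ0r : ∀ a : G, ξ a 0 = 1 := by
    intro a
    have h := hξ.2 a 0 0
    rw [add_zero] at h
    exact (left_eq_mul.mp h)
  -- ξ squares to 1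
  have hξsq : ∀ a b : G, ξ a b * ξ a b = 1 := by
    intro a b
    have h := hξ.1 a a b
    rw [h2 a, hξ0l] at h
    exact h.symm
  have hβ0l : ∀ b : G, β 0 b = 1 := by
    intro b
    have h := hβ.1.1 0 0 b
    rw [add_zero] at h
    exact (left_eq_mul.mp h)
  have hβsq : ∀ a b : G, β a b * β a b = 1 := by
    intro a b
    have h := hβ.1.1 a a b
    rw [h2 a, hβ0l] at h
    exact h.symm
  -- β takes values ±1
  have hβpm : ∀ a b : G, β a b = 1 ∨ β a b = -1 := by
    intro a b
    have h : (β a b : F) * (β a b : F) = 1 := by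
      rw [← Units.val_mul, hβsq a b, Units.val_one]
    rcases mul_self_eq_one_iff.mp h with h' | h'
    · left; exact Units.ext (by rw [h', Units.val_one])
    · right; exact Units.ext (by rw [h']; simp)
  -- β is symmetric
  have hβsymm : ∀ a b : G, β a b = β b a := by
    intro a b
    have h : β (a + b) (a + b) = 1 := hβ.2 (a + b)
    rw [hβ.1.1, hβ.1.2, hβ.1.2, hβ.2, hβ.2] at h
    rw [one_mul, mul_one] at h
    -- h : β a b * β b a = 1
    calc β a b = β a b * (β b a * β b a) := by rw [hβsq, mul_one]
    _ = (β a b * β b a) * β b a := by rw [mul_assoc]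
    _ = β b a := by rw [h, one_mul]
  -- β in terms of ξ
  have hβξ : ∀ a b : G, β a b = ξ a b * ξ b a := by
    intro a b
    rw [← hΨ a b]
    congr 1
    exact inv_eq_of_mul_eq_one_left (hξsq b a)
  -- if β a b = -1 then (ξ a b : F) = -(ξ b a : F)
  have hξskew : ∀ a b : G, β a b = -1 → (ξ a b : F) = -(ξ b a : F) := by
    intro a b h
    have h1 : (ξ a b : F) * (ξ b a : F) = -1 := by
      rw [← Units.val_mul, ← hβξ a b, h]; simp
    have h2' : (ξ b a : F) * (ξ b a : F) = 1 := by
      rw [← Units.val_mul, hξsq b a, Units.val_one]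
    calc (ξ a b : F) = (ξ a b : F) * ((ξ b a : F) * (ξ b a : F)) := by rw [h2', mul_one]
    _ = ((ξ a b : F) * (ξ b a : F)) * (ξ b a : F) := by ring
    _ = -(ξ b a : F) := by rw [h1]; ring
  have hξsymm : ∀ a b : G, β a b = 1 → (ξ a b : F) = (ξ b a : F) := by
    intro a b h
    have h1 : (ξ a b : F) * (ξ b a : F) = 1 := by
      rw [← Units.val_mul, ← hβξ a b, h, Units.val_one]
    have h2' : (ξ b a : F) * (ξ b a : F) = 1 := by
      rw [← Units.val_mul, hξsq b a, Units.val_one]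
    calc (ξ a b : F) = (ξ a b : F) * ((ξ b a : F) * (ξ b a : F)) := by rw [h2', mul_one]
    _ = ((ξ a b : F) * (ξ b a : F)) * (ξ b a : F) := by ring
    _ = (ξ b a : F) := by rw [h1, one_mul]
  have hone_ne : (1 : Fˣ) ≠ -1 := by
    intro hc
    have h' := Units.ext_iff.mp hc
    rw [Units.val_one, Units.val_neg, Units.val_one] at h'
    norm_num at h' 
  have hneq1 : ∀ a b : G, β a b = -1 → ¬ (β a b = 1) := by
    intro a b h hc
    exact hone_ne (hc ▸ h)
  -- for any g ≠ 0 there is b ∈ R with β g b = -1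
  have exb : ∀ g : G, g ≠ 0 → ∃ b ∈ R, β g b = -1 := by
    intro g hg
    by_contra hcon
    push_neg at hcon
    apply hg
    apply hred
    intro h
    have hmem : h ∈ AddSubgroup.closure R := by rw [hR.1]; trivial
    induction hmem using AddSubgroup.closure_induction with
    | mem x hx =>
      rcases hβpm g x with h' | h'
      · exact h'
      · exact absurd h' (hcon x hx)
    | zero =>
      have h := hβ.1.2 g 0 0
      rw [add_zero] at h
      exact (left_eq_mul.mp h)
    | add x y hx hy px py => rw [hβ.1.2, px, py, mul_one]
    | neg x hx px =>
      have : -x = x := by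
        have := h2 x
        rw [add_eq_zero_iff_neg_eq] at this
        exact this
      rw [this]; exact px
  -- The Jordan multiplication operator by u b
  set T : G → A →ₗ[F] A := fun b =>
    (1/2 : F) • (LinearMap.mulLeft F (u b) + LinearMap.mulRight F (u b)) with hTdef
  have hTapp : ∀ b : G, ∀ z : A, T b z = (1/2 : F) • (u b * z + z * u b) := by
    intro b z
    simp [hTdef, LinearMap.mulLeft_apply, LinearMap.mulRight_apply]
  have hTI : ∀ b ∈ R, ∀ y ∈ I, T b y ∈ I := by
    intro b hb y hy
    rw [hTapp]
    exact hIop (u b) (Submodule.subset_span ⟨b, hb, rfl⟩) y hy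
  have hTu : ∀ b a : G, T b (u a) = if β b a = 1 then (ξ b a : F) • u (b + a) else 0 := by
    intro b a
    rw [hTapp, hmul, hmul]
    rw [add_comm a b]
    rw [← add_smul]
    rcases hβpm b a with h | h
    · rw [if_pos h]
      have hs := hξsymm b a h
      rw [← hs, ← two_mul, smul_smul,
        show (1/2 : F) * (2 * (ξ b a : F)) = (ξ b a : F) by ring]
    · rw [if_neg (hneq1 b a h)]
      have hz : (ξ b a : F) + (ξ a b : F) = 0 := by
        rw [hξskew a b (by rw [hβsymm a b]; exact h)]
        ring
      rw [hz, zero_smul, smul_zero]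
  have hTTu : ∀ b a : G, T b (T b (u a)) = if β b a = 1 then (ξ b b : F) • u a else 0 := by
    intro b a
    rw [hTu]
    rcases hβpm b a with h | h
    · rw [if_pos h, if_pos h, map_smul, hTu]
      have hβba : β b (b + a) = 1 := by
        rw [hβ.1.2, hβ.2, one_mul, h]
      rw [if_pos hβba]
      have hbba : b + (b + a) = a := by
        rw [← add_assoc, h2 b, zero_add]
      rw [hbba, smul_smul]
      congr 1
      have : ξ b (b + a) = ξ b b * ξ b a := hξ.2 b b a
      rw [this]
      push_cast
      have h1 : (ξ b a : F) * (ξ b a : F) = 1 := by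
        rw [← Units.val_mul, hξsq b a, Units.val_one]
      calc (ξ b a : F) * ((ξ b b : F) * (ξ b a : F))
          = ((ξ b a : F) * (ξ b a : F)) * (ξ b b : F) := by ring
      _ = (ξ b b : F) := by rw [h1, one_mul]
    · rw [if_neg (hneq1 b a h), if_neg (hneq1 b a h), map_zero]
  -- key induction: some u a lies in I
  have key : ∀ n : ℕ, ∀ s : Finset G, s.card = n → ∀ f : G → F, ↑s ⊆ R →
      (∀ a ∈ s, f a ≠ 0) → s.Nonempty → (∑ a ∈ s, f a • u a) ∈ I → ∃ a ∈ R, u a ∈ I := by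
    intro n
    induction n using Nat.strong_induction_on with
    | _ n ih =>
      intro s hcard f hsR hf hne hmem
      obtain ⟨a0, ha0⟩ := hne
      by_cases hcard1 : s.card ≤ 1
      · have hs : s = {a0} := by
          apply Finset.eq_singleton_iff_unique_mem.mpr
          refine ⟨ha0, fun x hx => ?_⟩
          by_contra hxa
          have : 1 < s.card := Finset.one_lt_card.mpr ⟨x, hx, a0, ha0, hxa⟩
          omega
        rw [hs, Finset.sum_singleton] at hmem
        refine ⟨a0, hsR ha0, ?_⟩
        have := I.smul_mem (f a0)⁻¹ hmem
        rwa [smul_smul, inv_mul_cancel₀ (hf a0 ha0), one_smul] at this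
      · push_neg at hcard1
        obtain ⟨a1, ha1, ha1ne⟩ := Finset.exists_mem_ne hcard1 a0
        have hdiff : a0 + a1 ≠ 0 := by
          intro h
          apply ha1ne
          have : a1 = a1 + (a0 + a1) := by rw [h, add_zero]
          rw [this, ← add_assoc, add_comm a1 a0, add_assoc, h2 a1, add_zero]
        obtain ⟨b, hbR, hb⟩ := exb (a0 + a1) hdiff
        have hbsum : β b a0 * β b a1 = -1 := by
          rw [← hβ.1.2, ← hβsymm (a0 + a1) b, hb]
        set s' := s.filter (fun a => β b a = 1) with hs'def
        have hcalc : T b (T b (∑ a ∈ s, f a • u a)) = (ξ b b : F) • ∑ a ∈ s', f a • u a := by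
          rw [map_sum, map_sum, Finset.smul_sum]
          rw [hs'def, Finset.sum_filter]
          apply Finset.sum_congr rfl
          intro a ha
          rw [map_smul, map_smul, hTTu]
          rcases hβpm b a with h | h
          · rw [if_pos h, if_pos h, smul_smul, smul_smul, mul_comm]
          · rw [if_neg (hneq1 b a h), if_neg (hneq1 b a h), smul_zero]
        have hmem' : (∑ a ∈ s', f a • u a) ∈ I := by
          have h1 := hTI b hbR _ hmem
          have h2' := hTI b hbR _ h1
          rw [hcalc] at h2'
          have h3 := I.smul_mem ((ξ b b : F))⁻¹ h2'
          rwa [smul_smul, inv_mul_cancel₀ (Units.ne_zero _), one_smul] at h3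
        -- exactly one of a0, a1 survives
        have hone' : (a0 ∈ s' ∧ a1 ∉ s') ∨ (a1 ∈ s' ∧ a0 ∉ s') := by
          rcases hβpm b a0 with h | h
          · left
            constructor
            · rw [hs'def]; exact Finset.mem_filter.mpr ⟨ha0, h⟩
            · intro hmem1
              have hf1 := (Finset.mem_filter.mp hmem1).2
              rw [h, one_mul] at hbsum
              exact hneq1 b a1 hbsum hf1
          · right
            have hba1 : β b a1 = 1 := by
              rw [h] at hbsum
              have h' : (-1 : Fˣ) * (β b a1) = (-1) * 1 := by rw [mul_one]; exact hbsum
              exact mul_left_cancel h' 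
            constructor
            · rw [hs'def]; exact Finset.mem_filter.mpr ⟨ha1, hba1⟩
            · intro hmem0
              exact hneq1 b a0 h (Finset.mem_filter.mp hmem0).2
        have hsub : s' ⊆ s := Finset.filter_subset _ _
        have hssub : s' ⊂ s := by
          rcases hone' with ⟨_, hn⟩ | ⟨_, hn⟩
          · exact Finset.ssubset_iff_of_subset hsub |>.mpr ⟨a1, ha1, hn⟩
          · exact Finset.ssubset_iff_of_subset hsub |>.mpr ⟨a0, ha0, hn⟩
        have hne' : s'.Nonempty := by
          rcases hone' with ⟨hm, _⟩ | ⟨hm, _⟩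
          exacts [⟨a0, hm⟩, ⟨a1, hm⟩]
        exact ih s'.card (hcard ▸ Finset.card_lt_card hssub) s' rfl f
          (fun x hx => hsR (hsub hx)) (fun a ha => hf a (hsub ha)) hne' hmem'
  -- get a nonzero element of I and extract u a ∈ I
  obtain ⟨x, hxI, hx0⟩ := (Submodule.ne_bot_iff I).mp hIne
  obtain ⟨c, hcsupp, hcx⟩ := Finsupp.mem_span_image_iff_linearCombination F |>.mp (hIle hxI)
  have hxc : x = ∑ a ∈ c.support, c a • u a := by
    rw [← hcx, Finsupp.linearCombination_apply, Finsupp.sum]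
  have hc0 : c ≠ 0 := by
    intro h
    apply hx0
    rw [hxc, h]
    simp
  obtain ⟨a, haR, haI⟩ := key c.support.card c.support rfl c
    (Finsupp.mem_supported F c |>.mp hcsupp)
    (fun a ha => Finsupp.mem_support_iff.mp ha)
    (Finsupp.support_nonempty_iff.mpr hc0)
    (hxc ▸ hxI)
  -- 1 ∈ I
  have h1I : (1 : A) ∈ I := by
    have h := hIop (u a) (Submodule.subset_span ⟨a, haR, rfl⟩) (u a) haI
    have heq : (1/2 : F) • (u a * u a + u a * u a) = (ξ a a : F) • (1 : A) := by
      rw [hmul, h2 a, hone, ← two_smul F, smul_smul, smul_smul]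
      norm_num
    rw [heq] at h
    have h' := I.smul_mem ((ξ a a : F))⁻¹ h
    rwa [smul_smul, inv_mul_cancel₀ (Units.ne_zero _), one_smul] at h'
  -- conclude
  apply le_antisymm hIle
  rw [Submodule.span_le]
  rintro _ ⟨g, hgR, rfl⟩
  have h := hIop (u g) (Submodule.subset_span ⟨g, hgR, rfl⟩) 1 h1I
  have heq : (1/2 : F) • (u g * 1 + 1 * u g) = u g := by
    rw [mul_one, one_mul, ← two_smul F, smul_smul]
    norm_num
  rwa [heq] at h
end

section
/- Let G be a finite abelian group and (G,β,R) a skew root system of Lie type. Then the Lie algebra L(R) is semisimple; specifically, its Killing form κ satisfies κ(u_a,u_b)=0 when a+b≠0 and κ(u_a,u_{−a}) = ξ(a,−a) Σ_{b∈R} (2 − β(a,b) − β(a,b)^{-1}) ≠ 0 for all a ∈ R, hence κ is nondegenerate. -/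
lemma sum_two_sub_root_ne_zero {F : Type*} [Field F] [CharZero F]
    {ι : Type*} (s : Finset ι) (ζ : ι → F) (n : ℕ) (hn : 0 < n)
    (hζ : ∀ i ∈ s, ζ i ^ n = 1) {i0 : ι} (hi0 : i0 ∈ s) (hne : ζ i0 ≠ 1) :
    (∑ i ∈ s, ((2 : F) - ζ i - (ζ i)⁻¹)) ≠ 0 := by
  classical
  set S : Set F := (↑(s.image ζ) : Set F) with hS
  have hint : ∀ x ∈ S, IsIntegral ℚ x := by
    rintro x hx
    simp only [hS, Finset.coe_image, Set.mem_image, Finset.mem_coe] at hx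
    obtain ⟨i, hi, rfl⟩ := hx
    exact ⟨Polynomial.X ^ n - Polynomial.C 1, Polynomial.monic_X_pow_sub_C 1 hn.ne',
      by simp [hζ i hi]⟩
  let K := IntermediateField.adjoin ℚ S
  haveI : Finite S := (s.image ζ).finite_toSet
  haveI : FiniteDimensional ℚ K := IntermediateField.finiteDimensional_adjoin hint
  haveI : Algebra.IsAlgebraic ℚ K := Algebra.IsAlgebraic.of_finite ℚ K
  let φ : K →ₐ[ℚ] ℂ := IsAlgClosed.lift
  have hmem : ∀ i ∈ s, ζ i ∈ K := fun i hi =>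
    IntermediateField.subset_adjoin ℚ S (by simp [hS, Finset.mem_image]; exact ⟨i, hi, rfl⟩)
  let z : ι → K := fun i => if h : i ∈ s then ⟨ζ i, hmem i h⟩ else 1
  have hz : ∀ i ∈ s, (z i : F) = ζ i := fun i hi => by simp [z, hi]
  have hzinv : ∀ i, ((z i)⁻¹ : K) = (((z i : F))⁻¹ : F) := fun i =>
    IntermediateField.coe_inv K (z i)
  have hsum : ((∑ i ∈ s, ((2 : K) - z i - (z i)⁻¹) : K) : F)
      = ∑ i ∈ s, ((2 : F) - ζ i - (ζ i)⁻¹) := by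
    push_cast
    refine Finset.sum_congr rfl fun i hi => ?_
    rw [hz i hi]
    norm_cast
  intro hcon
  have hS0 : (∑ i ∈ s, ((2 : K) - z i - (z i)⁻¹) : K) = 0 := by
    have : ((∑ i ∈ s, ((2 : K) - z i - (z i)⁻¹) : K) : F) = ((0 : K) : F) := by
      rw [hsum, hcon]; rfl
    exact Subtype.coe_injective this
  -- map to ℂ
  set w : ι → ℂ := fun i => φ (z i) with hw
  have hwn : ∀ i ∈ s, (w i) ^ n = 1 := by
    intro i hi
    rw [hw, ← map_pow, ← map_one φ]
    congr 1
    apply Subtype.coe_injective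
    push_cast
    rw [hz i hi, hζ i hi]
  have habs : ∀ i ∈ s, ‖w i‖ = 1 := fun i hi => by
    have := Complex.norm_eq_one_of_pow_eq_one (hwn i hi) hn.ne'
    simpa using this
  have hCsum : (∑ i ∈ s, ((2 : ℂ) - w i - (w i)⁻¹)) = 0 := by
    have := congrArg φ hS0
    rw [map_sum, map_zero] at this
    rw [← this]
    refine Finset.sum_congr rfl fun i hi => ?_
    rw [map_sub, map_sub, map_inv₀, map_ofNat]
  have hterm : ∀ i ∈ s, ((2 : ℂ) - w i - (w i)⁻¹) = (((2 : ℝ) - 2 * (w i).re : ℝ) : ℂ) := by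
    intro i hi
    rw [Complex.inv_eq_conj (habs i hi)]
    have := Complex.add_conj (w i)
    push_cast
    rw [sub_sub, this]
    push_cast
    ring
  have hRsum : (∑ i ∈ s, ((2 : ℝ) - 2 * (w i).re)) = 0 := by
    have : ((∑ i ∈ s, ((2 : ℝ) - 2 * (w i).re) : ℝ) : ℂ) = 0 := by
      push_cast
      rw [← hCsum]
      exact (Finset.sum_congr rfl fun i hi => by rw [hterm i hi]; push_cast; ring).symm
    exact_mod_cast this
  have hpos : 0 < ∑ i ∈ s, ((2 : ℝ) - 2 * (w i).re) := by
    refine Finset.sum_pos' (fun i hi => ?_) ⟨i0, hi0, ?_⟩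
    · have h1 : (w i).re ≤ 1 := by
        have := Complex.abs_re_le_norm (w i)
        rw [habs i hi] at this
        exact (abs_le.mp this).2
      linarith
    · have hwne : w i0 ≠ 1 := by
        intro h
        apply hne
        have h2 : φ (z i0) = φ 1 := by rw [map_one]; exact h
        have : z i0 = 1 := φ.injective h2
        rw [← hz i0 hi0, this]
        rfl
      have h1 : (w i0).re < 1 := by
        rcases lt_or_eq_of_le (by
          have := Complex.abs_re_le_norm (w i0)
          rw [habs i0 hi0] at this
          exact (abs_le.mp this).2) with h | h
        · exact h
        · exfalso
          apply hwne
          have habs2 := habs i0 hi0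
          have hnsq : Complex.normSq (w i0) = 1 := by
            have := Complex.sq_norm (w i0)
            rw [habs2] at this
            simpa using this.symm
          have him : (w i0).im = 0 := by
            rw [Complex.normSq_apply] at hnsq
            nlinarith [sq_nonneg ((w i0).im)]
          simp [Complex.ext_iff, h, him]
      linarith
  linarith

attribute [local instance 100] LieRing.ofAssociativeRing

/-- Let `G` be a finite abelian group and `(G,β,R)` a skew root system of Lie type, `ξ` a
bicharacter with `Ψ(ξ)=β`, and `L = L(R) = ⊕_{a∈R} F u_a` the corresponding Lie subalgebra
of the twisted group algebra `A` (with commutator bracket).  Then `L(R)` is a semisimple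
Lie algebra; specifically its Killing form `κ` satisfies `κ(u_a,u_b) = 0` for `a+b ≠ 0`
and `κ(u_a,u_{-a}) = ξ(a,-a) ∑_{b∈R} (2 - β(a,b) - β(a,b)⁻¹) ≠ 0`, hence `κ` is
nondegenerate. -/
theorem skewRootLie_semisimple
    {G : Type*} [AddCommGroup G] [Finite G]
    {F : Type*} [Field F] [IsAlgClosed F] [CharZero F]
    {A : Type*} [Ring A] [Algebra F A]
    (β ξ : G → G → Fˣ) (hβ : IsAltBichar β) (hβnt : ∃ g h : G, β g h ≠ 1)
    (hξ : IsBichar ξ) (hΨ : ∀ a b : G, ξ a b * (ξ b a)⁻¹ = β a b)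
    (R : Set G) (hR : IsSkewRootLie β R)
    (u : G → A) (hind : LinearIndependent F u)
    (hspan : Submodule.span F (Set.range u) = ⊤) (hone : u 0 = 1)
    (hmul : ∀ a b : G, u a * u b = (ξ a b : F) • u (a + b))
    (L : LieSubalgebra F A)
    (hL : (L : Submodule F A) = Submodule.span F (u '' R)) :
    LieAlgebra.IsSemisimple F ↥L ∧
    LinearMap.BilinForm.Nondegenerate (killingForm F ↥L) ∧
    (∀ a ∈ R, ∀ b ∈ R, ∀ (ha : u a ∈ L) (hb : u b ∈ L), a + b ≠ 0 →
      killingForm F ↥L ⟨u a, ha⟩ ⟨u b, hb⟩ = 0) ∧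
    (∀ a ∈ R, ∀ (ha : u a ∈ L) (hb : u (-a) ∈ L),
      killingForm F ↥L ⟨u a, ha⟩ ⟨u (-a), hb⟩ =
        (ξ a (-a) : F) * ∑ᶠ b ∈ R, ((2 : F) - (β a b : F) - (((β a b)⁻¹ : Fˣ) : F)) ∧
      killingForm F ↥L ⟨u a, ha⟩ ⟨u (-a), hb⟩ ≠ 0) := by
  classical
  haveI : Fintype G := Fintype.ofFinite G
  haveI : Fintype ↥R := Fintype.ofFinite ↥R
  obtain ⟨⟨hβl, hβr⟩, hβalt⟩ := hβ
  obtain ⟨hRnt, hRgen, hRneg, hRadd⟩ := hR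
  have hξl := hξ.1
  have hξr := hξ.2
  -- basic identities
  have hξ0l : ∀ c : G, ξ 0 c = 1 := fun c => by
    have h := hξl 0 0 c
    rw [add_zero] at h
    exact (mul_left_cancel (a := ξ 0 c) (by rw [mul_one, ← h])).symm
  have hξ0r : ∀ c : G, ξ c 0 = 1 := fun c => by
    have h := hξr c 0 0
    rw [add_zero] at h
    exact (mul_left_cancel (a := ξ c 0) (by rw [mul_one, ← h])).symm
  have hβ0r : ∀ a : G, β a 0 = 1 := fun a => by
    have h := hβr a 0 0
    rw [add_zero] at h
    exact (mul_left_cancel (a := β a 0) (by rw [mul_one, ← h])).symm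
  have hβneg : ∀ a : G, β a (-a) = 1 := fun a => by
    have h := hβr a a (-a)
    rw [add_neg_cancel, hβ0r, hβalt, one_mul] at h
    exact h.symm
  have hβsymm : ∀ a c : G, β c a = (β a c)⁻¹ := fun a c => by
    have h : β a c * β c a = 1 := by
      rw [← hΨ a c, ← hΨ c a]
      group
    rw [eq_comm, inv_eq_iff_mul_eq_one]
    rw [h]
  have hξneg : ∀ a : G, ξ (-a) a = ξ a (-a) := fun a => by
    have h := hΨ a (-a)
    rw [hβneg a, mul_inv_eq_one] at h
    exact h.symm
  have hbrk : ∀ a b : G, u a * u b - u b * u a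
      = (((ξ a b : F)) - ((ξ b a : F))) • u (a + b) := fun a b => by
    rw [hmul, hmul, add_comm b a, sub_smul]
  have hmemL : ∀ c ∈ R, u c ∈ L := fun c hc => by
    rw [← LieSubalgebra.mem_toSubmodule, hL]
    exact Submodule.subset_span ⟨c, hc, rfl⟩
  -- finite dimensionality
  haveI : Module.Finite F A := ⟨hspan ▸ Submodule.fg_span (Set.finite_range u)⟩
  haveI : Module.Finite F ↥L := by
    show Module.Finite F ↥(L : Submodule F A)
    infer_instance
  -- the basis of L indexed by R
  have hR' : LinearIndependent F (u ∘ (Subtype.val : R → G)) :=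
    hind.comp _ Subtype.val_injective
  have hLeq : (L : Submodule F A)
      = Submodule.span F (Set.range (u ∘ (Subtype.val : R → G))) := by
    rw [hL, Set.range_comp, Subtype.range_val]
  let B : Module.Basis R F ↥L := (Module.Basis.span hR').map (LinearEquiv.ofEq _ _ hLeq.symm)
  have hB : ∀ c : ↥R, ((B c : ↥L) : A) = u c := fun c => by
    have h1 : ((B c : ↥L) : A)
        = ((Module.Basis.span hR' c : ↥(Submodule.span F (Set.range (u ∘ (Subtype.val : R → G))))) : A) := by
      simp only [B, Module.Basis.map_apply]
      rfl
    rw [h1]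
    exact congrArg Subtype.val (Module.Basis.span_apply hR' c)
  -- the key computation of iterated brackets
  have key : ∀ (a b : G) (ha : u a ∈ L) (hb : u b ∈ L) (c : ↥R),
      ((((LieAlgebra.ad F ↥L ⟨u a, ha⟩) ∘ₗ (LieAlgebra.ad F ↥L ⟨u b, hb⟩)) (B c) : ↥L) : A)
        = ((((ξ b c : F)) - ((ξ (c : G) b : F)))
            * (((ξ a (b + c) : F)) - ((ξ (b + (c : G)) a : F)))) • u (a + (b + c)) := by
    intro a b ha hb c
    have h1 : ((⁅(⟨u b, hb⟩ : ↥L), B c⁆ : ↥L) : A)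
        = (((ξ b (c : G) : F)) - ((ξ (c : G) b : F))) • u (b + c) := by
      rw [LieSubalgebra.coe_bracket, Ring.lie_def, hB, hbrk]
    rw [LinearMap.comp_apply, LieAlgebra.ad_apply, LieAlgebra.ad_apply,
      LieSubalgebra.coe_bracket, Ring.lie_def, h1, mul_smul_comm, smul_mul_assoc,
      ← smul_sub, hbrk, smul_smul]
  -- the trace formula
  have htr : ∀ (a b : G) (ha : u a ∈ L) (hb : u b ∈ L),
      killingForm F ↥L ⟨u a, ha⟩ ⟨u b, hb⟩
        = ∑ c : ↥R, B.repr (((LieAlgebra.ad F ↥L ⟨u a, ha⟩)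
            ∘ₗ (LieAlgebra.ad F ↥L ⟨u b, hb⟩)) (B c)) c := by
    intro a b ha hb
    rw [killingForm_apply_apply, LinearMap.trace_eq_matrix_trace F B, Matrix.trace]
    refine Finset.sum_congr rfl fun c _ => ?_
    rw [Matrix.diag_apply, LinearMap.toMatrix_apply]
  -- off-diagonal vanishing
  have hoff : ∀ (a b : G), a ∈ R → b ∈ R → ∀ (ha : u a ∈ L) (hb : u b ∈ L), a + b ≠ 0 →
      killingForm F ↥L ⟨u a, ha⟩ ⟨u b, hb⟩ = 0 := by
    intro a b haR hbR ha hb hab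
    rw [htr a b ha hb]
    apply Finset.sum_eq_zero
    intro c _
    by_cases hk0 : (((ξ b (c : G) : F)) - ((ξ (c : G) b : F)))
        * (((ξ a (b + c) : F)) - ((ξ (b + (c : G)) a : F))) = 0
    · have hz : ((LieAlgebra.ad F ↥L ⟨u a, ha⟩) ∘ₗ (LieAlgebra.ad F ↥L ⟨u b, hb⟩)) (B c) = 0 := by
        apply Subtype.coe_injective
        beta_reduce
        rw [key a b ha hb c, hk0, zero_smul]
        rfl
      rw [hz, map_zero]
      rfl
    · obtain ⟨hk1, hk2⟩ := mul_ne_zero_iff.mp hk0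
      have hβbc : β b (c : G) ≠ 1 := by
        intro h
        apply hk1
        have h2 := hΨ b (c : G)
        rw [h, mul_inv_eq_one] at h2
        rw [h2, sub_self]
      have hbc : b + (c : G) ∈ R := hRadd b hbR c c.2 hβbc
      have hβad : β a (b + (c : G)) ≠ 1 := by
        intro h
        apply hk2
        have h2 := hΨ a (b + (c : G))
        rw [h, mul_inv_eq_one] at h2
        rw [h2, sub_self]
      have had : a + (b + (c : G)) ∈ R := hRadd a haR _ hbc hβad
      have hd : (⟨a + (b + (c : G)), had⟩ : ↥R) ≠ c := by
        intro h
        apply hab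
        have h2 : a + (b + (c : G)) = (c : G) := congrArg Subtype.val h
        rw [← add_assoc] at h2
        have := add_right_cancel (b := (c : G)) (a := a + b) (c := 0)
          (by rw [zero_add]; exact h2)
        exact this
      have hrw : ((LieAlgebra.ad F ↥L ⟨u a, ha⟩) ∘ₗ (LieAlgebra.ad F ↥L ⟨u b, hb⟩)) (B c)
          = ((((ξ b (c : G) : F)) - ((ξ (c : G) b : F)))
            * (((ξ a (b + c) : F)) - ((ξ (b + (c : G)) a : F)))) • B ⟨a + (b + (c : G)), had⟩ := by
        apply Subtype.coe_injective
        beta_reduce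
        rw [key a b ha hb c]
        have h2 : ((((((ξ b (c : G) : F)) - ((ξ (c : G) b : F)))
            * (((ξ a (b + c) : F)) - ((ξ (b + (c : G)) a : F)))) • B ⟨a + (b + (c : G)), had⟩ : ↥L) : A)
            = ((((ξ b (c : G) : F)) - ((ξ (c : G) b : F)))
            * (((ξ a (b + c) : F)) - ((ξ (b + (c : G)) a : F)))) • ((B ⟨a + (b + (c : G)), had⟩ : ↥L) : A) := rfl
        rw [h2, hB]
      rw [hrw, map_smul, Finsupp.smul_apply, Module.Basis.repr_self,
        Finsupp.single_apply, if_neg hd, smul_zero]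
  -- diagonal terms
  have hdiagc : ∀ (a : G), a ∈ R → ∀ (ha : u a ∈ L) (hb : u (-a) ∈ L) (c : ↥R),
      B.repr (((LieAlgebra.ad F ↥L ⟨u a, ha⟩)
          ∘ₗ (LieAlgebra.ad F ↥L ⟨u (-a), hb⟩)) (B c)) c
        = (ξ a (-a) : F) * ((2 : F) - ((β a (c : G) : F)) - (((β a (c : G))⁻¹ : Fˣ) : F)) := by
    intro a haR ha hb c
    have scalar : ∀ p q s : F, p ≠ 0 → q ≠ 0 →
        (p⁻¹ - q⁻¹) * (s * p - s * q) = s * (2 - p * q⁻¹ - q * p⁻¹) := by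
      intro p q s hp hq
      field_simp
      ring
    have hrw : ((LieAlgebra.ad F ↥L ⟨u a, ha⟩) ∘ₗ (LieAlgebra.ad F ↥L ⟨u (-a), hb⟩)) (B c)
        = ((((ξ (-a) (c : G) : F)) - ((ξ (c : G) (-a) : F)))
          * (((ξ a (-a + c) : F)) - ((ξ (-a + (c : G)) a : F)))) • B c := by
      apply Subtype.coe_injective
      beta_reduce
      rw [key a (-a) ha hb c]
      have h2 : ((((((ξ (-a) (c : G) : F)) - ((ξ (c : G) (-a) : F)))
          * (((ξ a (-a + c) : F)) - ((ξ (-a + (c : G)) a : F)))) • B c : ↥L) : A)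
          = ((((ξ (-a) (c : G) : F)) - ((ξ (c : G) (-a) : F)))
          * (((ξ a (-a + c) : F)) - ((ξ (-a + (c : G)) a : F)))) • ((B c : ↥L) : A) := rfl
      rw [h2, hB, add_neg_cancel_left]
    rw [hrw, map_smul, Finsupp.smul_apply, Module.Basis.repr_self,
      Finsupp.single_apply, if_pos rfl, smul_eq_mul, mul_one]
    have hpa : (ξ (-a) (c : G) : F) = ((ξ a (c : G) : F))⁻¹ := by
      have h := hξl (-a) a (c : G)
      rw [neg_add_cancel, hξ0l] at h
      have h2 : (ξ (-a) (c : G) : F) * (ξ a (c : G) : F) = 1 := by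
        simpa using congrArg Units.val h.symm
      exact eq_inv_of_mul_eq_one_left h2
    have hqa : (ξ (c : G) (-a) : F) = ((ξ (c : G) a : F))⁻¹ := by
      have h := hξr (c : G) (-a) a
      rw [neg_add_cancel, hξ0r] at h
      have h2 : (ξ (c : G) (-a) : F) * (ξ (c : G) a : F) = 1 := by
        simpa using congrArg Units.val h.symm
      exact eq_inv_of_mul_eq_one_left h2
    have hsp : (ξ a (-a + (c : G)) : F) = (ξ a (-a) : F) * (ξ a (c : G) : F) := by
      have h := hξr a (-a) (c : G)
      simpa using congrArg Units.val h
    have hqs : (ξ (-a + (c : G)) a : F) = (ξ a (-a) : F) * (ξ (c : G) a : F) := by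
      have h := hξl (-a) (c : G) a
      rw [hξneg a] at h
      simpa using congrArg Units.val h
    have hβval : ((β a (c : G) : F)) = (ξ a (c : G) : F) * ((ξ (c : G) a : F))⁻¹ := by
      have h2 := congrArg Units.val (hΨ a (c : G))
      rw [Units.val_mul, Units.val_inv_eq_inv_val] at h2
      exact h2.symm
    have hβinv : (((β a (c : G))⁻¹ : Fˣ) : F) = (ξ (c : G) a : F) * ((ξ a (c : G) : F))⁻¹ := by
      have h := hΨ (c : G) a
      rw [hβsymm a (c : G)] at h
      have h2 := congrArg Units.val h
      rw [Units.val_mul, Units.val_inv_eq_inv_val] at h2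
      exact h2.symm
    rw [hpa, hqa, hsp, hqs, hβval, hβinv]
    exact scalar _ _ _ (Units.ne_zero _) (Units.ne_zero _)
  -- conversion of the finsum
  have hfin : ∀ a : G, (∑ᶠ b ∈ R, ((2 : F) - (β a b : F) - (((β a b)⁻¹ : Fˣ) : F)))
      = ∑ c : ↥R, ((2 : F) - ((β a (c : G) : F)) - (((β a (c : G))⁻¹ : Fˣ) : F)) := by
    intro a
    have h1 : (∑ᶠ b ∈ R, ((2 : F) - (β a b : F) - (((β a b)⁻¹ : Fˣ) : F)))
        = ∑ b ∈ R.toFinset, ((2 : F) - (β a b : F) - (((β a b)⁻¹ : Fˣ) : F)) := by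
      rw [← finsum_mem_coe_finset, Set.coe_toFinset]
    rw [h1, Finset.sum_subtype R.toFinset (fun x => Set.mem_toFinset)]
  -- the diagonal value
  have hdiag : ∀ (a : G), a ∈ R → ∀ (ha : u a ∈ L) (hb : u (-a) ∈ L),
      killingForm F ↥L ⟨u a, ha⟩ ⟨u (-a), hb⟩
        = (ξ a (-a) : F) * ∑ᶠ b ∈ R, ((2 : F) - (β a b : F) - (((β a b)⁻¹ : Fˣ) : F)) := by
    intro a haR ha hb
    rw [htr a (-a) ha hb, hfin a, Finset.mul_sum]
    exact Finset.sum_congr rfl fun c _ => hdiagc a haR ha hb c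
  -- nonvanishing of the sum
  have hnz : ∀ a ∈ R, (∑ c : ↥R, ((2 : F) - ((β a (c : G) : F))
      - (((β a (c : G))⁻¹ : Fˣ) : F))) ≠ 0 := by
    intro a haR
    obtain ⟨h0, hh0⟩ := hRnt a haR
    have hex : ∃ c ∈ R, β a c ≠ 1 := by
      by_contra hcon
      push_neg at hcon
      let f : G →+ Additive Fˣ := AddMonoidHom.mk' (fun g => Additive.ofMul (β a g))
        (fun x y => by
          simp only [hβr a x y]
          rfl)
      have hle : AddSubgroup.closure R ≤ f.ker := by
        rw [AddSubgroup.closure_le]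
        intro c hc
        simp only [SetLike.mem_coe, AddMonoidHom.mem_ker]
        show Additive.ofMul (β a c) = 0
        rw [hcon c hc]
        rfl
      rw [hRgen] at hle
      apply hh0
      have := hle (AddSubgroup.mem_top h0)
      rw [AddMonoidHom.mem_ker] at this
      have h2 : Additive.ofMul (β a h0) = 0 := this
      exact h2
    obtain ⟨c0, hc0R, hc0⟩ := hex
    have hpow : ∀ (m : ℕ) (c : G), β a (m • c) = β a c ^ m := by
      intro m
      induction m with
      | zero => intro c; rw [zero_smul, hβ0r, pow_zero]
      | succ n ih => intro c; rw [succ_nsmul, hβr, ih, pow_succ]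
    have hζ : ∀ c : ↥R, ((β a (c : G) : F)) ^ Fintype.card G = 1 := by
      intro c
      have h1 : β a (c : G) ^ Fintype.card G = 1 := by
        rw [← hpow, card_nsmul_eq_zero, hβ0r]
      simpa using congrArg Units.val h1
    have hinv : ∀ c : ↥R, (((β a (c : G))⁻¹ : Fˣ) : F) = ((β a (c : G) : F))⁻¹ :=
      fun c => Units.val_inv_eq_inv_val _
    have := sum_two_sub_root_ne_zero (Finset.univ (α := ↥R))
      (fun c => ((β a (c : G) : F))) (Fintype.card G) Fintype.card_pos
      (fun c _ => hζ c) (Finset.mem_univ (⟨c0, hc0R⟩ : ↥R))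
      (fun h => hc0 (Units.ext h))
    intro hcon
    apply this
    rw [← hcon]
    exact Finset.sum_congr rfl fun c _ => by rw [hinv c]
  -- identify B with the u's
  have hBc : ∀ (c : ↥R) (hc : u (c : G) ∈ L), B c = ⟨u (c : G), hc⟩ :=
    fun c hc => Subtype.coe_injective (hB c)
  -- nondegeneracy
  have hndL : LinearMap.SeparatingLeft (killingForm F ↥L) := by
    intro x hx
    have hrepr : ∀ c : ↥R, B.repr x c = 0 := by
      intro c
      have hnegc : -(c : G) ∈ R := hRneg _ c.2
      have hy := hx (B ⟨-(c : G), hnegc⟩)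
      rw [← B.sum_repr x, LinearMap.BilinForm.sum_left] at hy
      rw [Finset.sum_eq_single c] at hy
      · rw [LinearMap.BilinForm.smul_left] at hy
        have hval : killingForm F ↥L (B c) (B ⟨-(c : G), hnegc⟩) ≠ 0 := by
          rw [hBc c (hmemL _ c.2), hBc ⟨-(c : G), hnegc⟩ (hmemL _ hnegc),
            hdiag (c : G) c.2 (hmemL _ c.2) (hmemL _ hnegc), hfin]
          exact mul_ne_zero (Units.ne_zero _) (hnz _ c.2)
        exact (mul_eq_zero.mp hy).resolve_right hval
      · intro d _ hdc
        rw [LinearMap.BilinForm.smul_left,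
          hBc d (hmemL _ d.2), hBc ⟨-(c : G), hnegc⟩ (hmemL _ hnegc),
          hoff (d : G) (-(c : G)) d.2 hnegc (hmemL _ d.2) (hmemL _ hnegc)
            (by
              intro h
              apply hdc
              apply Subtype.coe_injective
              have : (d : G) = (c : G) := by
                have := add_eq_zero_iff_eq_neg.mp h
                rw [this, neg_neg]
              exact this),
          mul_zero]
      · intro h
        exact absurd (Finset.mem_univ c) h
    have := B.sum_repr x
    rw [Finset.sum_congr rfl (fun c _ => by rw [hrepr c, zero_smul])] at this
    rw [← this, Finset.sum_const_zero]
  have hnd : (killingForm F ↥L).Nondegenerate :=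
    ⟨hndL, fun y hy => hndL y (fun x => by rw [LieModule.traceForm_comm]; exact hy x)⟩
  -- IsKilling and semisimplicity
  haveI : LieAlgebra.IsKilling F ↥L := by
    constructor
    rw [LieSubmodule.eq_bot_iff]
    intro m hm
    rw [LieIdeal.mem_killingCompl] at hm
    apply hnd.1 m
    intro y
    rw [LieModule.traceForm_comm]
    exact hm y trivial
  refine ⟨inferInstance, hnd, ?_, ?_⟩
  · intro a haR b hbR ha hb hab
    exact hoff a b haR hbR ha hb hab
  · intro a haR ha hb
    refine ⟨hdiag a haR ha hb, ?_⟩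
    rw [hdiag a haR ha hb, hfin]
    exact mul_ne_zero (Units.ne_zero _) (hnz a haR)
end

section
/- Let G be a finite abelian group and (G,β,R) a skew root system of Jordan type. Then the canonical symmetric bilinear form τ(u,v) = tr L(u∘v) on J(R) is nondegenerate; in particular τ(u_g, u_h) = 0 when g+h ≠ 0 and τ(u_g, u_{−g}) = ξ(−g,g) · dim J(R) ≠ 0, and every u_g is invertible in J(R) with inverse ξ(g,g) u_{−g}. Hence the grading on J(R) is a multiplicity free division grading. -/
/-- The Jordan multiplication operator `L(x) : y ↦ x ∘ y = (xy + yx)/2` on an associative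
`F`-algebra. -/
noncomputable def jordanOp (F : Type*) [Field F] {A : Type*} [Ring A] [Algebra F A]
    (x : A) : A →ₗ[F] A :=
  (1/2 : F) • (LinearMap.mulLeft F x + LinearMap.mulRight F x)

section Helpers

variable {F : Type*} [Field F] {A : Type*} [Ring A] [Algebra F A]

lemma jordanOp_apply (x y : A) : jordanOp F x y = (1/2 : F) • (x * y + y * x) := rfl

/-- bundled bilinear version -/
noncomputable def jordanOpL (F : Type*) [Field F] (A : Type*) [Ring A] [Algebra F A] :
    A →ₗ[F] A →ₗ[F] A :=
  (1/2 : F) • (LinearMap.mul F A + (LinearMap.mul F A).flip)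

lemma jordanOpL_apply (x : A) : jordanOpL F A x = jordanOp F x := by
  ext y
  simp [jordanOpL, jordanOp, LinearMap.mul_apply']

lemma jordanOp_smul_left (c : F) (x : A) : jordanOp F (c • x) = c • jordanOp F x := by
  rw [← jordanOpL_apply, map_smul, jordanOpL_apply]

lemma jordanOp_comm (x y : A) : jordanOp F x y = jordanOp F y x := by
  rw [jordanOp_apply, jordanOp_apply, add_comm]

end Helpers

/-- Let `G` be a finite abelian group and `(G,β,R)` a skew root system of Jordan type,
`ξ` a bicharacter with `Ψ(ξ)=β`, and `J = J(R) = ⊕_{a∈R} F u_a` the corresponding Jordan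
subalgebra of the twisted group algebra.  The canonical symmetric bilinear form
`τ(u,v) = tr L(u ∘ v)` on `J(R)` is nondegenerate; in particular `τ(u_g,u_h) = 0` for
`g+h ≠ 0`, `τ(u_g,u_{-g}) = ξ(-g,g) · dim J(R) ≠ 0`, and every `u_g` is invertible in the
Jordan algebra `J(R)` with inverse `ξ(g,g) u_{-g}`; hence the grading on `J(R)` is a
multiplicity free division grading. -/
theorem skewRootJordan_trace_form_nondegenerate
    {G : Type*} [AddCommGroup G] [Finite G]
    {F : Type*} [Field F] [IsAlgClosed F] [CharZero F]
    {A : Type*} [Ring A] [Algebra F A]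
    (β ξ : G → G → Fˣ) (hβ : IsAltBichar β)
    (hξ : IsBichar ξ) (hΨ : ∀ a b : G, ξ a b * (ξ b a)⁻¹ = β a b)
    (R : Set G) (hR : IsSkewRootJordan β R)
    (u : G → A) (hind : LinearIndependent F u) (hone : u 0 = 1)
    (hmul : ∀ a b : G, u a * u b = (ξ a b : F) • u (a + b))
    (J : Submodule F A) (hJ : J = Submodule.span F (u '' R)) :
    (∀ g ∈ R, ∀ h ∈ R, g + h ≠ 0 →
      ∀ (hst : ∀ x ∈ J, jordanOp F (jordanOp F (u g) (u h)) x ∈ J),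
        LinearMap.trace F ↥J ((jordanOp F (jordanOp F (u g) (u h))).restrict hst) = 0) ∧
    (∀ g ∈ R, ∀ (hst : ∀ x ∈ J, jordanOp F (jordanOp F (u g) (u (-g))) x ∈ J),
        LinearMap.trace F ↥J ((jordanOp F (jordanOp F (u g) (u (-g)))).restrict hst) =
          (ξ (-g) g : F) * (Nat.card R : F) ∧
        LinearMap.trace F ↥J ((jordanOp F (jordanOp F (u g) (u (-g)))).restrict hst) ≠ 0) ∧
    (∀ g ∈ R, jordanOp F (u g) ((ξ g g : F) • u (-g)) = 1 ∧
        jordanOp F (jordanOp F (u g) (u g)) ((ξ g g : F) • u (-g)) = u g) ∧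
    (∀ x ∈ J, x ≠ 0 → ∃ y ∈ J,
      ∀ (hst : ∀ z ∈ J, jordanOp F (jordanOp F x y) z ∈ J),
        LinearMap.trace F ↥J ((jordanOp F (jordanOp F x y)).restrict hst) ≠ 0) := by
  classical
  haveI : Fintype ↥R := Fintype.ofFinite _
  -- bicharacter identities
  have hξ0l : ∀ b : G, ξ 0 b = 1 := by
    intro b
    have h := hξ.1 0 0 b
    rw [add_zero] at h
    have : ξ 0 b * 1 = ξ 0 b * ξ 0 b := by rw [mul_one, ← h]
    exact (mul_left_cancel this).symm
  have hξ0r : ∀ a : G, ξ a 0 = 1 := by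
    intro a
    have h := hξ.2 a 0 0
    rw [add_zero] at h
    have : ξ a 0 * 1 = ξ a 0 * ξ a 0 := by rw [mul_one, ← h]
    exact (mul_left_cancel this).symm
  have hβ0r : ∀ a : G, β a 0 = 1 := by
    intro a
    have h := hβ.1.2 a 0 0
    rw [add_zero] at h
    have : β a 0 * 1 = β a 0 * β a 0 := by rw [mul_one, ← h]
    exact (mul_left_cancel this).symm
  have hβneg : ∀ g : G, β g (-g) = 1 := by
    intro g
    have h := hβ.1.2 g g (-g)
    rw [add_neg_cancel, hβ0r, hβ.2] at h
    rw [one_mul] at h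
    exact h.symm
  have hξsymm : ∀ g : G, ξ g (-g) = ξ (-g) g := by
    intro g
    have h := hΨ g (-g)
    rw [hβneg] at h
    exact mul_inv_eq_one.mp h
  have hξinv : ∀ g : G, ξ g g * ξ g (-g) = 1 := by
    intro g
    have h := hξ.2 g g (-g)
    rw [add_neg_cancel, hξ0r] at h
    exact h.symm
  -- multiplication formula for the Jordan product
  have humul : ∀ s t : G, jordanOp F (u s) (u t)
      = ((1/2 : F) * ((ξ s t : F) + (ξ t s : F))) • u (s + t) := by
    intro s t
    rw [jordanOp_apply, hmul s t, hmul t s, add_comm t s, ← add_smul, smul_smul]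
  have hmemJ : ∀ a ∈ R, u a ∈ J := by
    intro a ha
    rw [hJ]
    exact Submodule.subset_span ⟨a, ha, rfl⟩
  set W := Submodule.span F (Set.range u) with hW
  let bW : Module.Basis G F ↥W := Module.Basis.span hind
  have hbW : ∀ t : G, (bW t : A) = u t := fun t => congrArg Subtype.val (Module.Basis.span_apply hind t)
  have hJle : J ≤ W := by
    rw [hJ, hW]
    exact Submodule.span_mono (Set.image_subset_range u R)
  have hJW : ∀ v ∈ J, v ∈ W := fun v hv => hJle hv
  -- coordinate computation in W
  have hcoord : ∀ (v : A) (hv : v ∈ W) (t a : G) (c : F), v = c • u t →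
      bW.repr ⟨v, hv⟩ a = if t = a then c else 0 := by
    rintro v hv t a c rfl
    have h1 : (⟨c • u t, hv⟩ : ↥W) = c • bW t := by
      apply Subtype.ext
      simp [hbW]
    rw [h1, map_smul, Module.Basis.repr_self]
    simp [Finsupp.single_apply]
  -- basis of J
  have hRrange : J = Submodule.span F (Set.range (u ∘ (Subtype.val : R → G))) := by
    rw [hJ, Set.range_comp, Subtype.range_coe]
  let b : Module.Basis ↥R F ↥J :=
    (Module.Basis.span (hind.comp Subtype.val Subtype.val_injective)).map
      (LinearEquiv.ofEq _ _ hRrange.symm)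
  have hb : ∀ a : ↥R, (b a : A) = u ↑a := by
    intro a
    simp only [b, Module.Basis.map_apply, LinearEquiv.coe_ofEq_apply]
    exact congrArg Subtype.val (Module.Basis.span_apply _ a)
  -- compatibility of coordinates
  have hcompat : ∀ (v : A) (hv : v ∈ J) (a : ↥R),
      b.repr ⟨v, hv⟩ a = bW.repr ⟨v, hJW v hv⟩ (a : G) := by
    intro v hv a
    have key : (Finsupp.lapply a).comp (b.repr : ↥J →ₗ[F] (↥R →₀ F))
        = (Finsupp.lapply (a : G)).comp
            ((bW.repr : ↥W →ₗ[F] (G →₀ F)).comp (Submodule.inclusion hJle)) := by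
      apply Module.Basis.ext b
      intro i
      simp only [LinearMap.comp_apply, LinearEquiv.coe_coe, Module.Basis.repr_self,
        Finsupp.lapply_apply]
      have h2 : (Submodule.inclusion hJle) (b i) = (⟨u ↑i, hJW _ ((hb i) ▸ (b i).2)⟩ : ↥W) := by
        apply Subtype.ext
        simp [hb]
      rw [h2, hcoord (u ↑i) _ ↑i ↑a 1 (one_smul F (u ↑i)).symm]
      rw [Finsupp.single_apply]
      by_cases h : i = a
      · simp [h]
      · rw [if_neg h, if_neg (fun hc => h (Subtype.ext hc))]
    have := congrArg (fun φ => φ (⟨v, hv⟩ : ↥J)) key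
    exact this
  -- trace formula
  have htrace : ∀ (f : A →ₗ[F] A) (hst : ∀ x ∈ J, f x ∈ J),
      LinearMap.trace F ↥J (f.restrict hst)
        = ∑ a : ↥R, bW.repr ⟨f (u ↑a), hJW _ (hst _ (hmemJ ↑a a.2))⟩ (a : G) := by
    intro f hst
    rw [LinearMap.trace_eq_matrix_trace F b, Matrix.trace]
    apply Finset.sum_congr rfl
    intro a _
    rw [Matrix.diag_apply, LinearMap.toMatrix_apply]
    have h1 : f.restrict hst (b a) = ⟨f (u ↑a), hst _ (hmemJ ↑a a.2)⟩ := by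
      apply Subtype.ext
      rw [LinearMap.restrict_apply]
      simp [hb]
    rw [h1, hcompat]
  -- cast versions of identities
  have hξsymmF : ∀ g : G, (ξ g (-g) : F) = (ξ (-g) g : F) := by
    intro g; exact_mod_cast congrArg Units.val (hξsymm g)
  have hξinvF : ∀ g : G, (ξ g g : F) * (ξ g (-g) : F) = 1 := by
    intro g; simpa using congrArg Units.val (hξinv g)
  have hξ0lF : ∀ t : G, (ξ 0 t : F) = 1 := by
    intro t; simpa using congrArg Units.val (hξ0l t)
  have hξ0rF : ∀ t : G, (ξ t 0 : F) = 1 := by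
    intro t; simpa using congrArg Units.val (hξ0r t)
  refine ⟨?_, ?_, ?_, ?_⟩
  · -- part 1
    intro g hg h hh hgh hst
    rw [htrace]
    apply Finset.sum_eq_zero
    intro a _
    have hf : (jordanOp F (jordanOp F (u g) (u h))) (u ↑a)
        = (((1/2 : F) * ((ξ g h : F) + (ξ h g : F)))
            * ((1/2 : F) * ((ξ (g+h) ↑a : F) + (ξ ↑a (g+h) : F)))) • u (g + h + ↑a) := by
      rw [humul g h, jordanOp_smul_left, LinearMap.smul_apply, humul (g+h) ↑a, smul_smul]
    rw [hcoord _ _ _ _ _ hf, if_neg]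
    intro heq
    apply hgh
    have : g + h + ↑a = 0 + ↑a := by rw [heq, zero_add]
    exact add_right_cancel this
  · -- part 2
    intro g hg hst
    have hmap : ∀ a : G, (jordanOp F (jordanOp F (u g) (u (-g)))) (u a)
        = (ξ (-g) g : F) • u a := by
      intro a
      rw [humul g (-g), add_neg_cancel, hone, jordanOp_smul_left, LinearMap.smul_apply]
      have h1 : jordanOp F (1 : A) (u a) = u a := by
        rw [jordanOp_apply, one_mul, mul_one, ← two_smul F, smul_smul]
        norm_num
      rw [h1]
      congr 1
      rw [hξsymmF]
      ring
    have htr : LinearMap.trace F ↥J ((jordanOp F (jordanOp F (u g) (u (-g)))).restrict hst)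
        = (ξ (-g) g : F) * (Nat.card R : F) := by
      rw [htrace]
      have : ∀ a : ↥R, bW.repr
          ⟨(jordanOp F (jordanOp F (u g) (u (-g)))) (u ↑a),
            hJW _ (hst _ (hmemJ ↑a a.2))⟩ (a : G) = (ξ (-g) g : F) := by
        intro a
        rw [hcoord _ _ _ _ _ (hmap ↑a), if_pos rfl]
      rw [Finset.sum_congr rfl (fun a _ => this a), Finset.sum_const, Finset.card_univ,
        nsmul_eq_mul, Nat.card_eq_fintype_card, mul_comm]
    refine ⟨htr, ?_⟩
    rw [htr]
    apply mul_ne_zero (Units.ne_zero _)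
    have : Nat.card R ≠ 0 := Nat.card_ne_zero.mpr ⟨⟨⟨g, hg⟩⟩, inferInstance⟩
    exact_mod_cast this
  · -- part 3
    intro g hg
    constructor
    · rw [map_smul, humul g (-g), add_neg_cancel, hone, smul_smul]
      have : (ξ g g : F) * ((1/2 : F) * ((ξ g (-g) : F) + (ξ (-g) g : F))) = 1 := by
        rw [← hξsymmF]
        linear_combination hξinvF g
      rw [this, one_smul]
    · rw [humul g g, jordanOp_smul_left, LinearMap.smul_apply, map_smul,
        humul (g+g) (-g), smul_smul, smul_smul, add_neg_cancel_right]
      have hc1 : (ξ (g+g) (-g) : F) = (ξ g (-g) : F) * (ξ g (-g) : F) := by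
        simpa using congrArg Units.val (hξ.1 g g (-g))
      have hc2 : (ξ (-g) (g+g) : F) = (ξ (-g) g : F) * (ξ (-g) g : F) := by
        simpa using congrArg Units.val (hξ.2 (-g) g g)
      have : (1/2 : F) * ((ξ g g : F) + (ξ g g : F)) * (ξ g g : F)
          * ((1/2 : F) * ((ξ (g+g) (-g) : F) + (ξ (-g) (g+g) : F))) = 1 := by
        rw [hc1, hc2, ← hξsymmF]
        linear_combination ((ξ g g : F) * (ξ g (-g) : F) + 1) * hξinvF g
      rw [this, one_smul]
  · -- part 4 : nondegeneracy
    intro x hx hx0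
    have hxW : x ∈ W := hJW x hx
    obtain ⟨c, hc⟩ : ∃ c : G →₀ F, bW.repr ⟨x, hxW⟩ = c := ⟨_, rfl⟩
    have hmemspan : (⟨x, hxW⟩ : ↥W) ∈ Submodule.span F (⇑bW '' R) := by
      have h1 : Submodule.map W.subtype (Submodule.span F (⇑bW '' R))
          = Submodule.span F (u '' R) := by
        rw [Submodule.map_span, ← Set.image_comp]
        congr 1
        exact Set.image_congr fun t _ => hbW t
      have h2 : x ∈ Submodule.map W.subtype (Submodule.span F (⇑bW '' R)) := by
        rw [h1, ← hJ]; exact hx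
      obtain ⟨z, hz, hzval⟩ := h2
      have : z = ⟨x, hxW⟩ := Subtype.ext hzval
      rwa [this] at hz
    have hsupp : ↑c.support ⊆ R := by
      rw [← hc]
      exact Module.Basis.repr_support_subset_of_mem_span bW R hmemspan
    have hcne : c ≠ 0 := by
      intro h0
      apply hx0
      have h1 : bW.repr ⟨x, hxW⟩ = 0 := by rw [hc, h0]
      have h2 : (⟨x, hxW⟩ : ↥W) = 0 := (LinearEquiv.map_eq_zero_iff bW.repr).mp h1
      exact congrArg Subtype.val h2
    obtain ⟨g, hgne⟩ : ∃ g, c g ≠ 0 := by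
      by_contra hcon
      push_neg at hcon
      exact hcne (Finsupp.ext hcon)
    have hgmem : g ∈ c.support := Finsupp.mem_support_iff.mpr hgne
    have hgR : g ∈ R := hsupp hgmem
    refine ⟨u (-g), hmemJ _ (hR.2.1 g hgR), ?_⟩
    intro hst
    rw [htrace]
    -- decompose x
    have hxsum : x = ∑ t ∈ c.support, c t • u t := by
      have h1 := Module.Basis.linearCombination_repr bW ⟨x, hxW⟩
      rw [hc] at h1
      have h2 := congrArg (Subtype.val : ↥W → A) h1
      rw [Finsupp.linearCombination_apply, Finsupp.sum] at h2
      calc x = ((⟨x, hxW⟩ : ↥W) : A) := rfl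
        _ = ((∑ a ∈ c.support, c a • bW a : ↥W) : A) := h2.symm
        _ = ∑ t ∈ c.support, c t • u t := by
            rw [AddSubmonoidClass.coe_finset_sum]
            exact Finset.sum_congr rfl fun t _ => by rw [SetLike.val_smul, hbW]
    have hfa : ∀ a : G, (jordanOp F (jordanOp F x (u (-g)))) (u a)
        = ∑ t ∈ c.support,
            (c t * ((1/2 : F) * ((ξ (-g) t : F) + (ξ t (-g) : F)))
              * ((1/2 : F) * ((ξ (-g + t) a : F) + (ξ a (-g + t) : F)))) • u (-g + t + a) := by
      intro a
      rw [jordanOp_comm x (u (-g))]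
      conv_lhs => rw [hxsum]
      rw [map_sum]
      rw [← jordanOpL_apply, map_sum, LinearMap.sum_apply]
      apply Finset.sum_congr rfl
      intro t _
      rw [map_smul, humul (-g) t, jordanOpL_apply, smul_smul, jordanOp_smul_left,
        LinearMap.smul_apply, humul (-g + t) a, smul_smul, mul_assoc]
    -- coordinate of the sum
    have hdiag : ∀ a : ↥R, bW.repr
        ⟨(jordanOp F (jordanOp F x (u (-g)))) (u ↑a),
          hJW _ (hst _ (hmemJ ↑a a.2))⟩ (a : G) = c g * (ξ (-g) g : F) := by
      intro a
      have hmemW : ∀ t : G, (c t * ((1/2 : F) * ((ξ (-g) t : F) + (ξ t (-g) : F)))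
          * ((1/2 : F) * ((ξ (-g + t) ↑a : F) + (ξ ↑a (-g + t) : F)))) • u (-g + t + ↑a) ∈ W :=
        fun t => Submodule.smul_mem _ _ (Submodule.subset_span (Set.mem_range_self _))
      have hsubty : (⟨(jordanOp F (jordanOp F x (u (-g)))) (u ↑a),
          hJW _ (hst _ (hmemJ ↑a a.2))⟩ : ↥W)
          = ∑ t ∈ c.support, (⟨_, hmemW t⟩ : ↥W) := by
        apply Subtype.ext
        rw [AddSubmonoidClass.coe_finset_sum]
        exact hfa ↑a
      rw [hsubty, map_sum, Finsupp.finset_sum_apply]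
      have heach : ∀ t ∈ c.support, bW.repr (⟨_, hmemW t⟩ : ↥W) (a : G)
          = if t = g then c t * ((1/2 : F) * ((ξ (-g) t : F) + (ξ t (-g) : F)))
              * ((1/2 : F) * ((ξ (-g + t) ↑a : F) + (ξ ↑a (-g + t) : F))) else 0 := by
        intro t _
        rw [hcoord _ _ _ _ _ rfl]
        apply if_congr _ rfl rfl
        constructor
        · intro h1
          have h2 : -g + t + ↑a = 0 + ↑a := by rw [h1, zero_add]
          have h3 : -g + t = 0 := add_right_cancel h2
          exact (neg_add_eq_zero.mp h3).symm
        · intro h1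
          rw [h1, neg_add_cancel, zero_add]
      rw [Finset.sum_congr rfl heach, Finset.sum_ite_eq' c.support g, if_pos hgmem]
      rw [neg_add_cancel, hξ0lF, hξ0rF]
      have : (1/2 : F) * ((ξ (-g) g : F) + (ξ g (-g) : F)) = (ξ (-g) g : F) := by
        rw [hξsymmF]; ring
      rw [this]
      ring
    rw [Finset.sum_congr rfl (fun a _ => hdiag a), Finset.sum_const, Finset.card_univ,
      nsmul_eq_mul]
    apply mul_ne_zero
    · have : (0 : ℕ) < Fintype.card ↥R := Fintype.card_pos_iff.mpr ⟨⟨g, hgR⟩⟩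
      exact_mod_cast this.ne'
    · exact mul_ne_zero hgne (Units.ne_zero _)
end

section
/- Let G = Z_2^n with standard basis e_1,…,e_n, and define the alternating bicharacter β(a,b) = (−1)^{(Σa_i)(Σb_i) − Σ a_i b_i}, so β(e_i,e_j) = −1 for i≠j and 1 for i=j. Then R^+ = {0, e_1, …, e_n} is a skew root system of Jordan type in (G,β), and the corresponding Jordan algebra J(R^+) is isomorphic to F·1 ⊕ V, the simple Jordan algebra of a nonsingular symmetric bilinear form on an n-dimensional space V (n ≥ 2). -/
lemma aux_pow {F : Type*} [Field F] (x y : ZMod 2) :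
    ((-1:Fˣ))^(x+y).val = (-1)^x.val * (-1)^y.val := by
  rcases (by decide : ∀ x : ZMod 2, x = 0 ∨ x = 1) x with rfl | rfl <;>
    rcases (by decide : ∀ x : ZMod 2, x = 0 ∨ x = 1) y with rfl | rfl <;>
    norm_num [show ((2:ZMod 2)).val = 0 from rfl, show ((1:ZMod 2)).val = 1 from rfl,
      show ((1:ZMod 2) + 1).val = 0 from rfl]

lemma aux_sum (n : ℕ) (a b : Fin n) :
    (∑ i : Fin n, ∑ j : Fin n, if j < i then
      ((Pi.single a 1 : Fin n → ZMod 2) i).val * ((Pi.single b 1 : Fin n → ZMod 2) j).val else 0)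
      = if b < a then 1 else 0 := by
  simp only [Pi.single_apply, apply_ite ZMod.val, ZMod.val_one, ZMod.val_zero]
  rw [Finset.sum_eq_single a]
  · rw [Finset.sum_eq_single b]
    · simp
    · intro j _ hj; simp; intro _; exact hj
    · simp
  · intro i _ hi; simp; intro x _ _; exact hi
  · simp

lemma aux_sum2 (n : ℕ) (a b : Fin n) :
    (∑ i : Fin n, (Pi.single a 1 : Fin n → ZMod 2) i * (Pi.single b 1 : Fin n → ZMod 2) i)
      = if a = b then 1 else 0 := by
  simp only [Pi.single_apply]
  rw [Finset.sum_eq_single a]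
  · simp
  · intro i _ hi; simp; intro _; exact hi
  · simp

lemma aux_sum3 (n : ℕ) (a : Fin n) :
    (∑ i : Fin n, (Pi.single a 1 : Fin n → ZMod 2) i) = 1 := by
  simp [Pi.single_apply]

/-- Let `G = ℤ₂ⁿ` (`n ≥ 2`) with standard basis `e i = Pi.single i 1`, and let
`β(a,b) = (-1)^{(Σaᵢ)(Σbᵢ) - Σaᵢbᵢ}`, so that `β(eᵢ,eⱼ) = -1` for `i ≠ j` and `1` for
`i = j`.  Then `R⁺ = {0, e₁, …, e_n}` is a skew root system of Jordan type in `(G,β)`, and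
the corresponding Jordan algebra `J(R⁺)` (inside the twisted group algebra, which is the
Clifford algebra `C(V)` via `u_{Σlᵢeᵢ} ↦ v₁^{l₁}⋯v_n^{l_n}`) is `F·1 ⊕ V`, the simple
Jordan algebra of a nonsingular symmetric bilinear form:  the `vᵢ = u (e i)` satisfy
`vᵢ ∘ vⱼ = δᵢⱼ · 1`. -/
theorem skewRootJordan_clifford
    {F : Type*} [Field F] [IsAlgClosed F] [CharZero F]
    {A : Type*} [Ring A] [Algebra F A]
    (n : ℕ) (hn : 2 ≤ n)
    (β : (Fin n → ZMod 2) → (Fin n → ZMod 2) → Fˣ)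
    (hβ : ∀ a b, β a b =
      (-1 : Fˣ) ^ (((∑ i, a i) * (∑ i, b i) - ∑ i, a i * b i : ZMod 2)).val)
    (ξ : (Fin n → ZMod 2) → (Fin n → ZMod 2) → Fˣ)
    (hξ : ∀ a b, ξ a b =
      (-1 : Fˣ) ^ (∑ i : Fin n, ∑ j : Fin n, if j < i then (a i).val * (b j).val else 0))
    (u : (Fin n → ZMod 2) → A)
    (hind : LinearIndependent F u) (hone : u 0 = 1)
    (hmul : ∀ a b, u a * u b = (ξ a b : F) • u (a + b)) :
    IsAltBichar β ∧
    IsSkewRootJordan β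
      ({0} ∪ Set.range (fun i : Fin n => Pi.single i (1 : ZMod 2))) ∧
    (∀ i j : Fin n,
      (1/2 : F) • (u (Pi.single i 1) * u (Pi.single j 1) +
                   u (Pi.single j 1) * u (Pi.single i 1)) =
        if i = j then (1 : A) else 0) := by
  have h2 : ∀ x : ZMod 2, x * x = x := by decide
  have hxx : ∀ x : ZMod 2, x + x = 0 := by decide
  have hnegx : ∀ x : ZMod 2, -x = x := by decide
  refine ⟨⟨⟨?_, ?_⟩, ?_⟩, ⟨?_, ?_, ?_⟩, ?_⟩
  · -- additive in first argument
    intro a b c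
    rw [hβ, hβ, hβ, ← aux_pow]
    have harg : ((∑ i, (a + b) i) * (∑ i, c i) - ∑ i, (a + b) i * c i : ZMod 2)
        = ((∑ i, a i) * (∑ i, c i) - ∑ i, a i * c i)
          + ((∑ i, b i) * (∑ i, c i) - ∑ i, b i * c i) := by
      simp only [Pi.add_apply, add_mul, Finset.sum_add_distrib]
      ring
    rw [harg]
  · -- additive in second argument
    intro a b c
    rw [hβ, hβ, hβ, ← aux_pow]
    have harg : ((∑ i, a i) * (∑ i, (b + c) i) - ∑ i, a i * (b + c) i : ZMod 2)
        = ((∑ i, a i) * (∑ i, b i) - ∑ i, a i * b i)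
          + ((∑ i, a i) * (∑ i, c i) - ∑ i, a i * c i) := by
      simp only [Pi.add_apply, mul_add, Finset.sum_add_distrib]
      ring
    rw [harg]
  · -- alternating
    intro g
    rw [hβ]
    have harg : ((∑ i, g i) * (∑ i, g i) - ∑ i, g i * g i : ZMod 2) = 0 := by
      rw [h2 (∑ i, g i)]
      simp only [h2, sub_self]
    rw [harg]
    simp
  · -- closure = ⊤
    rw [eq_top_iff]
    intro g _
    have hg : g = ∑ i, Pi.single i (g i) := (Finset.univ_sum_single g).symm
    rw [hg]
    refine AddSubgroup.sum_mem _ fun i _ => ?_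
    rcases (by decide : ∀ x : ZMod 2, x = 0 ∨ x = 1) (g i) with h | h
    · rw [h, Pi.single_zero]; exact zero_mem _
    · rw [h]
      exact AddSubgroup.subset_closure (Or.inr ⟨i, rfl⟩)
  · -- R = -R
    intro a ha
    have : -a = a := by
      funext i; simp only [Pi.neg_apply]; exact hnegx (a i)
    rw [this]; exact ha
  · -- sum condition
    rintro a ha b hb hβab
    rcases ha with ha | ⟨i, rfl⟩
    · simp only [Set.mem_singleton_iff] at ha
      rw [ha, zero_add]; exact hb
    rcases hb with hb | ⟨j, rfl⟩
    · simp only [Set.mem_singleton_iff] at hb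
      rw [hb, add_zero]; exact Or.inr ⟨i, rfl⟩
    by_cases hij : i = j
    · subst hij
      have : (Pi.single i 1 : Fin n → ZMod 2) + Pi.single i 1 = 0 := by
        funext k; simp only [Pi.add_apply, Pi.zero_apply]; exact hxx _
      rw [this]; exact Or.inl rfl
    · exfalso
      apply hβab
      rw [hβ, aux_sum3, aux_sum3, aux_sum2, if_neg hij]
      norm_num [show ((1:ZMod 2)).val = 1 from rfl]
  · -- Jordan products
    have hξe : ∀ a b : Fin n, ξ (Pi.single a 1) (Pi.single b 1)
        = (-1 : Fˣ) ^ (if b < a then 1 else 0) := by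
      intro a b; rw [hξ, aux_sum n a b]
    intro i j
    by_cases hij : i = j
    · subst hij
      rw [if_pos rfl, hmul, hξe, if_neg (lt_irrefl i), pow_zero]
      have h0 : (Pi.single i 1 : Fin n → ZMod 2) + Pi.single i 1 = 0 := by
        funext k; simp only [Pi.add_apply, Pi.zero_apply]; exact hxx _
      rw [h0, hone, Units.val_one, one_smul, smul_add, ← add_smul]
      norm_num
    · rw [if_neg hij, hmul, hmul, hξe, hξe,
        show (Pi.single j 1 : Fin n → ZMod 2) + Pi.single i 1
          = Pi.single i 1 + Pi.single j 1 from add_comm _ _,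
        ← add_smul]
      rcases lt_or_gt_of_ne hij with h | h
      · rw [if_neg (asymm h), if_pos h]
        norm_num
      · rw [if_pos h, if_neg (asymm h)]
        norm_num
end
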